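/- arXiv:2508.19741 — 4 statements merged into one kernel-verified Lean document; each statement's English description precedes it below -/
import Mathlib

section
/- For every nonnegative integer n, the number E(n) of two-color partitions of n with distinct parts in which even parts may occur only in blue equals the number p̄ₒ(n) of overpartitions of n into odd parts. Formally: the number of pairs (g, b), where g is a finite set of distinct odd positive integers and b is a finite set of distinct positive integers with the sum of all elements of g and b equal to n, is equal to the number of pairs (μ, ν), where μ is a finite set of distinct odd positive integers and ν is a finite multiset of odd positive integers with the sum of all elements of μ and ν equal to n. -/
namespace TwoColorAux

/-- 2-adic valuation. -/
def vv (x : ℕ) : ℕ := x.factorization 2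

/-- odd part -/
def oc (x : ℕ) : ℕ := x / 2 ^ vv x

lemma two_pow_vv_mul_oc (x : ℕ) : 2 ^ vv x * oc x = x :=
  Nat.ordProj_mul_ordCompl_eq_self x 2

lemma oc_odd {x : ℕ} (hx : x ≠ 0) : Odd (oc x) :=
  Nat.odd_iff.2 (Nat.two_dvd_ne_zero.1 (Nat.not_dvd_ordCompl Nat.prime_two hx))

lemma oc_pos {x : ℕ} (hx : x ≠ 0) : 0 < oc x := Nat.ordCompl_pos 2 hx

lemma vv_pow_mul {m : ℕ} (i : ℕ) (hm : Odd m) : vv (2 ^ i * m) = m.factorization 2 + i := by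
  have hm0 : m ≠ 0 := by rintro rfl; simp [Nat.odd_iff] at hm
  rw [vv, Nat.factorization_mul (by positivity) hm0]
  simp [Nat.Prime.factorization_pow Nat.prime_two, add_comm]

lemma factorization_two_of_odd {m : ℕ} (hm : Odd m) : m.factorization 2 = 0 :=
  Nat.factorization_eq_zero_of_not_dvd (Nat.two_dvd_ne_zero.2 (Nat.odd_iff.1 hm))

lemma vv_pow_mul' {m : ℕ} (i : ℕ) (hm : Odd m) : vv (2 ^ i * m) = i := by
  rw [vv_pow_mul i hm, factorization_two_of_odd hm, zero_add]

lemma oc_pow_mul {m : ℕ} (i : ℕ) (hm : Odd m) : oc (2 ^ i * m) = m := by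
  rw [oc, vv_pow_mul' i hm, Nat.mul_div_cancel_left _ (pow_pos two_pos i)]

lemma eq_of_vv_oc {x y : ℕ} (h1 : vv x = vv y) (h2 : oc x = oc y) : x = y := by
  rw [← two_pow_vv_mul_oc x, ← two_pow_vv_mul_oc y, h1, h2]

/-- Glaisher's map: distinct parts to odd parts. -/
def F (b : Finset ℕ) : Multiset ℕ :=
  b.val.bind fun x => Multiset.replicate (2 ^ vv x) (oc x)

/-- Inverse of Glaisher's map. -/
def G (ν : Multiset ℕ) : Finset ℕ :=
  ν.toFinset.biUnion fun m => ((ν.count m).bitIndices.toFinset).image fun i => 2 ^ i * m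

lemma mem_F {b : Finset ℕ} {a : ℕ} : a ∈ F b ↔ ∃ x ∈ b, oc x = a := by
  simp only [F, Multiset.mem_bind, Multiset.mem_replicate, Finset.mem_def.symm]
  constructor
  · rintro ⟨x, hx, -, rfl⟩; exact ⟨x, hx, rfl⟩
  · rintro ⟨x, hx, rfl⟩; exact ⟨x, hx, by positivity, rfl⟩

lemma sum_F (b : Finset ℕ) : (F b).sum = ∑ x ∈ b, x := by
  rw [F, Multiset.sum_bind, Finset.sum]
  congr 1
  rw [Multiset.map_congr rfl]
  intro x _
  rw [Multiset.sum_replicate, smul_eq_mul, two_pow_vv_mul_oc]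

lemma count_F (b : Finset ℕ) (m : ℕ) :
    (F b).count m = ∑ x ∈ b.filter (fun x => oc x = m), 2 ^ vv x := by
  rw [Finset.sum_filter, F, Multiset.count_bind, Finset.sum]
  congr 1
  rw [Multiset.map_congr rfl]
  intro x _
  rw [Multiset.count_replicate]

lemma count_F_eq (b : Finset ℕ) (m : ℕ) :
    (F b).count m = ∑ i ∈ (b.filter fun x => oc x = m).image vv, 2 ^ i := by
  rw [count_F]
  refine (Finset.sum_image ?_).symm
  intro x hx y hy h
  rw [Finset.mem_coe, Finset.mem_filter] at hx hy
  exact eq_of_vv_oc h (hx.2.trans hy.2.symm)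

lemma bitIndices_count_F (b : Finset ℕ) (m : ℕ) :
    ((F b).count m).bitIndices.toFinset = (b.filter fun x => oc x = m).image vv := by
  rw [count_F_eq, Finset.toFinset_bitIndices_twoPowSum]

lemma GF (b : Finset ℕ) : G (F b) = b := by
  ext y
  simp only [G, Finset.mem_biUnion, Multiset.mem_toFinset, Finset.mem_image,
    bitIndices_count_F, Finset.mem_filter]
  constructor
  · rintro ⟨m, hm, i, ⟨x, ⟨hxb, hxm⟩, rfl⟩, rfl⟩
    rw [← hxm, two_pow_vv_mul_oc]; exact hxb
  · intro hy
    exact ⟨oc y, mem_F.2 ⟨y, hy, rfl⟩, vv y, ⟨y, ⟨hy, rfl⟩, rfl⟩, two_pow_vv_mul_oc y⟩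

lemma mem_G {ν : Multiset ℕ} {y : ℕ} :
    y ∈ G ν ↔ ∃ m ∈ ν, ∃ i ∈ (ν.count m).bitIndices, y = 2 ^ i * m := by
  simp only [G, Finset.mem_biUnion, Multiset.mem_toFinset, Finset.mem_image,
    List.mem_toFinset]
  constructor
  · rintro ⟨m, hm, i, hi, rfl⟩; exact ⟨m, hm, i, hi, rfl⟩
  · rintro ⟨m, hm, i, hi, rfl⟩; exact ⟨m, hm, i, hi, rfl⟩

lemma FG {ν : Multiset ℕ} (hν : ∀ x ∈ ν, Odd x) : F (G ν) = ν := by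
  refine Multiset.ext.2 fun a => ?_
  by_cases ha : Odd a
  · have ha0 : a ≠ 0 := by rintro rfl; simp [Nat.odd_iff] at ha
    have hfilter : (G ν).filter (fun y => oc y = a)
        = ((ν.count a).bitIndices.toFinset).image fun i => 2 ^ i * a := by
      ext y
      rw [Finset.mem_filter, Finset.mem_image]
      constructor
      · rintro ⟨hy, hoc⟩
        obtain ⟨m, hm, i, hi, rfl⟩ := mem_G.1 hy
        have hmo : Odd m := hν m hm
        rw [oc_pow_mul i hmo] at hoc
        subst hoc
        exact ⟨i, List.mem_toFinset.2 hi, rfl⟩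
      · rintro ⟨i, hi, rfl⟩
        rw [List.mem_toFinset] at hi
        have hc : ν.count a ≠ 0 := by
          rintro h; rw [h] at hi; simp at hi
        have haν : a ∈ ν := Multiset.count_pos.1 (Nat.pos_of_ne_zero hc)
        exact ⟨mem_G.2 ⟨a, haν, i, hi, rfl⟩, oc_pow_mul i ha⟩
    rw [count_F, hfilter, Finset.sum_image ?inj]
    case inj =>
      intro i _ j _ h
      have := Nat.eq_of_mul_eq_mul_right (Nat.pos_of_ne_zero ha0) h
      exact Nat.pow_right_injective le_rfl this
    calc ∑ i ∈ (ν.count a).bitIndices.toFinset, 2 ^ vv (2 ^ i * a)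
        = ∑ i ∈ (ν.count a).bitIndices.toFinset, 2 ^ i := by
          refine Finset.sum_congr rfl fun i _ => ?_
          rw [vv_pow_mul' i ha]
      _ = ν.count a := Finset.twoPowSum_toFinset_bitIndices _
  · have h1 : ν.count a = 0 :=
      Multiset.count_eq_zero.2 fun h => ha (hν a h)
    have h2 : (G ν).filter (fun y => oc y = a) = ∅ := by
      refine Finset.filter_eq_empty_iff.2 fun {y} hy => ?_
      obtain ⟨m, hm, i, hi, rfl⟩ := mem_G.1 hy
      rw [oc_pow_mul i (hν m hm)]
      rintro rfl; exact ha (hν _ hm)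
    rw [count_F, h1, h2, Finset.sum_empty]

lemma G_pos {ν : Multiset ℕ} (hν : ∀ x ∈ ν, Odd x) {y : ℕ} (hy : y ∈ G ν) : 0 < y := by
  obtain ⟨m, hm, i, _, rfl⟩ := mem_G.1 hy
  have : m ≠ 0 := by rintro rfl; simpa [Nat.odd_iff] using hν 0 hm
  positivity

lemma sum_G {ν : Multiset ℕ} (hν : ∀ x ∈ ν, Odd x) : ∑ x ∈ G ν, x = ν.sum := by
  conv_rhs => rw [← FG hν]
  rw [sum_F]

end TwoColorAux

open TwoColorAux in
/-- `E(n) = p̄ₒ(n)`.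
The number of two-color partitions of `n` (pairs `(g, b)` with `g` a finite set of
distinct odd positive integers, `b` a finite set of distinct positive integers,
total sum `n`) equals the number of overpartitions of `n` into odd parts
(pairs `(μ, ν)` with `μ` a finite set of distinct odd positive integers and
`ν` a finite multiset of odd positive integers, total sum `n`). -/
theorem two_color_eq_overpartitions_into_odd (n : ℕ) :
    Nat.card {p : Finset ℕ × Finset ℕ //
      (∀ x ∈ p.1, Odd x ∧ 0 < x) ∧ (∀ x ∈ p.2, 0 < x) ∧
      (∑ x ∈ p.1, x) + (∑ x ∈ p.2, x) = n} =
    Nat.card {q : Finset ℕ × Multiset ℕ //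
      (∀ x ∈ q.1, Odd x ∧ 0 < x) ∧ (∀ x ∈ q.2, Odd x ∧ 0 < x) ∧
      (∑ x ∈ q.1, x) + q.2.sum = n} := by
  refine Nat.card_congr
    { toFun := fun ⟨⟨g, b⟩, hg, hb, hs⟩ => ⟨(g, F b), hg, ?_, ?_⟩
      invFun := fun ⟨⟨μ, ν⟩, hμ, hν, hs⟩ => ⟨(μ, G ν), hμ, ?_, ?_⟩
      left_inv := ?_
      right_inv := ?_ }
  · intro x hx
    obtain ⟨y, hy, rfl⟩ := mem_F.1 hx
    have hy0 : y ≠ 0 := (hb y hy).ne'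
    exact ⟨oc_odd hy0, oc_pos hy0⟩
  · rw [sum_F]; exact hs
  · intro x hx
    exact G_pos (fun z hz => (hν z hz).1) hx
  · rw [sum_G (fun z hz => (hν z hz).1)]; exact hs
  · rintro ⟨⟨g, b⟩, hg, hb, hs⟩
    apply Subtype.ext
    show (g, G (F b)) = (g, b)
    rw [GF b]
  · rintro ⟨⟨μ, ν⟩, hμ, hν, hs⟩
    apply Subtype.ext
    show (μ, F (G ν)) = (μ, ν)
    rw [FG (fun z hz => (hν z hz).1)]
end

section
/- For every positive integer n, the number E₂(n) of two-color partitions of n counted by E(n) having an even total number of parts equals p̄ₒ(n)/2 + (−1)ⁿ if n is a perfect square, and equals p̄ₒ(n)/2 otherwise. (Equivalently, as integers, 2·E₂(n) = p̄ₒ(n) + 2·(−1)ⁿ if n is a square and 2·E₂(n) = p̄ₒ(n) otherwise.) -/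
namespace TCP
open Polynomial Finset

noncomputable def Pe (N : ℕ) : Polynomial ℤ := ∏ i ∈ Finset.range N, (1 - X ^ (2*i+2))
noncomputable def Po (N : ℕ) : Polynomial ℤ := ∏ i ∈ Finset.range N, (1 - X ^ (2*i+1))
noncomputable def Qo (N : ℕ) : Polynomial ℤ := ∏ i ∈ Finset.range N, (1 + X ^ (2*i+1))
noncomputable def PA (N : ℕ) : Polynomial ℤ := ∏ k ∈ Finset.Icc 1 (2*N), (1 - X ^ k)
noncomputable def QA (N : ℕ) : Polynomial ℤ := ∏ k ∈ Finset.Icc 1 (2*N), (1 + X ^ k)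
noncomputable def Gm (N M : ℕ) : Polynomial ℤ :=
  ∏ i ∈ Finset.range N, ∑ j ∈ Finset.range M, X ^ (j*(2*i+1))

noncomputable def gb : ℕ → ℤ → Polynomial ℤ
  | 0, k => if k = 0 then 1 else 0
  | (n+1), k => gb n (k-1) + X ^ (2*k.toNat) * gb n k

def si (j : ℤ) : ℤ := if Even j then 1 else -1

noncomputable def sg (j : ℤ) : Polynomial ℤ := C (si j)

def Odds (N : ℕ) : Finset ℕ := (Finset.range N).image (fun i => 2*i+1)

def condG (g : Finset ℕ) : Prop := ∀ x ∈ g, Odd x ∧ 0 < x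
def condN (ν : Multiset ℕ) : Prop := ∀ x ∈ ν, Odd x ∧ 0 < x

instance : DecidablePred condN := fun ν => by unfold condN; infer_instance
instance : DecidablePred condG := fun g => by unfold condG; infer_instance

def Gfin (n a : ℕ) : Finset (Finset ℕ) :=
  (Odds n).powerset.filter (fun T => ∑ x ∈ T, x = a)
def Bfin (n b : ℕ) : Finset (Finset ℕ) :=
  (Finset.Icc 1 (2*n)).powerset.filter (fun T => ∑ x ∈ T, x = b)
def MU (n : ℕ) : Finset (Multiset ℕ) := (n • (Finset.Icc 1 n).val).powerset.toFinset
def Nfin (n b : ℕ) : Finset (Multiset ℕ) :=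
  (MU n).filter (fun ν => condN ν ∧ ν.sum = b)

def EFin (n : ℕ) : Finset (Finset ℕ × Finset ℕ) :=
  ((Odds n).powerset ×ˢ (Finset.Icc 1 (2*n)).powerset).filter
    (fun p => (∑ x ∈ p.1, x) + (∑ x ∈ p.2, x) = n)
def OFin (n : ℕ) : Finset (Finset ℕ × Multiset ℕ) :=
  ((Odds n).powerset ×ˢ MU n).filter
    (fun q => condN q.2 ∧ (∑ x ∈ q.1, x) + q.2.sum = n)

lemma mem_Odds {N x : ℕ} : x ∈ Odds N ↔ Odd x ∧ x < 2*N := by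
  simp only [Odds, mem_image, mem_range]
  constructor
  · rintro ⟨i, hi, rfl⟩
    exact ⟨⟨i, by ring⟩, by omega⟩
  · rintro ⟨ho, hlt⟩
    have := Nat.odd_iff.mp ho
    exact ⟨x/2, by omega, by omega⟩

lemma signSplit (n : ℕ) :
    ∑ p ∈ EFin n, (-1 : ℤ)^(p.1.card + p.2.card) =
      2 * ((EFin n).filter (fun p => Even (p.1.card + p.2.card))).card - (EFin n).card := by
  classical
  rw [← Finset.sum_filter_add_sum_filter_not (EFin n)
    (fun p => Even (p.1.card + p.2.card)) (fun p => (-1 : ℤ)^(p.1.card + p.2.card))]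
  rw [Finset.sum_congr rfl (fun p hp => Even.neg_one_pow (mem_filter.mp hp).2),
      Finset.sum_congr rfl (fun p hp => Odd.neg_one_pow
        (Nat.not_even_iff_odd.mp (mem_filter.mp hp).2))]
  have hc := Finset.card_filter_add_card_filter_not
    (s := EFin n) (fun p => Even (p.1.card + p.2.card))
  simp only [sum_const, nsmul_eq_mul, mul_one, mul_neg_one]
  push_cast [← hc]
  ring

lemma cardE2 (n : ℕ) (hn : 0 < n) :
    Nat.card {p : Finset ℕ × Finset ℕ //
      ((∀ x ∈ p.1, Odd x ∧ 0 < x) ∧ (∀ x ∈ p.2, 0 < x) ∧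
        (∑ x ∈ p.1, x) + (∑ x ∈ p.2, x) = n) ∧
      Even (p.1.card + p.2.card)} =
    ((EFin n).filter (fun p => Even (p.1.card + p.2.card))).card := by
  classical
  have hiff : ∀ p : Finset ℕ × Finset ℕ,
      (((∀ x ∈ p.1, Odd x ∧ 0 < x) ∧ (∀ x ∈ p.2, 0 < x) ∧
        (∑ x ∈ p.1, x) + (∑ x ∈ p.2, x) = n) ∧ Even (p.1.card + p.2.card))
      ↔ p ∈ (EFin n).filter (fun p => Even (p.1.card + p.2.card)) := by
    intro p
    simp only [EFin, mem_filter, mem_product, mem_powerset]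
    constructor
    · rintro ⟨⟨hg, hb, hs⟩, hpar⟩
      refine ⟨⟨⟨?_, ?_⟩, hs⟩, hpar⟩
      · intro x hx
        have hxs : x ≤ ∑ y ∈ p.1, y :=
          Finset.single_le_sum (fun i _ => Nat.zero_le i) hx
        exact mem_Odds.mpr ⟨(hg x hx).1, by omega⟩
      · intro x hx
        have hxs : x ≤ ∑ y ∈ p.2, y :=
          Finset.single_le_sum (fun i _ => Nat.zero_le i) hx
        exact Finset.mem_Icc.mpr ⟨hb x hx, by omega⟩
    · rintro ⟨⟨⟨hg, hb⟩, hs⟩, hpar⟩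
      refine ⟨⟨fun x hx => ?_, fun x hx => ?_, hs⟩, hpar⟩
      · have := mem_Odds.mp (hg hx)
        exact ⟨this.1, this.1.pos⟩
      · exact (Finset.mem_Icc.mp (hb hx)).1
  rw [Nat.card_congr (Equiv.subtypeEquivRight hiff), Nat.card_eq_fintype_card,
    Fintype.card_coe]

lemma mem_MU {n : ℕ} {ν : Multiset ℕ} (hν : ∀ x ∈ ν, 0 < x) (hs : ν.sum ≤ n) :
    ν ∈ MU n := by
  classical
  rw [MU, Multiset.mem_toFinset, Multiset.mem_powerset, Multiset.le_iff_count]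
  intro a
  rw [Multiset.count_nsmul]
  by_cases ha : a ∈ ν
  · have ha1 : 0 < a := hν a ha
    have ha2 : a ≤ ν.sum := Multiset.single_le_sum (fun x _ => Nat.zero_le x) a ha
    have hmem : a ∈ (Finset.Icc 1 n).val := by
      rw [Finset.mem_val, Finset.mem_Icc]; omega
    rw [Multiset.count_eq_one_of_mem (Finset.nodup _) hmem]
    have h1 : Multiset.count a ν ≤ Multiset.card ν := Multiset.count_le_card _ _
    have h2 : Multiset.card ν ≤ ν.sum := by
      have := Multiset.card_nsmul_le_sum (s := ν) (a := 1) (fun x hx => hν x hx)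
      simpa using this
    omega
  · simp [Multiset.count_eq_zero.mpr ha]


lemma cardO (n : ℕ) (hn : 0 < n) :
    Nat.card {q : Finset ℕ × Multiset ℕ //
        (∀ x ∈ q.1, Odd x ∧ 0 < x) ∧ (∀ x ∈ q.2, Odd x ∧ 0 < x) ∧
        (∑ x ∈ q.1, x) + q.2.sum = n} = (OFin n).card := by
  classical
  have hiff : ∀ q : Finset ℕ × Multiset ℕ,
      ((∀ x ∈ q.1, Odd x ∧ 0 < x) ∧ (∀ x ∈ q.2, Odd x ∧ 0 < x) ∧
        (∑ x ∈ q.1, x) + q.2.sum = n) ↔ q ∈ OFin n := by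
    intro q
    simp only [OFin, mem_filter, mem_product, mem_powerset]
    constructor
    · rintro ⟨hg, hb, hs⟩
      refine ⟨⟨?_, ?_⟩, hb, hs⟩
      · intro x hx
        have hxs : x ≤ ∑ y ∈ q.1, y :=
          Finset.single_le_sum (fun i _ => Nat.zero_le i) hx
        exact mem_Odds.mpr ⟨(hg x hx).1, by omega⟩
      · exact mem_MU (fun x hx => (hb x hx).2) (by omega)
    · rintro ⟨⟨hg, _⟩, hb, hs⟩
      refine ⟨fun x hx => ?_, hb, hs⟩
      have := mem_Odds.mp (hg hx)
      exact ⟨this.1, this.1.pos⟩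
  rw [Nat.card_congr (Equiv.subtypeEquivRight hiff), Nat.card_eq_fintype_card,
    Fintype.card_coe]

lemma EXP (s : Finset ℕ) (c : ℤ) (a : ℕ) :
    (∏ k ∈ s, (1 + C c * X ^ k)).coeff a
      = ∑ T ∈ s.powerset.filter (fun T => ∑ x ∈ T, x = a), c ^ T.card := by
  classical
  have h : ∏ k ∈ s, (1 + C c * X ^ k)
      = ∑ T ∈ s.powerset, C (c ^ T.card) * X ^ (∑ x ∈ T, x) := by
    calc ∏ k ∈ s, (1 + C c * X ^ k) = ∏ k ∈ s, (C c * X ^ k + 1) := by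
          exact Finset.prod_congr rfl fun k _ => add_comm _ _
      _ = ∑ T ∈ s.powerset, ∏ k ∈ T, (C c * X ^ k) := by
          simpa using Finset.prod_add (fun k => C c * X ^ k) (fun _ => (1 : Polynomial ℤ)) s
      _ = ∑ T ∈ s.powerset, C (c ^ T.card) * X ^ (∑ x ∈ T, x) := by
          refine Finset.sum_congr rfl fun T _ => ?_
          rw [Finset.prod_mul_distrib, Finset.prod_const, Finset.prod_pow_eq_pow_sum, ← C_pow]
  rw [h, finset_sum_coeff, Finset.sum_filter]
  refine Finset.sum_congr rfl fun T _ => ?_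
  rw [coeff_C_mul, coeff_X_pow]
  by_cases hT : ∑ x ∈ T, x = a
  · simp [hT]
  · rw [if_neg hT, if_neg (fun h => hT h.symm), mul_zero]

lemma Qo_eq (N : ℕ) : Qo N = ∏ k ∈ Odds N, (1 + C 1 * X ^ k) := by
  rw [Odds, Finset.prod_image (fun i _ j _ h => by omega)]
  simp [Qo]

lemma Po_eq (N : ℕ) : Po N = ∏ k ∈ Odds N, (1 + C (-1) * X ^ k) := by
  rw [Odds, Finset.prod_image (fun i _ j _ h => by omega)]
  refine Finset.prod_congr rfl fun i _ => ?_
  simp only [map_neg, C_1]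
  ring

lemma QA_eq (N : ℕ) : QA N = ∏ k ∈ Finset.Icc 1 (2*N), (1 + C 1 * X ^ k) := by
  simp [QA]

lemma PA_eq (N : ℕ) : PA N = ∏ k ∈ Finset.Icc 1 (2*N), (1 + C (-1) * X ^ k) := by
  refine Finset.prod_congr rfl fun i _ => ?_
  simp only [map_neg, C_1]
  ring

lemma coeffQo (N a : ℕ) : (Qo N).coeff a = ((Gfin N a).card : ℤ) := by
  rw [Qo_eq, EXP, Gfin]
  simp

lemma coeffPo (N a : ℕ) : (Po N).coeff a = ∑ T ∈ Gfin N a, (-1 : ℤ) ^ T.card := by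
  rw [Po_eq, EXP, Gfin]

lemma coeffQA (N b : ℕ) : (QA N).coeff b = ((Bfin N b).card : ℤ) := by
  rw [QA_eq, EXP, Bfin]
  simp

lemma coeffPA (N b : ℕ) : (PA N).coeff b = ∑ T ∈ Bfin N b, (-1 : ℤ) ^ T.card := by
  rw [PA_eq, EXP, Bfin]

lemma mapsE (n : ℕ) : ∀ p ∈ EFin n,
    (fun p : Finset ℕ × Finset ℕ => (∑ x ∈ p.1, x, ∑ x ∈ p.2, x)) p ∈ antidiagonal n := by
  intro p hp
  rw [HasAntidiagonal.mem_antidiagonal]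
  exact (mem_filter.mp hp).2

lemma fiberE (n a b : ℕ) (hab : a + b = n) :
    (EFin n).filter
      (fun p => (fun p : Finset ℕ × Finset ℕ => (∑ x ∈ p.1, x, ∑ x ∈ p.2, x)) p = (a, b))
      = Gfin n a ×ˢ Bfin n b := by
  ext p
  simp only [EFin, Gfin, Bfin, mem_filter, mem_product, mem_powerset, Prod.mk.injEq]
  constructor
  · rintro ⟨⟨⟨h1, h2⟩, h3⟩, h4, h5⟩
    exact ⟨⟨h1, h4⟩, ⟨h2, h5⟩⟩
  · rintro ⟨⟨h1, h4⟩, h2, h5⟩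
    exact ⟨⟨⟨h1, h2⟩, by omega⟩, h4, h5⟩

lemma coeffQQ (n : ℕ) (hn : 0 < n) :
    (Qo n * QA n).coeff n = ((EFin n).card : ℤ) := by
  classical
  rw [coeff_mul,
    Finset.card_eq_sum_card_fiberwise (mapsE n)]
  push_cast
  refine Finset.sum_congr rfl fun x hx => ?_
  rw [coeffQo, coeffQA, fiberE n x.1 x.2 (mem_antidiagonal.mp hx), card_product]
  push_cast
  ring

lemma coeffPP (n : ℕ) (hn : 0 < n) :
    (Po n * PA n).coeff n = ∑ p ∈ EFin n, (-1 : ℤ)^(p.1.card + p.2.card) := by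
  classical
  rw [coeff_mul, ← Finset.sum_fiberwise_of_maps_to (mapsE n)
    (fun p => (-1 : ℤ)^(p.1.card + p.2.card))]
  refine Finset.sum_congr rfl fun x hx => ?_
  rw [fiberE n x.1 x.2 (mem_antidiagonal.mp hx), Finset.sum_product, coeffPo, coeffPA,
    Finset.sum_mul_sum]
  exact Finset.sum_congr rfl fun g _ => Finset.sum_congr rfl fun b _ => (pow_add _ _ _).symm
lemma msum_fsum {ι : Type*} (s : Finset ι) (f : ι → Multiset ℕ) :
    (∑ i ∈ s, f i).sum = ∑ i ∈ s, (f i).sum := by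
  classical
  induction s using Finset.cons_induction with
  | empty => simp
  | cons a s ha ih => rw [Finset.sum_cons, Finset.sum_cons, Multiset.sum_add, ih]

lemma count_i (s : Finset ℕ) (φ : ∀ a ∈ s, ℕ) (x : ℕ) :
    Multiset.count x (∑ k ∈ s.attach, Multiset.replicate (φ k.1 k.2) k.1)
      = if hx : x ∈ s then φ x hx else 0 := by
  classical
  rw [Multiset.count_sum']
  by_cases hx : x ∈ s
  · rw [dif_pos hx, Finset.sum_eq_single (⟨x, hx⟩ : {y // y ∈ s})]
    · simp [Multiset.count_replicate]
    · rintro ⟨y, hy⟩ _ hne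
      rw [Multiset.count_replicate, if_neg]
      intro h
      exact hne (Subtype.ext h.symm).symm
    · intro h
      exact absurd (Finset.mem_attach _ _) h
  · rw [dif_neg hx]
    refine Finset.sum_eq_zero fun k _ => ?_
    rw [Multiset.count_replicate, if_neg]
    intro h
    exact hx (h ▸ k.2)

lemma sum_i (s : Finset ℕ) (φ : ∀ a ∈ s, ℕ) :
    (∑ k ∈ s.attach, Multiset.replicate (φ k.1 k.2) k.1).sum
      = ∑ k ∈ s.attach, (φ k.1 k.2) * k.1 := by
  rw [msum_fsum]
  refine Finset.sum_congr rfl fun k _ => ?_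
  rw [Multiset.sum_replicate, smul_eq_mul]

lemma Gm_eq (N M : ℕ) : Gm N M = ∏ k ∈ Odds N, (∑ j ∈ Finset.range M, X ^ (j*k)) := by
  rw [Odds, Finset.prod_image (fun i _ j _ h => by omega)]
  rfl

lemma coeffGm (n b : ℕ) (hn : 0 < n) (hb : b ≤ n) :
    (Gm n (n+1)).coeff b = ((Nfin n b).card : ℤ) := by
  classical
  have hexp : Gm n (n+1)
      = ∑ φ ∈ (Odds n).pi (fun _ => Finset.range (n+1)),
          X ^ (∑ k ∈ (Odds n).attach, (φ k.1 k.2) * k.1) := by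
    rw [Gm_eq, Finset.prod_sum]
    refine Finset.sum_congr rfl fun φ _ => ?_
    rw [Finset.prod_pow_eq_pow_sum]
  have hco : (Gm n (n+1)).coeff b
      = ((((Odds n).pi (fun _ => Finset.range (n+1))).filter
          (fun φ => ∑ k ∈ (Odds n).attach, (φ k.1 k.2) * k.1 = b)).card : ℤ) := by
    rw [hexp, finset_sum_coeff]
    rw [← Finset.sum_boole]
    refine Finset.sum_congr rfl fun φ _ => ?_
    rw [coeff_X_pow]
    by_cases h : ∑ k ∈ (Odds n).attach, (φ k.1 k.2) * k.1 = b
    · simp [h]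
    · rw [if_neg (fun hh => h hh.symm), if_neg h]
  rw [hco]
  congr 1
  refine Finset.card_bij
    (fun φ _ => ∑ k ∈ (Odds n).attach, Multiset.replicate (φ k.1 k.2) k.1) ?_ ?_ ?_
  · intro φ hφ
    obtain ⟨hpi, hsum⟩ := Finset.mem_filter.mp hφ
    have hcond : condN (∑ k ∈ (Odds n).attach, Multiset.replicate (φ k.1 k.2) k.1) := by
      intro x hx
      have : Multiset.count x _ ≠ 0 := Multiset.count_ne_zero.mpr hx
      rw [count_i (Odds n)] at this
      by_cases hxs : x ∈ Odds n
      · have := mem_Odds.mp hxs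
        exact ⟨this.1, this.1.pos⟩
      · simp [hxs] at this
    refine Finset.mem_filter.mpr ⟨?_, hcond, by rw [sum_i (Odds n), hsum]⟩
    apply mem_MU (fun x hx => (hcond x hx).2)
    rw [sum_i (Odds n), hsum]
    exact hb
  · intro φ₁ h₁ φ₂ h₂ heq
    funext a ha
    have := congrArg (Multiset.count a) heq
    rwa [count_i (Odds n), count_i (Odds n), dif_pos ha, dif_pos ha] at this
  · intro ν hν
    obtain ⟨hMU, hcond, hsum⟩ := Finset.mem_filter.mp hν
    have hparts : ∀ x ∈ ν, x ∈ Odds n := by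
      intro x hx
      have h1 := hcond x hx
      have h2 : x ≤ ν.sum := Multiset.single_le_sum (fun y _ => Nat.zero_le y) x hx
      have h3 : x ≤ n := le_trans h2 (le_trans (le_of_eq hsum) hb)
      exact mem_Odds.mpr ⟨h1.1, lt_of_le_of_lt h3 (lt_two_mul_self hn)⟩
    have hcnt : ∀ x, Multiset.count x ν ≤ n := by
      intro x
      have h1 : Multiset.count x ν ≤ Multiset.card ν := Multiset.count_le_card _ _
      have h2 : Multiset.card ν ≤ ν.sum := by
        have := Multiset.card_nsmul_le_sum (s := ν) (a := 1)
          (fun x hx => (hcond x hx).2)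
        simpa using this
      exact le_trans h1 (le_trans h2 (le_trans (le_of_eq hsum) hb))
    refine ⟨fun a _ => ν.count a, ?_, ?_⟩

    · refine Finset.mem_filter.mpr ⟨?_, ?_⟩
      · refine Finset.mem_pi.mpr fun a ha => ?_
        rw [Finset.mem_range]
        exact Nat.lt_succ_of_le (hcnt a)
      · have hν2 : ∑ a ∈ ν.toFinset, ν.count a * a = ν.sum := by
          have h3 := Multiset.toFinset_sum_count_nsmul_eq ν
          have h4 := congrArg Multiset.sum h3
          rw [msum_fsum] at h4
          rw [← h4]
          refine Finset.sum_congr rfl fun a _ => ?_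
          rw [Multiset.sum_nsmul, Multiset.sum_singleton, smul_eq_mul]
        rw [Finset.sum_attach (Odds n) (fun a => ν.count a * a)]
        rw [← hsum, ← hν2]
        symm
        refine Finset.sum_subset ?_ ?_
        · intro x hx
          exact hparts x (Multiset.mem_toFinset.mp hx)
        · intro x _ hx
          have : ν.count x = 0 := by
            rw [Multiset.count_eq_zero]
            intro hmem
            exact hx (Multiset.mem_toFinset.mpr hmem)
          rw [this, zero_mul]
    · dsimp only
      refine Multiset.ext.mpr fun a => ?_
      have hca := count_i (Odds n) (fun a _ => ν.count a) a
      rw [hca]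
      by_cases ha : a ∈ Odds n
      · rw [dif_pos ha]
      · rw [dif_neg ha, eq_comm, Multiset.count_eq_zero]
        intro hmem
        exact ha (hparts a hmem)

lemma mapsO (n : ℕ) : ∀ q ∈ OFin n,
    (fun q : Finset ℕ × Multiset ℕ => (∑ x ∈ q.1, x, q.2.sum)) q ∈ antidiagonal n := by
  intro q hq
  rw [HasAntidiagonal.mem_antidiagonal]
  exact (Finset.mem_filter.mp hq).2.2

lemma fiberO (n a b : ℕ) (hab : a + b = n) :
    (OFin n).filter
      (fun q => (fun q : Finset ℕ × Multiset ℕ => (∑ x ∈ q.1, x, q.2.sum)) q = (a, b))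
      = Gfin n a ×ˢ Nfin n b := by
  ext q
  simp only [OFin, Gfin, Nfin, mem_filter, mem_product, mem_powerset, Prod.mk.injEq]
  constructor
  · rintro ⟨⟨⟨h1, h2⟩, h3, h4⟩, h5, h6⟩
    exact ⟨⟨h1, h5⟩, h2, h3, h6⟩
  · rintro ⟨⟨h1, h5⟩, h2, h3, h6⟩
    exact ⟨⟨⟨h1, h2⟩, h3, by omega⟩, h5, h6⟩

lemma coeffQG (n : ℕ) (hn : 0 < n) :
    (Qo n * Gm n (n+1)).coeff n = ((OFin n).card : ℤ) := by
  classical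
  rw [coeff_mul, Finset.card_eq_sum_card_fiberwise (mapsO n)]
  push_cast
  refine Finset.sum_congr rfl fun x hx => ?_
  have hab := mem_antidiagonal.mp hx
  rw [coeffQo, coeffGm n x.2 hn (by omega), fiberO n x.1 x.2 hab, card_product]
  push_cast
  ring

lemma GEN1 {ι : Type*} (s : Finset ι) (f : ι → Polynomial ℤ) (t : ℕ)
    (h : ∀ i ∈ s, (X : Polynomial ℤ)^t ∣ f i - 1) :
    (X : Polynomial ℤ)^t ∣ (∏ i ∈ s, f i) - 1 := by
  classical
  induction s using Finset.cons_induction with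
  | empty => simp
  | cons a s ha ih =>
    rw [Finset.prod_cons]
    have h1 := h a (Finset.mem_cons_self a s)
    have h2 := ih (fun i hi => h i (Finset.mem_cons.mpr (Or.inr hi)))
    have hrw : f a * ∏ i ∈ s, f i - 1
        = (f a - 1) * ∏ i ∈ s, f i + ((∏ i ∈ s, f i) - 1) := by ring
    rw [hrw]
    exact dvd_add (h1.mul_right _) h2

lemma RIDX (m : ℕ) (f : ℕ → Polynomial ℤ) :
    ∏ k ∈ Finset.Icc 1 m, f k = ∏ i ∈ Finset.range m, f (i+1) := by
  have h : Finset.Icc 1 m = (Finset.range m).image (fun i => i+1) := by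
    ext x
    simp only [Finset.mem_Icc, Finset.mem_image, Finset.mem_range]
    constructor
    · intro hx; exact ⟨x - 1, by omega, by omega⟩
    · rintro ⟨i, hi, rfl⟩; omega
  rw [h, Finset.prod_image (fun a _ b _ h => by omega)]

def Evens (N : ℕ) : Finset ℕ := (Finset.range N).image (fun i => 2*i+2)

lemma Po_eq' (N : ℕ) : Po N = ∏ k ∈ Odds N, (1 - X ^ k) := by
  rw [Odds, Finset.prod_image (fun i _ j _ h => by omega)]
  rfl

lemma Pe_eq' (N : ℕ) : Pe N = ∏ k ∈ Evens N, (1 - X ^ k) := by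
  rw [Evens, Finset.prod_image (fun i _ j _ h => by omega)]
  rfl

lemma PA_split (N : ℕ) : PA N = Po N * Pe N := by
  rw [PA, ← Finset.prod_filter_mul_prod_filter_not (Finset.Icc 1 (2*N)) Odd, Po_eq', Pe_eq']
  congr 1
  · congr 1
    ext x
    simp only [Finset.mem_filter, Finset.mem_Icc, mem_Odds]
    constructor
    · rintro ⟨⟨h1, h2⟩, h3⟩
      have := Nat.odd_iff.mp h3
      exact ⟨h3, by omega⟩
    · rintro ⟨h3, h2⟩
      have := Nat.odd_iff.mp h3
      exact ⟨⟨by omega, by omega⟩, h3⟩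
  · congr 1
    ext x
    simp only [Finset.mem_filter, Finset.mem_Icc, Evens, Finset.mem_image, Finset.mem_range,
      Nat.not_odd_iff_even]
    constructor
    · rintro ⟨⟨h1, h2⟩, h3⟩
      have := Nat.even_iff.mp h3
      exact ⟨x/2 - 1, by omega, by omega⟩
    · rintro ⟨i, hi, rfl⟩
      exact ⟨⟨by omega, by omega⟩, ⟨i+1, by ring⟩⟩

lemma QAPA (N : ℕ) : QA N * PA N = Pe (2*N) := by
  rw [QA, PA, ← Finset.prod_mul_distrib]
  have h1 : ∀ k : ℕ, ((1 : Polynomial ℤ) + X^k) * (1 - X^k) = 1 - X^(2*k) := by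
    intro k
    rw [two_mul, pow_add]
    ring
  rw [Finset.prod_congr rfl (fun k _ => h1 k), RIDX, Pe]
  exact Finset.prod_congr rfl fun i _ => by rw [show 2*(i+1) = 2*i+2 from by ring]

lemma Pe_coeff0 (N : ℕ) : (Pe N).coeff 0 = 1 := by
  induction N with
  | zero => simp [Pe]
  | succ N ih =>
    rw [Pe, Finset.prod_range_succ, ← Pe, Polynomial.mul_coeff_zero, ih]
    simp [Polynomial.coeff_one, Polynomial.coeff_X_pow]

lemma Pe_ne (N : ℕ) : Pe N ≠ 0 := by
  intro h
  have := Pe_coeff0 N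
  rw [h] at this
  simp at this

lemma key1 (N : ℕ) : QA N * Po N = ∏ i ∈ Finset.Ico N (2*N), (1 - X^(2*i+2)) := by
  have h1 : QA N * Po N * Pe N = (∏ i ∈ Finset.Ico N (2*N), (1 - X^(2*i+2))) * Pe N := by
    calc QA N * Po N * Pe N = QA N * PA N := by rw [PA_split]; ring
      _ = Pe (2*N) := QAPA N
      _ = _ := by
          rw [Pe, Pe, ← Finset.prod_range_mul_prod_Ico (fun i => (1 : Polynomial ℤ) - X^(2*i+2)) (show N ≤ 2*N by omega)]
          ring
  exact mul_right_cancel₀ (Pe_ne N) h1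

lemma geomV (n N : ℕ) : Po N * Gm N (n+1) = ∏ i ∈ Finset.range N, (1 - X^((n+1)*(2*i+1))) := by
  rw [Po, Gm, ← Finset.prod_mul_distrib]
  refine Finset.prod_congr rfl fun i _ => ?_
  have h := geom_sum_mul ((X : Polynomial ℤ)^(2*i+1)) (n+1)
  have hs : ∑ j ∈ Finset.range (n+1), (X : Polynomial ℤ) ^ (j*(2*i+1))
      = ∑ j ∈ Finset.range (n+1), ((X : Polynomial ℤ)^(2*i+1))^j :=
    Finset.sum_congr rfl fun j _ => by rw [← pow_mul, mul_comm]
  rw [hs, show (n+1)*(2*i+1) = (2*i+1)*(n+1) from mul_comm _ _, pow_mul]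
  linear_combination (-1 : Polynomial ℤ) * h

lemma congQ (n : ℕ) (hn : 0 < n) :
    (Qo n * QA n).coeff n = (Qo n * Gm n (n+1)).coeff n := by
  have hV : (X : Polynomial ℤ)^(n+1) ∣ (Po n * Gm n (n+1)) - 1 := by
    rw [geomV]
    refine GEN1 _ _ _ fun i _ => ?_
    have : (1 : Polynomial ℤ) - X^((n+1)*(2*i+1)) - 1 = -(X^((n+1)*(2*i+1))) := by ring
    rw [this]
    exact (pow_dvd_pow X (by nlinarith)).neg_right
  have hW : (X : Polynomial ℤ)^(n+1) ∣ (QA n * Po n) - 1 := by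
    rw [key1]
    refine GEN1 _ _ _ fun i hi => ?_
    have hi' := Finset.mem_Ico.mp hi
    have : (1 : Polynomial ℤ) - X^(2*i+2) - 1 = -(X^(2*i+2)) := by ring
    rw [this]
    exact (pow_dvd_pow X (by omega)).neg_right
  have hdvd : (X : Polynomial ℤ)^(n+1) ∣ (Qo n * QA n) - (Qo n * Gm n (n+1)) := by
    have hrw : Qo n * QA n - Qo n * Gm n (n+1)
        = (Qo n * QA n) * (0 - ((Po n * Gm n (n+1)) - 1))
          + (Qo n * Gm n (n+1)) * ((QA n * Po n) - 1) := by ring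
    rw [hrw]
    refine dvd_add (Dvd.dvd.mul_left ?_ _) (Dvd.dvd.mul_left hW _)
    exact (dvd_sub (dvd_zero _) hV)
  have := (Polynomial.X_pow_dvd_iff.mp hdvd) n (by omega)
  rw [Polynomial.coeff_sub, sub_eq_zero] at this
  exact this

lemma gb_succ (n : ℕ) (k : ℤ) :
    gb (n+1) k = gb n (k-1) + X ^ (2*k.toNat) * gb n k := by
  simp [gb]

lemma gb_neg (n : ℕ) (k : ℤ) (hk : k < 0) : gb n k = 0 := by
  induction n generalizing k with
  | zero => simp [gb]; omega
  | succ n ih => rw [gb_succ, ih (k-1) (by omega), ih k hk]; simp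

lemma gb_gt (n : ℕ) (k : ℤ) (hk : (n : ℤ) < k) : gb n k = 0 := by
  induction n generalizing k with
  | zero => simp [gb]; omega
  | succ n ih =>
    rw [gb_succ, ih (k-1) (by push_cast; omega), ih k (by push_cast at hk ⊢; omega)]
    simp

lemma gb_zero (n : ℕ) : gb n 0 = 1 := by
  induction n with
  | zero => simp [gb]
  | succ n ih => rw [gb_succ, gb_neg n _ (by omega), ih]; simp

lemma gb_diag (n : ℕ) : gb n (n : ℤ) = 1 := by
  induction n with
  | zero => simp [gb]
  | succ n ih =>
    have h : ((n+1 : ℕ) : ℤ) = (n:ℤ)+1 := by push_cast; ring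
    rw [h, gb_succ, show (n:ℤ)+1-1 = (n:ℤ) from by ring, ih, gb_gt n ((n:ℤ)+1) (by omega)]
    simp

lemma P2 (n : ℕ) (k : ℤ) :
    gb (n+1) k = X ^ (2*((n+1 : ℤ) - k).toNat) * gb n (k-1) + gb n k := by
  induction n generalizing k with
  | zero =>
    rw [gb_succ]
    rcases lt_trichotomy k 0 with hk | hk | hk
    · rw [gb_neg 0 _ (by omega), gb_neg 0 _ hk]; simp
    · subst hk
      rw [gb_neg 0 _ (by omega), gb_zero]
      simp
    · rcases eq_or_lt_of_le (by omega : (1:ℤ) ≤ k) with hk1 | hk1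
      · rw [← hk1]
        simp [gb]
      · rw [gb_gt 0 (k-1) (by omega), gb_gt 0 k (by omega)]
        simp
  | succ n ih =>
    conv_lhs => rw [gb_succ (n+1) k, ih (k-1), ih k]
    conv_rhs => rw [gb_succ n (k-1), gb_succ n k]
    have harith : ((n+1:ℕ):ℤ) + 1 - k = ((n:ℤ)+2) - k := by push_cast; ring
    have harith2 : ((n+1:ℤ)) - (k-1) = ((n:ℤ)+2) - k := by ring
    rw [harith, harith2]
    by_cases hk : 1 ≤ k ∧ k ≤ (n:ℤ)+1
    · have hX : (X:Polynomial ℤ) ^ (2*k.toNat) * X ^ (2*((n+1:ℤ) - k).toNat) * gb n (k-1)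
          = X ^ (2*(((n:ℤ)+2) - k).toNat) * X ^ (2*(k-1).toNat) * gb n (k-1) := by
        rw [← pow_add, ← pow_add]
        congr 2
        omega
      linear_combination hX
    · have hz : gb n (k-1) = 0 := by
        rcases (by omega : k ≤ 0 ∨ (n:ℤ)+2 ≤ k) with h | h
        · exact gb_neg n _ (by omega)
        · exact gb_gt n _ (by omega)
      rw [hz]
      ring

lemma Pe_succ (K : ℕ) : Pe (K+1) = Pe K * (1 - X^(2*K+2)) := Finset.prod_range_succ _ _

lemma D2 : ∀ (s a b : ℕ), a + b = s → gb s (a : ℤ) * Pe a * Pe b = Pe s := by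
  intro s
  induction s with
  | zero =>
    intro a b hab
    obtain ⟨rfl, rfl⟩ : a = 0 ∧ b = 0 := by omega
    simp [gb, Pe]
  | succ s ih =>
    intro a b hab
    rcases Nat.eq_zero_or_pos a with rfl | ha
    · obtain rfl : b = s+1 := by omega
      rw [Nat.cast_zero, gb_zero]
      simp [Pe]
    rcases Nat.eq_zero_or_pos b with rfl | hb
    · obtain rfl : a = s+1 := by omega
      rw [gb_diag]
      simp only [Pe, Finset.range_zero, Finset.prod_empty]
      ring
    obtain ⟨a', rfl⟩ : ∃ a', a = a'+1 := ⟨a-1, by omega⟩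
    obtain ⟨b', rfl⟩ : ∃ b', b = b'+1 := ⟨b-1, by omega⟩
    have hs : a' + b' + 1 = s := by omega
    have h1 := ih a' (b'+1) (by omega)
    have h2 := ih (a'+1) b' (by omega)
    rw [Pe_succ b'] at h1
    rw [Pe_succ a'] at h2
    rw [gb_succ s ((a'+1 : ℕ) : ℤ)]
    have hc1 : ((a'+1 : ℕ) : ℤ) - 1 = (a' : ℤ) := by push_cast; ring
    have hc2 : (2 * ((a'+1 : ℕ) : ℤ).toNat) = 2*a'+2 := by omega
    rw [hc1, hc2, Pe_succ a', Pe_succ b', Pe_succ s]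
    have hexp : (X : Polynomial ℤ)^(2*s+2) = X^(2*a'+2) * X^(2*b'+2) := by
      rw [← pow_add]
      congr 1
      omega
    rw [hexp]
    linear_combination (1 - (X:Polynomial ℤ)^(2*a'+2)) * h1
      + (X:Polynomial ℤ)^(2*a'+2) * (1 - X^(2*b'+2)) * h2

lemma L1 (K L : ℕ) (hKL : K ≤ L) : (X : Polynomial ℤ)^(2*K+2) ∣ Pe L - Pe K := by
  have h : Pe L = Pe K * ∏ i ∈ Finset.Ico K L, (1 - X^(2*i+2)) := by
    rw [Pe, Pe, ← Finset.prod_range_mul_prod_Ico _ hKL]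
  rw [h]
  have hd : (X : Polynomial ℤ)^(2*K+2) ∣ (∏ i ∈ Finset.Ico K L, (1 - X^(2*i+2))) - 1 := by
    refine GEN1 _ _ _ fun i hi => ?_
    have hi' := Finset.mem_Ico.mp hi
    have : (1 : Polynomial ℤ) - X^(2*i+2) - 1 = -(X^(2*i+2)) := by ring
    rw [this]
    exact (pow_dvd_pow X (by omega)).neg_right
  have : Pe K * ∏ i ∈ Finset.Ico K L, (1 - X^(2*i+2)) - Pe K
      = Pe K * ((∏ i ∈ Finset.Ico K L, (1 - X^(2*i+2))) - 1) := by ring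
  rw [this]
  exact hd.mul_left _

lemma UNIT (t : ℕ) (u f : Polynomial ℤ) (hu : (X : Polynomial ℤ) ∣ 1 - u)
    (h : (X : Polynomial ℤ)^t ∣ f * u) : (X : Polynomial ℤ)^t ∣ f := by
  have hv : (X : Polynomial ℤ)^t ∣ (1-u)^t := pow_dvd_pow_of_dvd hu t
  have hgeom := geom_sum_mul (1 - u) t
  have hf : f = (f * u) * (∑ i ∈ Finset.range t, (1-u)^i) + f * (1-u)^t := by
    linear_combination f * hgeom
  rw [hf]
  exact dvd_add (h.mul_right _) (hv.mul_left _)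

lemma X_dvd_one_sub_Pe (m : ℕ) : (X : Polynomial ℤ) ∣ 1 - Pe m := by
  rw [Polynomial.X_dvd_iff, Polynomial.coeff_sub, Pe_coeff0]
  simp

lemma DIV (N i t : ℕ) (hi : i ≤ 2*N) (ht : t ≤ 2*(min i (2*N - i)) + 2) :
    (X : Polynomial ℤ)^t ∣ gb (2*N) (i : ℤ) * Pe N - 1 := by
  set m := min i (2*N - i) with hm
  have hmi : m ≤ i := min_le_left _ _
  have hmN : m ≤ N := by omega
  have hm2 : m ≤ 2*N - i := min_le_right _ _
  have hD2 := D2 (2*N) i (2*N - i) (by omega)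
  set g := gb (2*N) (i : ℤ) with hg
  have e1 : g * Pe m * Pe m - Pe m
      = g * Pe m * (Pe m - Pe (2*N - i)) + g * (Pe m - Pe i) * Pe (2*N - i)
        + (Pe (2*N) - Pe m) := by linear_combination hD2
  have hA : (X : Polynomial ℤ)^(2*m+2) ∣ g * Pe m * Pe m - Pe m := by
    rw [e1]
    refine dvd_add (dvd_add ?_ ?_) ?_
    · exact ((dvd_sub_comm.mp (L1 m (2*N-i) hm2)).mul_left _)
    · exact (((dvd_sub_comm.mp (L1 m i hmi)).mul_left g).mul_right _)
    · exact L1 m (2*N) (by omega)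
  have e2 : g * Pe m * Pe m - Pe m = (g * Pe m - 1) * Pe m := by ring
  rw [e2] at hA
  have hB := UNIT (2*m+2) (Pe m) (g * Pe m - 1) (X_dvd_one_sub_Pe m) hA
  have hfin : (X : Polynomial ℤ)^(2*m+2) ∣ g * Pe N - 1 := by
    have e3 : g * Pe N - 1 = g * (Pe N - Pe m) + (g * Pe m - 1) := by ring
    rw [e3]
    exact dvd_add ((L1 m N hmN).mul_left g) hB
  exact dvd_trans (pow_dvd_pow X ht) hfin

def ee (a j : ℤ) : ℕ := ((a - j).natAbs)^2

noncomputable def Sth (N : ℕ) : Polynomial ℤ :=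
  ∑ j ∈ Finset.Icc (0:ℤ) (2*(N:ℤ)), sg j * gb (2*N) j * X ^ (ee (N:ℤ) j)

lemma si_add_one (j : ℤ) : si (j+1) = - si j := by
  unfold si
  by_cases h : Even j <;> simp [h, Int.even_add_one]

lemma sg_add_one (j : ℤ) : sg (j+1) = - sg j := by
  rw [sg, sg, si_add_one, map_neg]

lemma sg_add_two (j : ℤ) : sg (j+2) = sg j := by
  have h : j + 2 = (j+1)+1 := by ring
  rw [h, sg_add_one, sg_add_one, neg_neg]

lemma trim (a b a' b' : ℤ) (f : ℤ → Polynomial ℤ)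
    (hsub : Finset.Icc a' b' ⊆ Finset.Icc a b)
    (h0 : ∀ j ∈ Finset.Icc a b, j ∉ Finset.Icc a' b' → f j = 0) :
    ∑ j ∈ Finset.Icc a b, f j = ∑ j ∈ Finset.Icc a' b', f j :=
  (Finset.sum_subset hsub h0).symm

lemma shift (a b c : ℤ) (f : ℤ → Polynomial ℤ) :
    ∑ j ∈ Finset.Icc a b, f j = ∑ i ∈ Finset.Icc (a-c) (b-c), f (i+c) := by
  have h := Finset.sum_map (Finset.Icc (a-c) (b-c)) (addRightEmbedding c) f
  rw [Finset.map_add_right_Icc, show a - c + c = a from by ring,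
    show b - c + c = b from by ring] at h
  rw [h]
  rfl

lemma ee_succ (a j : ℤ) : ee (a+1) (j+1) = ee a j := by
  unfold ee
  rw [show a + 1 - (j+1) = a - j from by ring]

noncomputable def TA (N : ℕ) (j : ℤ) : Polynomial ℤ :=
  sg j * (X^(2*((2*(N:ℤ)+2) - j).toNat) * gb (2*N) (j-2)) * X^(ee ((N:ℤ)+1) j)
noncomputable def TB (N : ℕ) (j : ℤ) : Polynomial ℤ :=
  sg j * gb (2*N) (j-1) * X^(ee ((N:ℤ)+1) j)
noncomputable def TC (N : ℕ) (j : ℤ) : Polynomial ℤ :=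
  sg j * (X^(2*j.toNat) * X^(2*((2*(N:ℤ)+1) - j).toNat) * gb (2*N) (j-1)) * X^(ee ((N:ℤ)+1) j)
noncomputable def TD (N : ℕ) (j : ℤ) : Polynomial ℤ :=
  sg j * (X^(2*j.toNat) * gb (2*N) j) * X^(ee ((N:ℤ)+1) j)

lemma hgb4 (N : ℕ) (j : ℤ) :
    gb (2*N+2) j
      = X^(2*((2*(N:ℤ)+2) - j).toNat) * gb (2*N) (j-2)
        + gb (2*N) (j-1)
        + X^(2*j.toNat) * X^(2*((2*(N:ℤ)+1) - j).toNat) * gb (2*N) (j-1)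
        + X^(2*j.toNat) * gb (2*N) j := by
  rw [show 2*N+2 = (2*N+1)+1 from rfl, gb_succ (2*N+1) j, P2 (2*N) (j-1), P2 (2*N) j]
  have h2 : ((2*N : ℕ) : ℤ) + 1 - (j-1) = (2*(N:ℤ)+2) - j := by push_cast; ring
  have h3 : ((2*N : ℕ) : ℤ) + 1 - j = (2*(N:ℤ)+1) - j := by push_cast; ring
  rw [h2, h3, show j - 1 - 1 = j - 2 from by ring]
  ring

lemma hsplit (N : ℕ) :
    Sth (N+1) = (∑ j ∈ Finset.Icc (0:ℤ) (2*(N:ℤ)+2), TA N j)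
      + (∑ j ∈ Finset.Icc (0:ℤ) (2*(N:ℤ)+2), TB N j)
      + (∑ j ∈ Finset.Icc (0:ℤ) (2*(N:ℤ)+2), TC N j)
      + (∑ j ∈ Finset.Icc (0:ℤ) (2*(N:ℤ)+2), TD N j) := by
  rw [Sth, ← Finset.sum_add_distrib, ← Finset.sum_add_distrib, ← Finset.sum_add_distrib]
  have hc : (((N+1 : ℕ)) : ℤ) = (N:ℤ)+1 := by push_cast; ring
  have hI : (2*(((N+1:ℕ)) : ℤ)) = 2*(N:ℤ)+2 := by push_cast; ring
  rw [hI, show 2*(N+1) = 2*N+2 from by omega]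
  refine Finset.sum_congr rfl fun j hj => ?_
  rw [hc, hgb4 N j, TA, TB, TC, TD]
  ring

lemma hTB (N : ℕ) :
    ∑ j ∈ Finset.Icc (0:ℤ) (2*(N:ℤ)+2), TB N j = - Sth N := by
  rw [trim (0:ℤ) (2*(N:ℤ)+2) 1 (2*(N:ℤ)+1) (TB N)
      (Finset.Icc_subset_Icc (by omega) (by omega))]
  · rw [shift 1 (2*(N:ℤ)+1) 1]
    rw [show (1:ℤ) - 1 = 0 from by ring, show (2*(N:ℤ)+1) - 1 = 2*(N:ℤ) from by ring]
    rw [Sth, ← Finset.sum_neg_distrib]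
    refine Finset.sum_congr rfl fun i hi => ?_
    rw [TB, sg_add_one, show i + 1 - 1 = i from by ring, ee_succ]
    ring
  · intro j hj hj'
    obtain ⟨h1, h2⟩ := Finset.mem_Icc.mp hj
    have : j = 0 ∨ j = 2*(N:ℤ)+2 := by
      rcases Finset.mem_Icc.not.mp hj' with h
      omega
    rcases this with rfl | rfl
    · rw [TB, gb_neg (2*N) _ (by omega)]; ring
    · rw [TB, gb_gt (2*N) _ (by push_cast; omega)]; ring

lemma hTC (N : ℕ) :
    ∑ j ∈ Finset.Icc (0:ℤ) (2*(N:ℤ)+2), TC N j = -(X^(4*N+2) * Sth N) := by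
  rw [trim (0:ℤ) (2*(N:ℤ)+2) 1 (2*(N:ℤ)+1) (TC N)
      (Finset.Icc_subset_Icc (by omega) (by omega))]
  · rw [shift 1 (2*(N:ℤ)+1) 1]
    rw [show (1:ℤ) - 1 = 0 from by ring, show (2*(N:ℤ)+1) - 1 = 2*(N:ℤ) from by ring]
    rw [Sth, Finset.mul_sum, ← Finset.sum_neg_distrib]
    refine Finset.sum_congr rfl fun i hi => ?_
    obtain ⟨h1, h2⟩ := Finset.mem_Icc.mp hi
    rw [TC, sg_add_one, show i + 1 - 1 = i from by ring, ee_succ, ← pow_add,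
      show 2*(i+1).toNat + 2*((2*(N:ℤ)+1) - (i+1)).toNat = 4*N+2 from by omega]
    ring
  · intro j hj hj'
    obtain ⟨h1, h2⟩ := Finset.mem_Icc.mp hj
    have : j = 0 ∨ j = 2*(N:ℤ)+2 := by
      rcases Finset.mem_Icc.not.mp hj' with h
      omega
    rcases this with rfl | rfl
    · rw [TC, gb_neg (2*N) _ (by omega)]; ring
    · rw [TC, gb_gt (2*N) _ (by push_cast; omega)]; ring

lemma ee_cast (a j : ℤ) : ((ee a j : ℕ) : ℤ) = (a - j)^2 := by
  unfold ee
  push_cast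
  rw [sq_abs]

lemma hTA (N : ℕ) :
    ∑ j ∈ Finset.Icc (0:ℤ) (2*(N:ℤ)+2), TA N j = X^(2*N+1) * Sth N := by
  rw [trim (0:ℤ) (2*(N:ℤ)+2) 2 (2*(N:ℤ)+2) (TA N)
      (Finset.Icc_subset_Icc (by omega) le_rfl)]
  · rw [shift 2 (2*(N:ℤ)+2) 2, show (2:ℤ) - 2 = 0 from by ring,
      show 2*(N:ℤ)+2 - 2 = 2*(N:ℤ) from by ring]
    rw [Sth, Finset.mul_sum]
    refine Finset.sum_congr rfl fun i hi => ?_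
    obtain ⟨h1, h2⟩ := Finset.mem_Icc.mp hi
    rw [TA, sg_add_two, show i + 2 - 2 = i from by ring]
    have hnn : (0:ℤ) ≤ 2*(N:ℤ)+2 - (i+2) := by omega
    have he : 2*((2*(N:ℤ)+2) - (i+2)).toNat + ee ((N:ℤ)+1) (i+2) = (2*N+1) + ee (N:ℤ) i := by
      have hz : ((2*((2*(N:ℤ)+2) - (i+2)).toNat + ee ((N:ℤ)+1) (i+2) : ℕ) : ℤ)
          = (((2*N+1) + ee (N:ℤ) i : ℕ) : ℤ) := by
        push_cast [ee_cast]
        rw [Int.toNat_of_nonneg hnn]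
        push_cast [ee_cast]
        ring
      exact_mod_cast hz
    calc sg i * (X ^ (2*((2*(N:ℤ)+2) - (i+2)).toNat) * gb (2*N) i) * X ^ (ee ((N:ℤ)+1) (i+2))
        = X ^ (2*((2*(N:ℤ)+2) - (i+2)).toNat + ee ((N:ℤ)+1) (i+2)) * (sg i * gb (2*N) i) := by
          rw [pow_add]; ring
      _ = X ^ ((2*N+1) + ee (N:ℤ) i) * (sg i * gb (2*N) i) := by rw [he]
      _ = X ^ (2*N+1) * (sg i * gb (2*N) i * X ^ (ee (N:ℤ) i)) := by rw [pow_add]; ring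
  · intro j hj hj'
    obtain ⟨ha1, ha2⟩ := Finset.mem_Icc.mp hj
    have : j = 0 ∨ j = 1 := by
      rcases Finset.mem_Icc.not.mp hj' with h
      omega
    rcases this with rfl | rfl
    · rw [TA, gb_neg (2*N) _ (by omega)]; ring
    · rw [TA, gb_neg (2*N) _ (by omega)]; ring

lemma hTD (N : ℕ) :
    ∑ j ∈ Finset.Icc (0:ℤ) (2*(N:ℤ)+2), TD N j = X^(2*N+1) * Sth N := by
  rw [trim (0:ℤ) (2*(N:ℤ)+2) 0 (2*(N:ℤ)) (TD N)
      (Finset.Icc_subset_Icc le_rfl (by omega))]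
  · rw [Sth, Finset.mul_sum]
    refine Finset.sum_congr rfl fun j hj => ?_
    obtain ⟨h1, h2⟩ := Finset.mem_Icc.mp hj
    rw [TD]
    have he : 2*j.toNat + ee ((N:ℤ)+1) j = (2*N+1) + ee (N:ℤ) j := by
      have hz : ((2*j.toNat + ee ((N:ℤ)+1) j : ℕ) : ℤ)
          = (((2*N+1) + ee (N:ℤ) j : ℕ) : ℤ) := by
        push_cast [ee_cast]
        rw [Int.toNat_of_nonneg h1]
        push_cast [ee_cast]
        ring
      exact_mod_cast hz
    calc sg j * (X ^ (2*j.toNat) * gb (2*N) j) * X ^ (ee ((N:ℤ)+1) j)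
        = X ^ (2*j.toNat + ee ((N:ℤ)+1) j) * (sg j * gb (2*N) j) := by
          rw [pow_add]; ring
      _ = X ^ ((2*N+1) + ee (N:ℤ) j) * (sg j * gb (2*N) j) := by rw [he]
      _ = X ^ (2*N+1) * (sg j * gb (2*N) j * X ^ (ee (N:ℤ) j)) := by rw [pow_add]; ring
  · intro j hj hj'
    obtain ⟨ha1, ha2⟩ := Finset.mem_Icc.mp hj
    have hgt : (2*N : ℤ) < j := by
      rcases Finset.mem_Icc.not.mp hj' with h
      omega
    rw [TD, gb_gt (2*N) _ (by push_cast; omega)]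
    ring

lemma theta (N : ℕ) : Sth N = sg (N:ℤ) * (Po N)^2 := by
  induction N with
  | zero =>
    simp [Sth, gb, sg, si, ee, Po]
  | succ N ih =>
    rw [hsplit, hTA, hTB, hTC, hTD, ih]
    have hc : ((N+1 : ℕ) : ℤ) = (N:ℤ)+1 := by push_cast; ring
    have hPo : Po (N+1) = Po N * (1 - X^(2*N+1)) := Finset.prod_range_succ _ _
    rw [hc, sg_add_one, hPo]
    rw [show (4*N+2) = (2*N+1)+(2*N+1) from by omega, pow_add]
    ring

lemma si_mul_self (j : ℤ) : si j * si j = 1 := by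
  unfold si
  split_ifs <;> ring

lemma sg_mul_self (j : ℤ) : sg j * sg j = 1 := by
  rw [sg, ← map_mul, si_mul_self, map_one]

lemma si_add (a b : ℤ) : si (a+b) = si a * si b := by
  by_cases ha : Even a <;> by_cases hb : Even b <;>
    simp [si, Int.even_add, ha, hb]

lemma si_add_two_mul (a b : ℤ) : si (a + 2*b) = si a := by
  unfold si
  have h2 : Even (2*b) := even_two_mul b
  have h : Even (a + 2*b) ↔ Even a := by simp [Int.even_add, h2]
  exact if_congr h rfl rfl

lemma si_natCast (k : ℕ) : si (k:ℤ) = (-1 : ℤ)^k := by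
  unfold si
  by_cases h : Even k
  · rw [if_pos ((Int.even_coe_nat k).mpr h), h.neg_one_pow]
  · rw [if_neg (fun hc => h ((Int.even_coe_nat k).mp hc)),
      (Nat.not_even_iff_odd.mp h).neg_one_pow]

lemma thetaCoeff (n : ℕ) (hn : 0 < n) :
    (Po n * PA n).coeff n = if IsSquare n then 2 * (-1 : ℤ)^n else 0 := by
  classical
  have hsg := sg_mul_self ((n : ℕ) : ℤ)
  have hPP : Po n * PA n = sg (n:ℤ) * Sth n * Pe n := by
    rw [PA_split, theta n]
    linear_combination (-(Po n^2 * Pe n)) * hsg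
  rw [hPP]
  have hexp : sg (n:ℤ) * Sth n * Pe n
      = ∑ j ∈ Finset.Icc (0:ℤ) (2*(n:ℤ)),
          C (si (n:ℤ) * si j) * ((gb (2*n) j * Pe n) * X^(ee (n:ℤ) j)) := by
    rw [Sth, Finset.mul_sum, Finset.sum_mul]
    refine Finset.sum_congr rfl fun j _ => ?_
    rw [map_mul]
    simp only [sg]
    ring
  rw [hexp, finset_sum_coeff]
  have hval : ∀ j ∈ Finset.Icc (0:ℤ) (2*(n:ℤ)),
      (C (si (n:ℤ) * si j) * ((gb (2*n) j * Pe n) * X^(ee (n:ℤ) j))).coeff n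
      = if ee (n:ℤ) j = n then si (n:ℤ) * si j else 0 := by
    intro j hj
    obtain ⟨hj0, hj2⟩ := Finset.mem_Icc.mp hj
    rw [coeff_C_mul, Polynomial.coeff_mul_X_pow']
    by_cases hE : ee (n:ℤ) j ≤ n
    · rw [if_pos hE]
      obtain ⟨i, hji⟩ : ∃ i : ℕ, j = (i:ℤ) := ⟨j.toNat, by omega⟩
      obtain ⟨d, hd⟩ : ∃ d : ℕ, (d:ℕ) = ((n:ℤ) - j).natAbs := ⟨_, rfl⟩
      have hEd : ee (n:ℤ) j = d^2 := by unfold ee; rw [← hd]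
      have hd2 : d^2 ≤ n := by rw [← hEd]; exact hE
      have hdn : d ≤ n := by
        have h3 : 2*d ≤ d^2 + 1 := by
          have := two_mul_le_add_sq d 1
          simpa using this
        omega
      have hmin : n - d ≤ min i (2*n - i) := by omega
      have hi2n : i ≤ 2*n := by omega
      have hdvd := DIV n i (n + 1 - ee (n:ℤ) j) hi2n (by
        rw [hEd]
        have h3 : 2*d ≤ d^2 + 1 := by
          have := two_mul_le_add_sq d 1
          simpa using this
        omega)
      rw [hji]
      rw [show gb (2*n) ((i:ℕ):ℤ) * Pe n
          = 1 + (gb (2*n) ((i:ℕ):ℤ) * Pe n - 1) from by ring, coeff_add, coeff_one]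
      rw [hji] at hE hEd hdvd
      have h0 : (gb (2*n) ((i:ℕ):ℤ) * Pe n - 1).coeff (n - ee (n:ℤ) ((i:ℕ):ℤ)) = 0 :=
        Polynomial.X_pow_dvd_iff.mp hdvd _ (by omega)
      rw [h0, add_zero]
      by_cases hEn : ee (n:ℤ) ((i:ℕ):ℤ) = n
      · rw [if_pos hEn, if_pos (by omega), mul_one]
      · rw [if_neg hEn, if_neg (by omega), mul_zero]
    · rw [if_neg hE, mul_zero, if_neg (by omega)]
  rw [Finset.sum_congr rfl hval, ← Finset.sum_filter]
  by_cases hsq : IsSquare n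
  · rw [if_pos hsq]
    obtain ⟨m, hm⟩ := hsq
    have hm0 : m ≠ 0 := by rintro rfl; omega
    have hm1 : 1 ≤ m := by omega
    have hmn : m ≤ n := by nlinarith
    have hfil : (Finset.Icc (0:ℤ) (2*(n:ℤ))).filter (fun j => ee (n:ℤ) j = n)
        = {(n:ℤ) - m, (n:ℤ) + m} := by
      ext j
      simp only [Finset.mem_filter, Finset.mem_Icc, Finset.mem_insert, Finset.mem_singleton]
      constructor
      · rintro ⟨⟨h0, h2⟩, hEj⟩
        have hnab : (((n:ℤ) - j).natAbs)^2 = m^2 := by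
          rw [show (((n:ℤ) - j).natAbs)^2 = ee (n:ℤ) j from rfl, hEj, hm]
          ring
        have habs : ((n:ℤ) - j).natAbs = m :=
          Nat.pow_left_injective (by norm_num) hnab
        rcases Int.natAbs_eq_iff.mp habs with h | h
        · left; omega
        · right; omega
      · rintro (rfl | rfl)
        · refine ⟨⟨by omega, by omega⟩, ?_⟩
          show (((n:ℤ) - ((n:ℤ) - m)).natAbs)^2 = n
          rw [show (n:ℤ) - ((n:ℤ) - m) = (m:ℤ) from by ring]
          simp [hm]
          ring
        · refine ⟨⟨by omega, by omega⟩, ?_⟩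
          show (((n:ℤ) - ((n:ℤ) + m)).natAbs)^2 = n
          rw [show (n:ℤ) - ((n:ℤ) + m) = -(m:ℤ) from by ring]
          simp [hm]
          ring
    rw [hfil, Finset.sum_insert (by simp; omega), Finset.sum_singleton]
    have hsame : si ((n:ℤ)+m) = si ((n:ℤ)-m) := by
      rw [show (n:ℤ)+m = ((n:ℤ)-m) + 2*m from by ring, si_add_two_mul]
    rw [hsame]
    have hsm : si ((n:ℤ)) * si ((n:ℤ) - m) = si ((m:ℤ)) := by
      rw [← si_add, show (n:ℤ) + ((n:ℤ)-m) = (m:ℤ) + 2*((n:ℤ)-m) from by ring,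
        si_add_two_mul]
    rw [hsm, si_natCast]
    have hpar : Even m ↔ Even n := by
      rw [hm]
      constructor
      · intro h; exact h.mul_right m
      · intro h; rcases Nat.even_mul.mp h with h1 | h1 <;> exact h1
    by_cases h : Even n
    · rw [h.neg_one_pow, (hpar.mpr h).neg_one_pow]; ring
    · rw [(Nat.not_even_iff_odd.mp h).neg_one_pow,
        (Nat.not_even_iff_odd.mp (fun hc => h (hpar.mp hc))).neg_one_pow]
      ring
  · rw [if_neg hsq]
    have hfil : (Finset.Icc (0:ℤ) (2*(n:ℤ))).filter (fun j => ee (n:ℤ) j = n) = ∅ := by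
      ext j
      simp only [Finset.mem_filter, Finset.notMem_empty, iff_false, not_and]
      intro hmem hEj
      refine absurd ⟨((n:ℤ)-j).natAbs, ?_⟩ hsq
      show n = _ * _
      rw [← pow_two]
      exact hEj.symm
    rw [hfil, Finset.sum_empty]

end TCP

/-- For `n ≥ 1`, `E₂(n) = p̄ₒ(n)/2 + (−1)ⁿ` if `n` is a perfect square
and `E₂(n) = p̄ₒ(n)/2` otherwise; equivalently, as integers,
`2·E₂(n) = p̄ₒ(n) + 2·(−1)ⁿ` if `n` is a square and `2·E₂(n) = p̄ₒ(n)` otherwise.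
Here `E₂(n)` counts two-color partitions `(g, b)` of `n` (with `g` a finite set of
distinct odd positive integers and `b` a finite set of distinct positive integers)
whose total number of parts `|g| + |b|` is even, and `p̄ₒ(n)` counts
overpartitions of `n` into odd parts. -/
theorem two_color_even_total_number_of_parts (n : ℕ) (hn : 0 < n) :
    2 * (Nat.card {p : Finset ℕ × Finset ℕ //
      ((∀ x ∈ p.1, Odd x ∧ 0 < x) ∧ (∀ x ∈ p.2, 0 < x) ∧
        (∑ x ∈ p.1, x) + (∑ x ∈ p.2, x) = n) ∧
      Even (p.1.card + p.2.card)} : ℤ) =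
    (if IsSquare n then
      (Nat.card {q : Finset ℕ × Multiset ℕ //
        (∀ x ∈ q.1, Odd x ∧ 0 < x) ∧ (∀ x ∈ q.2, Odd x ∧ 0 < x) ∧
        (∑ x ∈ q.1, x) + q.2.sum = n} : ℤ) + 2 * (-1) ^ n
    else
      (Nat.card {q : Finset ℕ × Multiset ℕ //
        (∀ x ∈ q.1, Odd x ∧ 0 < x) ∧ (∀ x ∈ q.2, Odd x ∧ 0 < x) ∧
        (∑ x ∈ q.1, x) + q.2.sum = n} : ℤ)) := by
  have h1 := TCP.cardE2 n hn
  have h2 := TCP.cardO n hn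
  have h8 := TCP.signSplit n
  rw [h1, h2]
  have e1 : 2 * (((TCP.EFin n).filter (fun p => Even (p.1.card + p.2.card))).card : ℤ)
      = ((TCP.OFin n).card : ℤ) + (if IsSquare n then 2 * (-1 : ℤ)^n else 0) := by
    have e0 : 2 * (((TCP.EFin n).filter (fun p => Even (p.1.card + p.2.card))).card : ℤ)
        = (TCP.Qo n * TCP.QA n).coeff n + (TCP.Po n * TCP.PA n).coeff n := by
      rw [TCP.coeffQQ n hn, TCP.coeffPP n hn]; linarith [h8]
    rw [e0, TCP.congQ n hn, TCP.coeffQG n hn, TCP.thetaCoeff n hn]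
  rw [e1]
  split_ifs <;> ring
end

section
/- For every positive integer n, the number E₃(n) of two-color partitions of n counted by E(n) having an odd total number of parts equals p̄ₒ(n)/2 − (−1)ⁿ if n is a perfect square, and equals p̄ₒ(n)/2 otherwise. (Equivalently, as integers, 2·E₃(n) = p̄ₒ(n) − 2·(−1)ⁿ if n is a square and 2·E₃(n) = p̄ₒ(n) otherwise.) -/
open Polynomial Finset

namespace TwoColorAux

noncomputable section

def GB : ℕ → ℕ → Polynomial ℤ
  | _, 0 => 1
  | 0, _+1 => 0
  | n+1, k+1 => GB n (k+1) + X^(n-k) * GB n k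

@[simp] lemma GB_zero_right (n : ℕ) : GB n 0 = 1 := by cases n <;> rfl
@[simp] lemma GB_zero_succ (k : ℕ) : GB 0 (k+1) = 0 := rfl
lemma pascalA (n k : ℕ) : GB (n+1) (k+1) = GB n (k+1) + X^(n-k) * GB n k := rfl

lemma GB_eq_zero : ∀ n k, n < k → GB n k = 0 := by
  intro n
  induction n with
  | zero => intro k hk; match k, hk with | k+1, _ => rfl
  | succ n ih =>
    intro k hk
    match k, hk with
    | k+1, hk =>
      rw [pascalA, ih (k+1) (by omega), ih k (by omega)]
      ring

@[simp] lemma GB_self : ∀ n, GB n n = 1 := by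
  intro n
  induction n with
  | zero => rfl
  | succ n ih => rw [pascalA, ih, GB_eq_zero n (n+1) (by omega)]; simp

/-- Two absorption identities, proved together by induction on `n`. -/
lemma absorb : ∀ n : ℕ, (∀ k, GB (n+1) k * (1 - X^(n+1-k)) = GB n k * (1 - X^(n+1)))
    ∧ (∀ k, GB (n+1) (k+1) * (1 - X^(k+1)) = GB n k * (1 - X^(n+1))) := by
  intro n
  induction n with
  | zero =>
    constructor
    · intro k
      match k with
      | 0 => simp
      | 1 => simp [pascalA]
      | k+2 => rw [GB_eq_zero 1 (k+2) (by omega), GB_eq_zero 0 (k+2) (by omega)]; ring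
    · intro k
      match k with
      | 0 => simp [pascalA]
      | k+1 =>
        rw [GB_eq_zero 1 (k+2) (by omega), GB_eq_zero 0 (k+1) (by omega)]; ring
  | succ n ih =>
    obtain ⟨ihA, ihB⟩ := ih
    have hB : ∀ k, GB (n+1+1) (k+1) * (1 - X^(k+1)) = GB (n+1) k * (1 - X^(n+1+1)) := by
      intro k
      rw [pascalA]
      rcases lt_trichotomy k (n+1) with hk | hk | hk
      · have e1 := ihB k
        have e2 := ihA k
        have hx : X^(n+1-k) * (X^(k+1) : Polynomial ℤ) = X^(n+1+1) := by
          rw [← pow_add]; congr 1; omega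
        linear_combination e1 - e2 - GB (n+1) k * hx
      · subst hk
        rw [GB_eq_zero (n+1) (n+1+1) (by omega), Nat.sub_self]
        ring
      · rw [GB_eq_zero (n+1) (k+1) (by omega), GB_eq_zero (n+1) k (by omega)]
        ring
    refine ⟨?_, hB⟩
    intro k
    match k with
    | 0 => simp
    | j+1 =>
      rw [pascalA]
      have he : n+1+1-(j+1) = n+1-j := by omega
      rw [he]
      rcases lt_trichotomy j (n+1) with hj | hj | hj
      · have e1 := ihB j
        have e2 := ihA j
        have hx : X^(n+1-j) * (X^(j+1) : Polynomial ℤ) = X^(n+1+1) := by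
          rw [← pow_add]; congr 1; omega
        linear_combination X^(n+1-j) * e2 - X^(n+1-j) * e1 - GB (n+1) (j+1) * hx
      · subst hj
        rw [GB_eq_zero (n+1) (n+1+1) (by omega), Nat.sub_self]
        ring
      · rw [GB_eq_zero (n+1) (j+1) (by omega), GB_eq_zero (n+1) j (by omega)]
        ring

lemma pascalB (n k : ℕ) : GB (n+1) (k+1) = X^(k+1) * GB n (k+1) + GB n k := by
  cases n with
  | zero =>
    match k with
    | 0 => simp [pascalA]
    | k+1 => rw [GB_eq_zero 1 (k+2) (by omega)]; simp
  | succ n =>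
    have e1 := (absorb n).2 k
    have e2 := (absorb n).1 k
    rw [pascalA]
    -- goal: GB (n+1) (k+1) + X^(n+1-k) * GB (n+1) k = X^(k+1) * GB (n+1) (k+1) + GB (n+1) k
    linear_combination e1 - e2

lemma key0 (n : ℕ) : GB (n+2) 1 = (1 + X^(n+1)) * GB n 0 + X * GB n 1 := by
  have h1 : GB (n+2) 1 = GB (n+1) 1 + X^(n+1) * GB (n+1) 0 := by
    have := pascalA (n+1) 0
    simpa using this
  have h2 : GB (n+1) 1 = X^1 * GB n 1 + GB n 0 := pascalB n 0
  rw [h1, h2]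
  simp
  ring

lemma key3 (n k : ℕ) :
    GB (n+2) (k+2) = (1 + X^(n+1)) * GB n (k+1) + X^(k+2) * GB n (k+2) + X^(n-k) * GB n k := by
  rcases le_or_gt k n with hk | hk
  · have hA : GB (n+2) (k+2) = GB (n+1) (k+2) + X^(n-k) * GB (n+1) (k+1) := by
      have := pascalA (n+1) (k+1)
      have he : n+1-(k+1) = n-k := by omega
      rw [he] at this
      exact this
    have hB1 : GB (n+1) (k+2) = X^(k+2) * GB n (k+2) + GB n (k+1) := pascalB n (k+1)
    have hB2 : GB (n+1) (k+1) = X^(k+1) * GB n (k+1) + GB n k := pascalB n k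
    have hx : X^(n-k) * (X^(k+1) : Polynomial ℤ) = X^(n+1) := by
      rw [← pow_add]; congr 1; omega
    rw [hA, hB1, hB2]
    linear_combination GB n (k+1) * hx
  · rw [GB_eq_zero (n+2) (k+2) (by omega), GB_eq_zero n (k+1) (by omega),
      GB_eq_zero n (k+2) (by omega), GB_eq_zero n k (by omega)]
    ring

def pp (m : ℕ) : Polynomial ℤ := ∏ j ∈ range m, (1 - X^(j+1))

@[simp] lemma pp_zero : pp 0 = 1 := by simp [pp]

lemma pp_succ (m : ℕ) : pp (m+1) = pp m * (1 - X^(m+1)) := by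
  rw [pp, prod_range_succ]; rfl

lemma pp_ne_zero (m : ℕ) : pp m ≠ 0 := by
  intro h
  have h0 : (pp m).eval 0 = 1 := by
    rw [pp, Polynomial.eval_prod]
    apply Finset.prod_eq_one
    intro j _
    simp
  rw [h] at h0
  simp at h0

lemma gb_fact : ∀ n k, k ≤ n → GB n k * pp k * pp (n-k) = pp n := by
  intro n
  induction n with
  | zero => intro k hk; interval_cases k; simp
  | succ n ih =>
    intro k hk
    match k with
    | 0 => simp
    | j+1 =>
      rcases eq_or_lt_of_le hk with he | hlt
      · rw [← he]; simp [Nat.sub_self]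
      · have hj : j + 1 ≤ n := by omega
        have hsub : n + 1 - (j+1) = (n - (j+1)) + 1 := by omega
        have hsub2 : n - j = (n - (j+1)) + 1 := by omega
        rw [pascalA, hsub]
        have s1 := pp_succ j
        have s2 := pp_succ (n-(j+1))
        have s3 := pp_succ n
        have e1 := ih (j+1) hj
        have e2 := ih j (by omega)
        rw [hsub2] at e2
        have hx : (X:Polynomial ℤ)^(n-j) * X^(j+1) = X^(n+1) := by
          rw [← pow_add]; congr 1; omega
        have hx2 : (X:Polynomial ℤ)^(n-j) = X^((n-(j+1))+1) := by rw [hsub2]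
        linear_combination (GB n (j+1) * pp (j+1)) * s2 + (1 - X^(n-(j+1)+1)) * e1
          + (X^(n-j) * GB n j * pp (n-(j+1)+1)) * s1 + (X^(n-j) * (1 - X^(j+1))) * e2
          - s3 + pp n * hx2 - pp n * hx

lemma gb_symm (n k : ℕ) (hk : k ≤ n) : GB n k = GB n (n-k) := by
  have h1 := gb_fact n k hk
  have h2 := gb_fact n (n-k) (by omega)
  have hsub : n - (n-k) = k := by omega
  rw [hsub] at h2
  have := h1.trans h2.symm
  have hne : pp k * pp (n-k) ≠ 0 := mul_ne_zero (pp_ne_zero _) (pp_ne_zero _)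
  apply mul_right_cancel₀ hne
  calc GB n k * (pp k * pp (n-k)) = GB n k * pp k * pp (n-k) := by ring
    _ = GB n (n-k) * pp (n-k) * pp k := this
    _ = GB n (n-k) * (pp k * pp (n-k)) := by ring

lemma pp_split (a b : ℕ) (h : a ≤ b) :
    pp a * ∏ j ∈ Ico a b, (1 - (X:Polynomial ℤ)^(j+1)) = pp b := by
  rw [pp, pp, range_eq_Ico, range_eq_Ico]
  exact Finset.prod_Ico_consecutive _ (Nat.zero_le a) h

lemma prodXY (N c : ℕ) (hc : c ≤ N) :
    GB (2*N) (N+c) * pp N =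
      (∏ j ∈ Ico (N+c) (2*N), (1 - (X:Polynomial ℤ)^(j+1))) *
      (∏ j ∈ Ico (N-c) N, (1 - (X:Polynomial ℤ)^(j+1))) := by
  have hf := gb_fact (2*N) (N+c) (by omega)
  have hsub : 2*N - (N+c) = N - c := by omega
  rw [hsub] at hf
  have h1 := pp_split (N+c) (2*N) (by omega)
  have h2 := pp_split (N-c) N (by omega)
  have hne : pp (N+c) * pp (N-c) ≠ 0 := mul_ne_zero (pp_ne_zero _) (pp_ne_zero _)
  apply mul_right_cancel₀ hne
  calc GB (2*N) (N+c) * pp N * (pp (N+c) * pp (N-c))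
      = (GB (2*N) (N+c) * pp (N+c) * pp (N-c)) * pp N := by ring
    _ = pp (2*N) * pp N := by rw [hf]
    _ = (pp (N+c) * ∏ j ∈ Ico (N+c) (2*N), (1 - (X:Polynomial ℤ)^(j+1)))
        * (pp (N-c) * ∏ j ∈ Ico (N-c) N, (1 - (X:Polynomial ℤ)^(j+1))) := by rw [h1, h2]
    _ = (∏ j ∈ Ico (N+c) (2*N), (1 - (X:Polynomial ℤ)^(j+1))) *
        (∏ j ∈ Ico (N-c) N, (1 - (X:Polynomial ℤ)^(j+1))) * (pp (N+c) * pp (N-c)) := by ring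

/-- Products of `1 - X^d` with all `d ≥ M` are `1` modulo `X^M`. -/
lemma X_pow_dvd_prod_sub_one {R : Type*} [CommRing R] (s : Finset ℕ) (d : ℕ → ℕ) (M : ℕ)
    (h : ∀ j ∈ s, M ≤ d j) :
    (X:Polynomial R)^M ∣ (∏ j ∈ s, (1 - X^(d j))) - 1 := by
  induction s using Finset.induction_on with
  | empty => simp
  | @insert a s ha ih =>
    rw [Finset.prod_insert ha]
    have h1 : (X:Polynomial R)^M ∣ (∏ j ∈ s, (1 - X^(d j))) - 1 :=
      ih (fun j hj => h j (Finset.mem_insert_of_mem hj))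
    have h2 : (X:Polynomial R)^M ∣ (1 - X^(d a)) - 1 := by
      have : (1 - (X:Polynomial R)^(d a)) - 1 = -X^(d a) := by ring
      rw [this]
      exact dvd_neg.mpr (pow_dvd_pow X (h a (Finset.mem_insert_self a s)))
    have key : (1 - (X:Polynomial R)^(d a)) * (∏ j ∈ s, (1 - X^(d j))) - 1
        = (1 - X^(d a)) * ((∏ j ∈ s, (1 - X^(d j))) - 1) + ((1 - X^(d a)) - 1) := by ring
    rw [key]
    exact dvd_add (h1.mul_left _) h2

/-! ### The two-variable finite Jacobi triple product -/

abbrev B2 := Polynomial (Polynomial ℤ)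

def zB : B2 := C X

def ee (N k : ℕ) : ℕ := ((k - N) + (N - k))^2

def GBq (n k : ℕ) : B2 := aeval ((X:B2)^2) (GB n k)

def trm (N k : ℕ) : B2 := (-1:B2)^(k+N) * zB^k * (X:B2)^(ee N k) * GBq (2*N) k

lemma GBq_def (n k : ℕ) : GBq n k = aeval ((X:B2)^2) (GB n k) := rfl

lemma trm_def (N k : ℕ) : trm N k = (-1:B2)^(k+N) * zB^k * (X:B2)^(ee N k) * GBq (2*N) k := rfl

lemma ee_succ_succ (N k : ℕ) : ee (N+1) (k+1) = ee N k := by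
  simp [ee, Nat.succ_sub_succ]

lemma ee_zero (N : ℕ) : ee N 0 = N^2 := by simp [ee]

lemma E1 (N k : ℕ) : ee N (k+1) + (2*N+1) = ee N k + (2*k+2) := by
  rcases le_total N k with h | h
  · obtain ⟨a, rfl⟩ : ∃ a, k = N + a := ⟨k - N, by omega⟩
    have h1 : N + a - N = a := by omega
    have h2 : N - (N + a) = 0 := by omega
    have h3 : N + a + 1 - N = a + 1 := by omega
    have h4 : N - (N + a + 1) = 0 := by omega
    simp only [ee, h1, h2, h3, h4]
    ring
  · rcases eq_or_lt_of_le h with rfl | h'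
    · simp only [ee, Nat.sub_self]
      have h3 : k + 1 - k = 1 := by omega
      have h4 : k - (k+1) = 0 := by omega
      rw [h3, h4]
      ring
    · obtain ⟨c, rfl⟩ : ∃ c, N = k + c + 1 := ⟨N - k - 1, by omega⟩
      have h1 : k - (k + c + 1) = 0 := by omega
      have h2 : k + c + 1 - k = c + 1 := by omega
      have h3 : k + 1 - (k + c + 1) = 0 := by omega
      have h4 : k + c + 1 - (k + 1) = c := by omega
      simp only [ee, h1, h2, h3, h4]
      ring

lemma GBq_eq_zero (n k : ℕ) (h : n < k) : GBq n k = 0 := by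
  rw [GBq_def, GB_eq_zero n k h, map_zero]

lemma trm_eq_zero (N k : ℕ) (h : 2*N < k) : trm N k = 0 := by
  rw [trm_def, GBq_eq_zero _ _ h, mul_zero]

@[simp] lemma GBq_zero_right (n : ℕ) : GBq n 0 = 1 := by
  rw [GBq_def, GB_zero_right, map_one]

lemma hpow2 (m : ℕ) : ((X:B2)^2)^m = X^(2*m) := by
  rw [← pow_mul]

lemma GBq_key0 (N : ℕ) : GBq (2*(N+1)) 1 = (1 + X^(4*N+2)) + X^2 * GBq (2*N) 1 := by
  have h22 : 2*(N+1) = 2*N+2 := by ring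
  rw [GBq_def, h22, key0]
  simp only [map_add, map_mul, map_one, map_pow, aeval_X, GB_zero_right, hpow2, ← GBq_def]
  rw [show 2*(2*N+1) = 4*N+2 by ring]
  ring

lemma GBq_key3 (N j : ℕ) : GBq (2*(N+1)) (j+1+1) =
    (1 + X^(4*N+2)) * GBq (2*N) (j+1) + X^(2*(j+2)) * GBq (2*N) (j+1+1)
      + X^(2*(2*N-j)) * GBq (2*N) j := by
  have h22 : 2*(N+1) = 2*N+2 := by ring
  have hk : GBq (2*N+2) (j+2) =
      aeval ((X:B2)^2) ((1 + X^(2*N+1)) * GB (2*N) (j+1) + X^(j+2) * GB (2*N) (j+2)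
        + X^(2*N-j) * GB (2*N) j) := by
    rw [GBq_def, key3]
  rw [show GBq (2*(N+1)) (j+1+1) = GBq (2*N+2) (j+2) from by rw [h22]]
  rw [hk]
  simp only [map_add, map_mul, map_one, map_pow, aeval_X, hpow2, ← GBq_def]
  rw [show 2*(2*N+1) = 4*N+2 by ring]

/-- The key step identity for the induction. -/
lemma key_step (N k : ℕ) : trm (N+1) (k+1) =
    zB * (1 + X^(4*N+2)) * trm N k - X^(2*N+1) * trm N (k+1)
      - X^(2*N+1) * zB^2 * (if k = 0 then 0 else trm N (k-1)) := by
  cases k with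
  | zero =>
    rw [if_pos rfl, mul_zero, sub_zero]
    simp only [trm_def, GBq_zero_right, mul_one, Nat.zero_add]
    have hG : GBq (2*(N+1)) (0+1) = (1 + X^(4*N+2)) + X^2 * GBq (2*N) (0+1) := GBq_key0 N
    rw [hG]
    have hEE : ee (N+1) (0+1) = ee N 0 := ee_succ_succ N 0
    rw [hEE]
    have hs1 : (-1:B2)^(0+1+(N+1)) = (-1)^(0+N) := by
      rw [show 0+1+(N+1) = (0+N)+2 by ring, pow_add]
      norm_num
    have hs2 : (-1:B2)^(0+1+N) = -(-1)^(0+N) := by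
      rw [show 0+1+N = (0+N)+1 by ring, pow_succ]
      ring
    rw [hs1, hs2]
    have he : (X:B2)^(ee N 0) * X^2 = X^(2*N+1) * X^(ee N (0+1)) := by
      rw [← pow_add, ← pow_add]
      congr 1
      have := E1 N 0
      omega
    linear_combination ((-1:B2)^(0+N) * zB^(0+1) * GBq (2*N) (0+1)) * he
  | succ j =>
    rcases le_or_gt j (2*N) with hj | hj
    · rw [if_neg (Nat.succ_ne_zero j), Nat.succ_sub_one]
      simp only [trm_def]
      have hG : GBq (2*(N+1)) (j+1+1) =
          (1 + X^(4*N+2)) * GBq (2*N) (j+1) + X^(2*(j+2)) * GBq (2*N) (j+1+1)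
            + X^(2*(2*N-j)) * GBq (2*N) j := GBq_key3 N j
      rw [hG]
      have hEE : ee (N+1) (j+1+1) = ee N (j+1) := ee_succ_succ N (j+1)
      rw [hEE]
      have hs1 : (-1:B2)^(j+1+1+(N+1)) = -(-1)^(j+N) := by
        rw [show j+1+1+(N+1) = (j+N)+3 by ring, pow_add]
        ring_nf
      have hs2 : (-1:B2)^(j+1+N) = -(-1)^(j+N) := by
        rw [show j+1+N = (j+N)+1 by ring, pow_succ]
        ring
      have hs3 : (-1:B2)^(j+1+1+N) = (-1)^(j+N) := by
        rw [show j+1+1+N = (j+N)+2 by ring, pow_add]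
        norm_num
      rw [hs1, hs2, hs3]
      have he1 : (X:B2)^(ee N (j+1)) * X^(2*(j+2)) = X^(2*N+1) * X^(ee N (j+1+1)) := by
        rw [← pow_add, ← pow_add]
        congr 1
        have := E1 N (j+1)
        omega
      have he2 : (X:B2)^(ee N (j+1)) * X^(2*(2*N-j)) = X^(2*N+1) * X^(ee N j) := by
        rw [← pow_add, ← pow_add]
        congr 1
        have := E1 N j
        omega
      linear_combination (-(-1:B2)^(j+N) * zB^(j+1+1) * GBq (2*N) (j+1+1)) * he1
        + (-(-1:B2)^(j+N) * zB^(j+1+1) * GBq (2*N) j) * he2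
    · rw [trm_eq_zero N (j+1+1) (by omega), trm_eq_zero N (j+1) (by omega),
        trm_eq_zero (N+1) (j+1+1) (by omega), if_neg (Nat.succ_ne_zero j),
        Nat.succ_sub_one, trm_eq_zero N j (by omega)]
      ring

theorem jtp (N : ℕ) :
    (∏ j ∈ range N, (1 - zB * X^(2*j+1))) * (∏ j ∈ range N, (zB - X^(2*j+1)))
      = ∑ k ∈ range (2*N+1), trm N k := by
  induction N with
  | zero =>
    simp only [range_zero, prod_empty, one_mul, show 2*0+1 = 1 from rfl, range_one, sum_singleton]
    rw [trm_def]
    simp [ee, GBq_def]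
  | succ N ih =>
    have hL : (∏ j ∈ range (N+1), (1 - zB * X^(2*j+1))) * (∏ j ∈ range (N+1), (zB - X^(2*j+1)))
        = ((∏ j ∈ range N, (1 - zB * X^(2*j+1))) * (∏ j ∈ range N, (zB - X^(2*j+1))))
          * ((1 - zB * X^(2*N+1)) * (zB - X^(2*N+1))) := by
      rw [prod_range_succ, prod_range_succ]
      ring
    rw [hL, ih]
    set P := ∑ k ∈ range (2*N+1), trm N k with hP
    -- compute the target sum
    have hsplit : ∑ k ∈ range (2*(N+1)+1), trm (N+1) k
        = (∑ k ∈ range (2*N+2), trm (N+1) (k+1)) + trm (N+1) 0 := by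
      rw [show 2*(N+1)+1 = (2*N+2)+1 by ring]
      exact Finset.sum_range_succ' _ _
    have hkey : ∑ k ∈ range (2*N+2), trm (N+1) (k+1)
        = ∑ k ∈ range (2*N+2), (zB * (1 + X^(4*N+2)) * trm N k - X^(2*N+1) * trm N (k+1)
            - X^(2*N+1) * zB^2 * (if k = 0 then 0 else trm N (k-1))) :=
      Finset.sum_congr rfl fun k _ => key_step N k
    have hsa : ∑ k ∈ range (2*N+2), zB * (1 + X^(4*N+2)) * trm N k
        = zB * (1 + X^(4*N+2)) * P := by
      rw [← Finset.mul_sum, Finset.sum_range_succ, trm_eq_zero N (2*N+1) (by omega), add_zero]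
    have hsb : ∑ k ∈ range (2*N+2), X^(2*N+1) * trm N (k+1)
        = X^(2*N+1) * (P - trm N 0) := by
      rw [← Finset.mul_sum]
      refine congrArg (fun t => X^(2*N+1) * t) ?_
      have h1 : ∑ k ∈ range ((2*N+2)+1), trm N k
          = (∑ k ∈ range (2*N+2), trm N (k+1)) + trm N 0 := Finset.sum_range_succ' _ _
      have h2 : ∑ k ∈ range ((2*N+2)+1), trm N k = P := by
        rw [Finset.sum_range_succ, Finset.sum_range_succ, trm_eq_zero N (2*N+1) (by omega),
          trm_eq_zero N (2*N+2) (by omega), add_zero, add_zero]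
      rw [h1] at h2
      linear_combination h2
    have hsc : ∑ k ∈ range (2*N+2), X^(2*N+1) * zB^2 * (if k = 0 then 0 else trm N (k-1))
        = X^(2*N+1) * zB^2 * P := by
      rw [← Finset.mul_sum]
      refine congrArg (fun t => X^(2*N+1) * zB^2 * t) ?_
      have h1 : ∑ k ∈ range ((2*N+1)+1), (if k = 0 then 0 else trm N (k-1))
          = (∑ k ∈ range (2*N+1), (if k+1 = 0 then 0 else trm N (k+1-1))) + (if 0 = 0 then (0:B2) else trm N (0-1)) :=
        Finset.sum_range_succ' _ _
      rw [show (2*N+2) = (2*N+1)+1 from rfl, h1, if_pos rfl, add_zero]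
      exact Finset.sum_congr rfl fun k _ => by
        rw [if_neg (Nat.succ_ne_zero k), Nat.succ_sub_one]
    have htz : trm (N+1) 0 + X^(2*N+1) * trm N 0 = 0 := by
      rw [trm_def, trm_def]
      simp only [GBq_zero_right, mul_one, pow_zero, one_mul, Nat.zero_add]
      have hx : (X:B2)^(2*N+1) * X^(ee N 0) = X^(ee (N+1) 0) := by
        rw [← pow_add, ee_zero, ee_zero]
        congr 1
        ring
      have hs : (-1:B2)^(N+1) = -(-1)^N := by rw [pow_succ]; ring
      rw [hs]
      linear_combination (-1:B2)^N * hx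
    rw [hsplit, hkey]
    rw [Finset.sum_sub_distrib, Finset.sum_sub_distrib, hsa, hsb, hsc]
    linear_combination -htz

/-! ### Specialisation `z = 1` and coefficient extraction -/

def ev1 : B2 →+* Polynomial ℤ := Polynomial.mapRingHom (Polynomial.evalRingHom (1:ℤ))

@[simp] lemma ev1_X : ev1 X = X := Polynomial.map_X _

@[simp] lemma ev1_zB : ev1 zB = 1 := by
  rw [zB, ev1, Polynomial.coe_mapRingHom, Polynomial.map_C]
  simp

def GB2 (n k : ℕ) : Polynomial ℤ := aeval ((X:Polynomial ℤ)^2) (GB n k)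

lemma ev1_aeval (p : Polynomial ℤ) : ev1 (aeval ((X:B2)^2) p) = aeval ((X:Polynomial ℤ)^2) p := by
  rw [Polynomial.aeval_def, Polynomial.aeval_def, Polynomial.eval₂_eq_sum_range,
    Polynomial.eval₂_eq_sum_range, map_sum]
  apply Finset.sum_congr rfl
  intro i _
  rw [map_mul, map_pow, map_pow, ev1_X]
  congr 1
  simp only [algebraMap_int_eq, eq_intCast, map_intCast]

lemma ev1_trm (N k : ℕ) : ev1 (trm N k)
    = C ((-1:ℤ)^(k+N)) * (X^(ee N k) * GB2 (2*N) k) := by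
  rw [trm_def, GBq_def, map_mul, map_mul, map_mul, map_pow, map_pow, map_pow, ev1_X,
    ev1_zB, ev1_aeval, ← GB2]
  have : ev1 (-1) = -1 := by simp
  rw [this]
  have hC : (C ((-1:ℤ)^(k+N)) : Polynomial ℤ) = (-1)^(k+N) := by
    rw [map_pow, map_neg, map_one]
  rw [hC]
  ring

/-- The specialised identity: `∏ (1-X^(2j+1))² = Σ ±X^(c²)·GB2`. -/
theorem jtp1 (N : ℕ) :
    (∏ j ∈ range N, (1 - (X:Polynomial ℤ)^(2*j+1)))^2
      = ∑ k ∈ range (2*N+1), C ((-1:ℤ)^(k+N)) * (X^(ee N k) * GB2 (2*N) k) := by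
  have h := congrArg ev1 (jtp N)
  rw [map_mul, map_sum] at h
  have hL1 : ev1 (∏ j ∈ range N, (1 - zB * X^(2*j+1)))
      = ∏ j ∈ range N, (1 - (X:Polynomial ℤ)^(2*j+1)) := by
    rw [map_prod]
    apply Finset.prod_congr rfl
    intro j _
    rw [map_sub, map_mul, map_pow, ev1_X, ev1_zB, map_one, one_mul]
  have hL2 : ev1 (∏ j ∈ range N, (zB - X^(2*j+1)))
      = ∏ j ∈ range N, (1 - (X:Polynomial ℤ)^(2*j+1)) := by
    rw [map_prod]
    apply Finset.prod_congr rfl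
    intro j _
    rw [map_sub, map_pow, ev1_X, ev1_zB]
  rw [hL1, hL2] at h
  rw [sq]
  rw [h]
  exact Finset.sum_congr rfl fun k _ => ev1_trm N k

lemma dvd_mul_sub_one {R : Type*} [CommRing R] {x a b : R} (ha : x ∣ a - 1) (hb : x ∣ b - 1) :
    x ∣ a * b - 1 := by
  have : a * b - 1 = a * (b - 1) + (a - 1) := by ring
  rw [this]
  exact dvd_add (hb.mul_left a) ha

/-- coefficients of `GB2(2N,k) · ∏(1-X^(2j+2))` below the window are those of `1`. -/
lemma window (N k m : ℕ) (hk : k ≤ 2*N) (hm : m < 2*((N - ((N-k)+(k-N)))+1)) :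
    (GB2 (2*N) k * ∏ j ∈ range N, (1 - (X:Polynomial ℤ)^(2*j+2))).coeff m
      = if m = 0 then 1 else 0 := by
  set d := (N-k)+(k-N) with hd
  have hdN : d ≤ N := by omega
  have hsym : GB (2*N) k = GB (2*N) (N+d) := by
    rcases le_or_gt N k with h | h
    · congr 1; omega
    · rw [gb_symm (2*N) k (by omega)]
      congr 1; omega
  have hEN : (∏ j ∈ range N, (1 - (X:Polynomial ℤ)^(2*j+2)))
      = aeval ((X:Polynomial ℤ)^2) (pp N) := by
    rw [pp, map_prod]
    apply Finset.prod_congr rfl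
    intro j _
    rw [map_sub, map_one, map_pow, aeval_X, ← pow_mul]
    congr 2
  have hprod : GB2 (2*N) k * ∏ j ∈ range N, (1 - (X:Polynomial ℤ)^(2*j+2))
      = aeval ((X:Polynomial ℤ)^2) (GB (2*N) (N+d) * pp N) := by
    rw [map_mul, GB2, hsym, hEN]
  rw [hprod, prodXY N d hdN]
  have h1 : (X:Polynomial ℤ)^(N-d+1) ∣ (∏ j ∈ Ico (N+d) (2*N), (1 - (X:Polynomial ℤ)^(j+1))) - 1 :=
    X_pow_dvd_prod_sub_one _ _ _ (fun j hj => by rw [Finset.mem_Ico] at hj; omega)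
  have h2 : (X:Polynomial ℤ)^(N-d+1) ∣ (∏ j ∈ Ico (N-d) N, (1 - (X:Polynomial ℤ)^(j+1))) - 1 :=
    X_pow_dvd_prod_sub_one _ _ _ (fun j hj => by rw [Finset.mem_Ico] at hj; omega)
  have h3 := dvd_mul_sub_one h1 h2
  -- map through aeval X^2
  obtain ⟨g, hg⟩ := h3
  have h4 : aeval ((X:Polynomial ℤ)^2)
        ((∏ j ∈ Ico (N+d) (2*N), (1 - (X:Polynomial ℤ)^(j+1))) * (∏ j ∈ Ico (N-d) N, (1 - (X:Polynomial ℤ)^(j+1))))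
      = 1 + X^(2*(N-d+1)) * aeval ((X:Polynomial ℤ)^2) g := by
    have : ((∏ j ∈ Ico (N+d) (2*N), (1 - (X:Polynomial ℤ)^(j+1))) * (∏ j ∈ Ico (N-d) N, (1 - (X:Polynomial ℤ)^(j+1))))
        = 1 + X^(N-d+1) * g := by
      rw [← hg]; ring
    rw [this, map_add, map_one, map_mul, map_pow, aeval_X, ← pow_mul]
  rw [h4]
  rw [Polynomial.coeff_add, Polynomial.coeff_one]
  have h5 : (X^(2*(N-d+1)) * aeval ((X:Polynomial ℤ)^2) g).coeff m = 0 := by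
    rw [mul_comm, Polynomial.coeff_mul_X_pow']
    rw [if_neg (by omega)]
  rw [h5, add_zero]

theorem main1 (n N : ℕ) (h1 : 1 ≤ n) (hN : n ≤ N) :
    ((∏ j ∈ range N, (1 - (X:Polynomial ℤ)^(2*j+1)))^2
      * ∏ j ∈ range N, (1 - (X:Polynomial ℤ)^(2*j+2))).coeff n
      = if IsSquare n then 2 * (-1:ℤ)^n else 0 := by
  rw [jtp1 N, Finset.sum_mul]
  rw [Polynomial.finset_sum_coeff]
  have hterm : ∀ k ∈ range (2*N+1),
      (C ((-1:ℤ)^(k+N)) * (X^(ee N k) * GB2 (2*N) k)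
        * ∏ j ∈ range N, (1 - (X:Polynomial ℤ)^(2*j+2))).coeff n
      = if ((N-k)+(k-N))^2 = n then (-1:ℤ)^(k+N) else 0 := by
    intro k hk
    rw [Finset.mem_range] at hk
    obtain ⟨d, hd⟩ : ∃ d, d = (N-k)+(k-N) := ⟨_, rfl⟩
    have hee : ee N k = d^2 := by rw [hd, ee]; ring_nf
    have hassoc : C ((-1:ℤ)^(k+N)) * (X^(ee N k) * GB2 (2*N) k)
        * ∏ j ∈ range N, (1 - (X:Polynomial ℤ)^(2*j+2))
        = C ((-1:ℤ)^(k+N)) * ((GB2 (2*N) k * ∏ j ∈ range N, (1 - (X:Polynomial ℤ)^(2*j+2))) * X^(ee N k)) := by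
      ring
    rw [hassoc, Polynomial.coeff_C_mul, Polynomial.coeff_mul_X_pow', hee]
    by_cases hle : d^2 ≤ n
    · rw [if_pos hle]
      have hd2 : 2*d ≤ d^2 + 1 := by
        rcases Nat.eq_zero_or_pos d with h | h
        · simp [h]
        · obtain ⟨e, rfl⟩ : ∃ e, d = e+1 := ⟨d-1, by omega⟩
          have hsq : (e+1)^2 = e*e + 2*e + 1 := by ring
          omega
      have hdN : d ≤ N := by omega
      have hwin : n - d^2 < 2*((N - ((N-k)+(k-N)))+1) := by omega
      rw [window N k (n - d^2) (by omega) hwin]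
      by_cases h0 : d^2 = n
      · rw [if_pos (by omega), if_pos (by rw [hd] at h0; exact h0)]
        exact mul_one _
      · rw [if_neg (by omega), if_neg (by rw [hd] at h0; exact h0), mul_zero]
    · rw [if_neg hle, if_neg (by rw [hd] at hle; omega), mul_zero]
  rw [Finset.sum_congr rfl hterm]
  rw [← Finset.sum_filter]
  by_cases hsq : IsSquare n
  · rw [if_pos hsq]
    obtain ⟨r, hr⟩ := hsq
    have hr1 : 1 ≤ r := by
      rcases Nat.eq_zero_or_pos r with h | h
      · subst h; omega
      · exact h
    have hrr2 : r ≤ r * r := Nat.le_mul_of_pos_left r hr1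
    have hrN : r ≤ N := by omega
    have hfilt : filter (fun a => (N - a + (a - N))^2 = n) (range (2*N+1)) = {N - r, N + r} := by
      ext k
      simp only [Finset.mem_filter, Finset.mem_range, Finset.mem_insert, Finset.mem_singleton]
      constructor
      · rintro ⟨hk, hk2⟩
        have hk3 : N - k + (k - N) = r := by
          have h2 : (N - k + (k - N))^2 = r^2 := by rw [hk2, hr]; ring
          exact Nat.pow_left_injective (by norm_num) h2
        omega
      · rintro (rfl | rfl)
        · refine ⟨by omega, ?_⟩
          have h3 : N - (N-r) + (N-r-N) = r := by omega
          rw [h3, hr]; ring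
        · refine ⟨by omega, ?_⟩
          have h3 : N - (N+r) + (N+r-N) = r := by omega
          rw [h3, hr]; ring
    rw [hfilt]
    have hne : N - r ≠ N + r := by omega
    rw [Finset.sum_pair hne]
    have hmod : ∀ a b : ℕ, a % 2 = b % 2 → ((-1:ℤ))^a = (-1)^b := by
      intro a b hab
      rcases Nat.even_or_odd a with ha | ha
      · have hb : Even b := by rw [Nat.even_iff] at *; omega
        rw [ha.neg_one_pow, hb.neg_one_pow]
      · have hb : Odd b := by rw [Nat.odd_iff] at *; omega
        rw [ha.neg_one_pow, hb.neg_one_pow]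
    have hrr : (r*r) % 2 = r % 2 := by
      rcases Nat.mod_two_eq_zero_or_one r with h | h
      · rw [Nat.mul_mod, h]
      · rw [Nat.mul_mod, h]
    have h1s : ((N-r)+N) % 2 = n % 2 := by rw [hr]; omega
    have h2s : ((N+r)+N) % 2 = n % 2 := by rw [hr]; omega
    rw [hmod _ _ h1s, hmod _ _ h2s]
    ring
  · rw [if_neg hsq]
    apply Finset.sum_eq_zero
    intro k hk
    rw [Finset.mem_filter] at hk
    exact absurd ⟨(N-k)+(k-N), by rw [← hk.2]; ring⟩ hsq

/-! ### Counting lemmas -/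

def cnt (t : Finset ℕ) (c : ℤ) (m : ℕ) : ℤ :=
  ∑ A ∈ t.powerset.filter (fun A => ∑ x ∈ A, x = m), c^A.card

lemma cnt_insert (a : ℕ) (t : Finset ℕ) (ha : a ∉ t) (c : ℤ) (m : ℕ) :
    cnt (insert a t) c m
      = cnt t c m + (if a ≤ m then c * cnt t c (m - a) else 0) := by
  classical
  rw [cnt, Finset.powerset_insert, Finset.filter_union]
  have hdisj : Disjoint (t.powerset.filter (fun A => ∑ x ∈ A, x = m))
      ((t.powerset.image (insert a)).filter (fun A => ∑ x ∈ A, x = m)) := by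
    rw [Finset.disjoint_left]
    intro B hB hB'
    rw [Finset.mem_filter, Finset.mem_powerset] at hB
    rw [Finset.mem_filter, Finset.mem_image] at hB'
    obtain ⟨A, hA, rfl⟩ := hB'.1
    exact ha (hB.1 (Finset.mem_insert_self a A))
  rw [Finset.sum_union hdisj]
  congr 1
  have himg : ((t.powerset.image (insert a)).filter (fun A => ∑ x ∈ A, x = m))
      = (t.powerset.filter (fun A => a + ∑ x ∈ A, x = m)).image (insert a) := by
    ext B
    simp only [Finset.mem_filter, Finset.mem_image, Finset.mem_powerset]
    constructor
    · rintro ⟨⟨A, hA, rfl⟩, hsum⟩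
      refine ⟨A, ⟨hA, ?_⟩, rfl⟩
      rw [Finset.sum_insert (fun hin => ha (hA hin))] at hsum
      exact hsum
    · rintro ⟨A, ⟨hA, hsum⟩, rfl⟩
      refine ⟨⟨A, hA, rfl⟩, ?_⟩
      rw [Finset.sum_insert (fun hin => ha (hA hin))]
      exact hsum
  rw [himg, Finset.sum_image ?hinj]
  case hinj =>
    intro A hA A' hA' heq
    rw [Finset.mem_coe, Finset.mem_filter, Finset.mem_powerset] at hA hA'
    have h1 : A = (insert a A).erase a := by
      rw [Finset.erase_insert (fun hin => ha (hA.1 hin))]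
    rw [h1, heq, Finset.erase_insert (fun hin => ha (hA'.1 hin))]
  by_cases ham : a ≤ m
  · rw [if_pos ham]
    have hfe : (t.powerset.filter (fun A => a + ∑ x ∈ A, x = m))
        = (t.powerset.filter (fun A => ∑ x ∈ A, x = m - a)) := by
      apply Finset.filter_congr
      intro A _
      constructor
      · intro h; omega
      · intro h; omega
    rw [hfe, cnt, Finset.mul_sum]
    apply Finset.sum_congr rfl
    intro A hA
    rw [Finset.mem_filter, Finset.mem_powerset] at hA
    rw [Finset.card_insert_of_notMem (fun hin => ha (hA.1 hin)), pow_succ]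
    ring
  · rw [if_neg ham, Finset.filter_false_of_mem (fun A _ => by omega), Finset.sum_empty]

lemma coeff_cnt (t : Finset ℕ) (c : ℤ) (m : ℕ) (ht : 0 ∉ t) :
    (∏ j ∈ t, (1 + C c * X^j)).coeff m = cnt t c m := by
  classical
  revert ht
  induction t using Finset.induction_on generalizing m with
  | empty =>
    intro _
    rw [Finset.prod_empty, Polynomial.coeff_one, cnt, Finset.powerset_empty,
      Finset.filter_singleton, Finset.sum_empty]
    by_cases hm : m = 0
    · subst hm; simp
    · rw [if_neg hm, if_neg (by omega : ¬((0:ℕ) = m)), Finset.sum_empty]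
  | @insert a t ha ih =>
    intro ht
    have ha0 : a ≠ 0 := fun h => ht (h ▸ Finset.mem_insert_self a t)
    have ht0 : 0 ∉ t := fun h => ht (Finset.mem_insert_of_mem h)
    rw [Finset.prod_insert ha, add_mul, one_mul, Polynomial.coeff_add, mul_assoc,
      Polynomial.coeff_C_mul,
      show (X:Polynomial ℤ)^a * ∏ j ∈ t, (1 + C c * X^j) = (∏ j ∈ t, (1 + C c * X^j)) * X^a
        from mul_comm _ _,
      Polynomial.coeff_mul_X_pow', ih m ht0, cnt_insert a t ha c m]
    by_cases ham : a ≤ m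
    · rw [if_pos ham, if_pos ham, ih (m-a) ht0]
    · simp only [if_neg ham, mul_zero, add_zero]

lemma sum_ite_pair (w₁ w₂ : ℤ) (u v n : ℕ) :
    ∑ ab ∈ Finset.HasAntidiagonal.antidiagonal n, (if u = ab.1 then w₁ else 0) * (if v = ab.2 then w₂ else 0)
      = if u + v = n then w₁ * w₂ else 0 := by
  have hzero : ∀ ab ∈ Finset.HasAntidiagonal.antidiagonal n, ab ≠ (u, v) →
      (if u = ab.1 then w₁ else 0) * (if v = ab.2 then w₂ else 0) = 0 := by
    intro ab _ hne
    have h12 : ¬(u = ab.1) ∨ ¬(v = ab.2) := by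
      by_contra hcon
      push_neg at hcon
      exact hne (Prod.ext_iff.mpr ⟨hcon.1.symm, hcon.2.symm⟩)
    rcases h12 with h1 | h2
    · rw [if_neg h1, zero_mul]
    · rw [if_neg h2, mul_zero]
  by_cases h : u + v = n
  · rw [if_pos h, Finset.sum_eq_single_of_mem (u, v) (Finset.HasAntidiagonal.mem_antidiagonal.mpr h) hzero]
    simp
  · rw [if_neg h]
    apply Finset.sum_eq_zero
    intro ab hab
    apply hzero ab hab
    intro hcon
    rw [Finset.HasAntidiagonal.mem_antidiagonal, hcon] at hab
    exact h hab

lemma grade_conv {α β : Type*} [DecidableEq α] [DecidableEq β] (sa : Finset α) (sb : Finset β)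
    (f : α → ℕ) (g : β → ℕ) (w₁ : α → ℤ) (w₂ : β → ℤ) (n : ℕ) :
    ∑ ab ∈ Finset.HasAntidiagonal.antidiagonal n,
        (∑ x ∈ sa.filter (fun x => f x = ab.1), w₁ x) * (∑ y ∈ sb.filter (fun y => g y = ab.2), w₂ y)
      = ∑ p ∈ (sa ×ˢ sb).filter (fun p => f p.1 + g p.2 = n), w₁ p.1 * w₂ p.2 := by
  classical
  rw [Finset.sum_filter, Finset.sum_product]
  have hL : ∀ ab : ℕ × ℕ,
      (∑ x ∈ sa.filter (fun x => f x = ab.1), w₁ x) * (∑ y ∈ sb.filter (fun y => g y = ab.2), w₂ y)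
        = ∑ x ∈ sa, ∑ y ∈ sb, (if f x = ab.1 then w₁ x else 0) * (if g y = ab.2 then w₂ y else 0) := by
    intro ab
    rw [Finset.sum_filter, Finset.sum_filter, Finset.sum_mul_sum]
  rw [Finset.sum_congr rfl (fun ab _ => hL ab), Finset.sum_comm]
  apply Finset.sum_congr rfl
  intro x _
  rw [Finset.sum_comm]
  apply Finset.sum_congr rfl
  intro y _
  exact sum_ite_pair (w₁ x) (w₂ y) (f x) (g y) n


lemma natCard_subtype_eq {α : Type*} (s : Finset α) (P : α → Prop) [DecidablePred P]
    (h : ∀ x, P x → x ∈ s) : Nat.card {x // P x} = (s.filter P).card := by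
  have e : {x // P x} ≃ {x // x ∈ s.filter P} :=
    Equiv.subtypeEquivRight (fun x => by
      rw [Finset.mem_filter]
      exact ⟨fun hp => ⟨h x hp, hp⟩, fun hp => hp.2⟩)
  rw [Nat.card_congr e, Nat.card_eq_finsetCard]

/-! ### Multiset counting and geometric series -/

lemma multiset_card_le_sum (ν : Multiset ℕ) (h : ∀ x ∈ ν, 0 < x) : Multiset.card ν ≤ ν.sum := by
  induction ν using Multiset.induction_on with
  | empty => simp
  | cons a s ih =>
    rw [Multiset.card_cons, Multiset.sum_cons]
    have ha := h a (Multiset.mem_cons_self a s)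
    have hs := ih (fun x hx => h x (Multiset.mem_cons_of_mem hx))
    omega

def MS (t : Finset ℕ) (m : ℕ) : Finset (Multiset ℕ) :=
  ((m • t.val).powerset.toFinset).filter (fun ν => ν.sum = m ∧ ∀ x ∈ ν, x ∈ t)

lemma mem_MS (t : Finset ℕ) (ht : ∀ x ∈ t, 0 < x) (m : ℕ) (ν : Multiset ℕ) :
    ν ∈ MS t m ↔ (ν.sum = m ∧ ∀ x ∈ ν, x ∈ t) := by
  rw [MS, Finset.mem_filter, Multiset.mem_toFinset, Multiset.mem_powerset]
  constructor
  · exact fun h => h.2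
  · rintro ⟨hsum, hmem⟩
    refine ⟨?_, hsum, hmem⟩
    rw [Multiset.le_iff_count]
    intro x
    rw [Multiset.count_nsmul]
    by_cases hx : x ∈ ν
    · have hxt : x ∈ t := hmem x hx
      have h1 : 1 ≤ Multiset.count x t.val := by
        rwa [Multiset.one_le_count_iff_mem]
      have h2 : Multiset.count x ν ≤ Multiset.card ν := Multiset.count_le_card x ν
      have h3 : Multiset.card ν ≤ ν.sum := multiset_card_le_sum ν (fun y hy => ht y (hmem y hy))
      have h4 : m * 1 ≤ m * Multiset.count x t.val := Nat.mul_le_mul_left m h1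
      omega
    · rw [Multiset.count_eq_zero_of_notMem hx]
      exact Nat.zero_le _

def geo (j : ℕ) : PowerSeries ℤ := PowerSeries.mk fun i => if j ∣ i then 1 else 0

lemma geo_inv (j : ℕ) (hj : 0 < j) : (1 - (PowerSeries.X:PowerSeries ℤ)^j) * geo j = 1 := by
  ext n
  rw [sub_mul, one_mul, map_sub, PowerSeries.coeff_X_pow_mul', geo, PowerSeries.coeff_mk,
    PowerSeries.coeff_one]
  by_cases h0 : n = 0
  · subst h0
    rw [if_pos rfl, if_pos (dvd_zero j), if_neg (by omega), sub_zero]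
  · rw [if_neg h0]
    by_cases hjn : j ≤ n
    · rw [if_pos hjn, PowerSeries.coeff_mk]
      have hiff : (j ∣ n) ↔ (j ∣ n - j) := by
        constructor
        · exact fun h => Nat.dvd_sub h dvd_rfl
        · intro h
          have := Nat.dvd_add h (dvd_refl j)
          rwa [Nat.sub_add_cancel hjn] at this
      by_cases hd : j ∣ n
      · rw [if_pos hd, if_pos (hiff.mp hd), sub_self]
      · rw [if_neg hd, if_neg (fun hc => hd (hiff.mpr hc)), sub_zero]
    · have hd : ¬ j ∣ n := fun hc => hjn (Nat.le_of_dvd (Nat.pos_of_ne_zero h0) hc)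
      rw [if_neg hjn, if_neg hd, sub_zero]

lemma coeff_geoprod (t : Finset ℕ) (m : ℕ) (ht : ∀ x ∈ t, 0 < x) :
    PowerSeries.coeff m (∏ j ∈ t, geo j) = ((MS t m).card : ℤ) := by
  classical
  revert ht
  induction t using Finset.induction_on generalizing m with
  | empty =>
    intro _
    rw [Finset.prod_empty, PowerSeries.coeff_one]
    by_cases hm : m = 0
    · subst hm
      rw [if_pos rfl]
      have : MS ∅ 0 = {0} := by
        ext ν
        rw [mem_MS ∅ (by simp) 0 ν, Finset.mem_singleton]
        constructor
        · rintro ⟨h1, h2⟩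
          exact Multiset.eq_zero_of_forall_notMem (fun x hx => by simpa using h2 x hx)
        · rintro rfl
          exact ⟨rfl, by simp⟩
      rw [this, Finset.card_singleton, Nat.cast_one]
    · rw [if_neg hm]
      have : MS ∅ m = ∅ := by
        ext ν
        rw [mem_MS ∅ (by simp) m ν]
        simp only [Finset.notMem_empty, iff_false]
        rintro ⟨h1, h2⟩
        have hz : ν = 0 := Multiset.eq_zero_of_forall_notMem (fun x hx => by simpa using h2 x hx)
        subst hz
        rw [Multiset.sum_zero] at h1
        exact hm h1.symm
      rw [this, Finset.card_empty, Nat.cast_zero]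
  | @insert a t ha ih =>
    intro ht
    have ha0 : 0 < a := ht a (Finset.mem_insert_self a t)
    have ht0 : ∀ x ∈ t, 0 < x := fun x hx => ht x (Finset.mem_insert_of_mem hx)
    rw [Finset.prod_insert ha, PowerSeries.coeff_mul]
    have hterm : ∀ ab ∈ Finset.HasAntidiagonal.antidiagonal m,
        PowerSeries.coeff ab.1 (geo a) * PowerSeries.coeff ab.2 (∏ j ∈ t, geo j)
          = if a ∣ ab.1 then ((MS t ab.2).card : ℤ) else 0 := by
      intro ab _
      rw [geo, PowerSeries.coeff_mk, ih ab.2 ht0, ite_mul, one_mul, zero_mul]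
    rw [Finset.sum_congr rfl hterm]
    have hcard : (MS (insert a t) m).card
        = ∑ ab ∈ Finset.HasAntidiagonal.antidiagonal m, if a ∣ ab.1 then (MS t ab.2).card else 0 := by
      have hrepr : MS (insert a t) m
          = ((Finset.HasAntidiagonal.antidiagonal m).filter (fun ab => a ∣ ab.1)).biUnion
              (fun ab => (MS t ab.2).image (fun ν => Multiset.replicate (ab.1 / a) a + ν)) := by
        ext ν
        rw [mem_MS _ ht m ν]
        simp only [Finset.mem_biUnion, Finset.mem_filter, Finset.HasAntidiagonal.mem_antidiagonal,
          Finset.mem_image]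
        constructor
        · rintro ⟨hsum, hmem⟩
          have hfil : ν.filter (· = a) = Multiset.replicate (ν.count a) a :=
            Multiset.filter_eq' ν a
          have hsplit : ν.filter (· = a) + ν.filter (fun x => ¬ x = a) = ν :=
            Multiset.filter_add_not _ ν
          have hsum1 : (ν.filter (· = a)).sum = ν.count a * a := by
            rw [hfil, Multiset.sum_replicate, smul_eq_mul]
          have h5 : (Multiset.filter (fun x => x = a) ν).sum
              + (Multiset.filter (fun x => ¬ x = a) ν).sum = ν.sum := by
            rw [← Multiset.sum_add, hsplit]
          have hle : Multiset.count a ν * a + (Multiset.filter (fun x => ¬ x = a) ν).sum = m := by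
            omega
          refine ⟨(Multiset.count a ν * a, m - Multiset.count a ν * a), ⟨by omega, dvd_mul_left a _⟩,
            ν.filter (fun x => ¬ x = a), ?_, ?_⟩
          · rw [mem_MS t ht0]
            constructor
            · omega
            · intro x hx
              rw [Multiset.mem_filter] at hx
              rcases Finset.mem_insert.mp (hmem x hx.1) with h | h
              · exact absurd h hx.2
              · exact h
          · rw [Nat.mul_div_cancel _ ha0, ← hfil]
            exact hsplit
        · rintro ⟨ab, ⟨habsum, hdvd⟩, ν', hν', rfl⟩
          rw [mem_MS t ht0] at hν'
          constructor
          · rw [Multiset.sum_add, Multiset.sum_replicate, smul_eq_mul,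
              Nat.div_mul_cancel hdvd, hν'.1]
            omega
          · intro x hx
            rcases Multiset.mem_add.mp hx with h | h
            · rw [Multiset.eq_of_mem_replicate h]
              exact Finset.mem_insert_self a t
            · exact Finset.mem_insert_of_mem (hν'.2 x h)
      rw [hrepr, Finset.card_biUnion, Finset.sum_filter]
      · apply Finset.sum_congr rfl
        intro ab _
        by_cases hd : a ∣ ab.1
        · rw [if_pos hd, if_pos hd,
            Finset.card_image_of_injective _ (fun x y h => by rwa [add_right_inj] at h)]
        · rw [if_neg hd, if_neg hd]
      · intro ab hab ab' hab' hne
        rw [Finset.mem_coe, Finset.mem_filter, Finset.HasAntidiagonal.mem_antidiagonal] at hab hab'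
        rw [Function.onFun, Finset.disjoint_left]
        intro ν hν hν'
        rw [Finset.mem_image] at hν hν'
        obtain ⟨ν₁, hν₁, he1⟩ := hν
        obtain ⟨ν₂, hν₂, he2⟩ := hν'
        rw [mem_MS t ht0] at hν₁ hν₂
        have hna : ν₁.count a = 0 := by
          rw [Multiset.count_eq_zero]
          exact fun hc => ha (hν₁.2 a hc)
        have hna' : ν₂.count a = 0 := by
          rw [Multiset.count_eq_zero]
          exact fun hc => ha (hν₂.2 a hc)
        have hc1 : ν.count a = ab.1 / a := by
          rw [← he1, Multiset.count_add, Multiset.count_replicate, if_pos rfl, hna, add_zero]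
        have hc2 : ν.count a = ab'.1 / a := by
          rw [← he2, Multiset.count_add, Multiset.count_replicate, if_pos rfl, hna', add_zero]
        apply hne
        have h1 : ab.1 = ab'.1 := by
          rw [← Nat.div_mul_cancel hab.2, ← Nat.div_mul_cancel hab'.2, ← hc1, ← hc2]
        exact Prod.ext_iff.mpr ⟨h1, by omega⟩
    rw [hcard]
    push_cast
    rfl

/-! ### Assembly -/

def Fc (c : ℤ) (t : Finset ℕ) : Polynomial ℤ := ∏ j ∈ t, (1 + C c * X^j)

def oddsF (n : ℕ) : Finset ℕ := (range n).image (fun j => 2*j+1)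

def allsF (n : ℕ) : Finset ℕ := (range (2*n)).image (fun j => j+1)

lemma mem_oddsF (n x : ℕ) : x ∈ oddsF n ↔ (x % 2 = 1 ∧ x < 2*n) := by
  simp only [oddsF, Finset.mem_image, Finset.mem_range]
  constructor
  · rintro ⟨j, hj, rfl⟩; omega
  · intro h; exact ⟨(x-1)/2, by omega, by omega⟩

lemma mem_allsF (n x : ℕ) : x ∈ allsF n ↔ (1 ≤ x ∧ x ≤ 2*n) := by
  simp only [allsF, Finset.mem_image, Finset.mem_range]
  constructor
  · rintro ⟨j, hj, rfl⟩; omega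
  · intro h; exact ⟨x-1, by omega, by omega⟩

lemma oddsF_pos (n : ℕ) : ∀ x ∈ oddsF n, 0 < x := by
  intro x hx; rw [mem_oddsF] at hx; omega

lemma oddsF_not_zero (n : ℕ) : 0 ∉ oddsF n := by
  intro h; rw [mem_oddsF] at h; omega

lemma allsF_not_zero (n : ℕ) : 0 ∉ allsF n := by
  intro h; rw [mem_allsF] at h; omega

def PnF (n : ℕ) : Finset (Finset ℕ × Finset ℕ) :=
  (((oddsF n).powerset ×ˢ (allsF n).powerset)).filter
    (fun p => (∑ x ∈ p.1, x) + (∑ x ∈ p.2, x) = n)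

/-- step A2 : `E - T = 2·E₃`. -/
lemma E_sub_T (n : ℕ) :
    ((PnF n).card : ℤ) - (∑ p ∈ PnF n, (-1:ℤ)^(p.1.card + p.2.card))
      = 2 * (((PnF n).filter (fun p => Odd (p.1.card + p.2.card))).card : ℤ) := by
  classical
  rw [Finset.card_eq_sum_ones (PnF n)]
  push_cast
  rw [← Finset.sum_sub_distrib]
  have h : ∀ p ∈ PnF n, ((1:ℤ) - (-1:ℤ)^(p.1.card+p.2.card))
      = if Odd (p.1.card+p.2.card) then 2 else 0 := by
    intro p _
    rcases Nat.even_or_odd (p.1.card+p.2.card) with h | h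
    · rw [if_neg (Nat.not_odd_iff_even.mpr h), h.neg_one_pow]; ring
    · rw [if_pos h, h.neg_one_pow]; ring
  rw [Finset.sum_congr rfl h, ← Finset.sum_filter, Finset.sum_const, nsmul_eq_mul]
  ring

/-- step A3 : coefficient of the double product is the weighted sum over pairs. -/
lemma coeff_FF (n : ℕ) (c : ℤ) :
    (Fc c (oddsF n) * Fc c (allsF n)).coeff n
      = ∑ p ∈ PnF n, c^p.1.card * c^p.2.card := by
  classical
  rw [Fc, Fc, Polynomial.coeff_mul]
  have h : ∀ ab ∈ Finset.HasAntidiagonal.antidiagonal n,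
      (∏ j ∈ oddsF n, (1 + C c * X^j)).coeff ab.1 * (∏ j ∈ allsF n, (1 + C c * X^j)).coeff ab.2
        = cnt (oddsF n) c ab.1 * cnt (allsF n) c ab.2 := by
    intro ab _
    rw [coeff_cnt _ c _ (oddsF_not_zero n), coeff_cnt _ c _ (allsF_not_zero n)]
  rw [Finset.sum_congr rfl h]
  simp only [cnt]
  exact grade_conv ((oddsF n).powerset) ((allsF n).powerset)
    (fun A => ∑ x ∈ A, x) (fun A => ∑ x ∈ A, x)
    (fun A => c^A.card) (fun A => c^A.card) n

lemma prod_range_double (n : ℕ) (f : ℕ → Polynomial ℤ) :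
    ∏ j ∈ range (2*n), f j = (∏ j ∈ range n, f (2*j)) * ∏ j ∈ range n, f (2*j+1) := by
  induction n with
  | zero => simp
  | succ n ih =>
    rw [show 2*(n+1) = (2*n+1)+1 by ring, prod_range_succ, prod_range_succ, ih,
      prod_range_succ, prod_range_succ]
    ring

lemma Fc_neg_odds (n : ℕ) : Fc (-1) (oddsF n) = ∏ j ∈ range n, (1 - X^(2*j+1)) := by
  rw [Fc, oddsF, Finset.prod_image (fun a _ b _ h => by omega)]
  apply Finset.prod_congr rfl
  intro j _
  rw [map_neg, map_one]
  ring

lemma Fc_neg_alls (n : ℕ) : Fc (-1) (allsF n) = ∏ j ∈ range (2*n), (1 - X^(j+1)) := by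
  rw [Fc, allsF, Finset.prod_image (fun a _ b _ h => by omega)]
  apply Finset.prod_congr rfl
  intro j _
  rw [map_neg, map_one]
  ring

lemma Fc_one_alls (n : ℕ) : Fc 1 (allsF n) = ∏ j ∈ range (2*n), (1 + X^(j+1)) := by
  rw [Fc, allsF, Finset.prod_image (fun a _ b _ h => by omega)]
  apply Finset.prod_congr rfl
  intro j _
  rw [map_one]
  ring

/-- step A4 : the signed coefficient is `θ(n)`. -/
lemma T_theta (n : ℕ) (hn : 1 ≤ n) :
    (Fc (-1) (oddsF n) * Fc (-1) (allsF n)).coeff n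
      = if IsSquare n then 2 * (-1:ℤ)^n else 0 := by
  have hsplit : ∏ j ∈ range (2*n), (1 - (X:Polynomial ℤ)^(j+1))
      = (∏ j ∈ range n, (1 - X^(2*j+1))) * ∏ j ∈ range n, (1 - X^(2*j+2)) := by
    rw [prod_range_double n (fun j => 1 - X^(j+1))]
  rw [Fc_neg_odds, Fc_neg_alls, hsplit, ← mul_assoc, ← sq]
  exact main1 n n hn le_rfl

/-! ### The overpartition side -/

lemma prod_one_sub_X_ne_zero (s : Finset ℕ) (d : ℕ → ℕ) (hd : ∀ j ∈ s, 0 < d j) :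
    (∏ j ∈ s, (1 - (X:Polynomial ℤ)^(d j))) ≠ 0 := by
  intro h
  have h0 : (∏ j ∈ s, (1 - (X:Polynomial ℤ)^(d j))).eval 0 = 1 := by
    rw [Polynomial.eval_prod]
    apply Finset.prod_eq_one
    intro j hj
    rw [Polynomial.eval_sub, Polynomial.eval_one, Polynomial.eval_pow, Polynomial.eval_X,
      zero_pow (by have := hd j hj; omega), sub_zero]
  rw [h] at h0
  simp at h0

lemma coe_prodP (s : Finset ℕ) (f : ℕ → Polynomial ℤ) :
    ((∏ j ∈ s, f j : Polynomial ℤ) : PowerSeries ℤ)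
      = ∏ j ∈ s, ((f j : Polynomial ℤ) : PowerSeries ℤ) := by
  rw [← Polynomial.coeToPowerSeries.ringHom_apply, map_prod]
  apply Finset.prod_congr rfl
  intro j _
  rw [Polynomial.coeToPowerSeries.ringHom_apply]

lemma coe_Fc_neg_odds (n : ℕ) : ((Fc (-1) (oddsF n) : Polynomial ℤ) : PowerSeries ℤ)
    = ∏ j ∈ oddsF n, (1 - (PowerSeries.X : PowerSeries ℤ)^j) := by
  rw [Fc, coe_prodP]
  apply Finset.prod_congr rfl
  intro j _
  simp only [Polynomial.coeToPowerSeries.ringHom_apply, Polynomial.coe_add, Polynomial.coe_one,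
    Polynomial.coe_mul, Polynomial.coe_C, Polynomial.coe_pow, Polynomial.coe_X]
  rw [map_neg, map_one]
  ring

lemma geo_prod_inv (n : ℕ) :
    ((Fc (-1) (oddsF n) : Polynomial ℤ) : PowerSeries ℤ) * (∏ j ∈ oddsF n, geo j) = 1 := by
  rw [coe_Fc_neg_odds, ← Finset.prod_mul_distrib,
    Finset.prod_congr rfl (fun j hj => geo_inv j (oddsF_pos n j hj))]
  exact Finset.prod_const_one

lemma alls_cancel (n : ℕ) : Fc 1 (allsF n) * Fc (-1) (oddsF n)
    = ∏ j ∈ Ico n (2*n), (1 - (X:Polynomial ℤ)^(2*j+2)) := by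
  have e4 : Fc 1 (allsF n) * (∏ j ∈ range (2*n), (1 - (X:Polynomial ℤ)^(j+1)))
      = ∏ j ∈ range (2*n), (1 - X^(2*j+2)) := by
    rw [Fc_one_alls, ← Finset.prod_mul_distrib]
    apply Finset.prod_congr rfl
    intro j _
    ring
  have e5 : (∏ j ∈ range (2*n), (1 - (X:Polynomial ℤ)^(j+1)))
      = Fc (-1) (oddsF n) * ∏ j ∈ range n, (1 - X^(2*j+2)) := by
    rw [Fc_neg_odds]
    exact prod_range_double n (fun j => 1 - X^(j+1))
  have e6 : (∏ j ∈ range (2*n), (1 - (X:Polynomial ℤ)^(2*j+2)))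
      = (∏ j ∈ range n, (1 - X^(2*j+2))) * ∏ j ∈ Ico n (2*n), (1 - X^(2*j+2)) := by
    rw [range_eq_Ico,
      ← Finset.prod_Ico_consecutive (fun j => 1 - (X:Polynomial ℤ)^(2*j+2)) (Nat.zero_le n)
        (by omega), range_eq_Ico]
  apply mul_right_cancel₀ (prod_one_sub_X_ne_zero (range n) (fun j => 2*j+2)
    (fun j _ => Nat.succ_pos _))
  calc Fc 1 (allsF n) * Fc (-1) (oddsF n) * ∏ j ∈ range n, (1 - (X:Polynomial ℤ)^(2*j+2))
      = Fc 1 (allsF n) * (Fc (-1) (oddsF n) * ∏ j ∈ range n, (1 - X^(2*j+2))) := by ring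
    _ = Fc 1 (allsF n) * (∏ j ∈ range (2*n), (1 - X^(j+1))) := by rw [← e5]
    _ = ∏ j ∈ range (2*n), (1 - X^(2*j+2)) := e4
    _ = (∏ j ∈ Ico n (2*n), (1 - X^(2*j+2))) * ∏ j ∈ range n, (1 - X^(2*j+2)) := by
        rw [e6]; ring

lemma PO_shift (n : ℕ) (hn : 1 ≤ n) :
    PowerSeries.coeff n ((Fc 1 (oddsF n) : PowerSeries ℤ) * (Fc 1 (allsF n) : PowerSeries ℤ))
      = PowerSeries.coeff n ((Fc 1 (oddsF n) : PowerSeries ℤ) * ∏ j ∈ oddsF n, geo j) := by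
  set F1 : PowerSeries ℤ := ((Fc 1 (oddsF n) : Polynomial ℤ) : PowerSeries ℤ) with hF1
  set G : PowerSeries ℤ := ∏ j ∈ oddsF n, geo j with hG
  set W : Polynomial ℤ := ∏ j ∈ Ico n (2*n), (1 - (X:Polynomial ℤ)^(2*j+2)) with hW
  have key : F1 * (Fc 1 (allsF n) : PowerSeries ℤ) = F1 * G * (W : PowerSeries ℤ) := by
    calc F1 * (Fc 1 (allsF n) : PowerSeries ℤ)
        = F1 * (Fc 1 (allsF n) : PowerSeries ℤ)
            * (((Fc (-1) (oddsF n) : Polynomial ℤ) : PowerSeries ℤ) * G) := by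
          rw [geo_prod_inv, mul_one]
      _ = F1 * G * ((Fc 1 (allsF n) : PowerSeries ℤ)
            * ((Fc (-1) (oddsF n) : Polynomial ℤ) : PowerSeries ℤ)) := by ring
      _ = F1 * G * (W : PowerSeries ℤ) := by
          rw [← Polynomial.coe_mul, alls_cancel]
  rw [key]
  have hp : (X:Polynomial ℤ)^(n+1) ∣ W - 1 := by
    rw [hW]
    exact X_pow_dvd_prod_sub_one _ _ _ (fun j hj => by rw [Finset.mem_Ico] at hj; omega)
  obtain ⟨g, hg⟩ := hp
  have hcoe : (W : PowerSeries ℤ) = 1 + PowerSeries.X^(n+1) * (g : PowerSeries ℤ) := by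
    have h2 : W = 1 + X^(n+1) * g := by rw [← hg]; ring
    rw [h2]
    push_cast [Polynomial.coe_add, Polynomial.coe_one, Polynomial.coe_mul, Polynomial.coe_pow,
      Polynomial.coe_X]
    rfl
  rw [hcoe]
  have expand : F1 * G * (1 + PowerSeries.X^(n+1) * (g : PowerSeries ℤ))
      = F1 * G + PowerSeries.X^(n+1) * (F1 * G * (g : PowerSeries ℤ)) := by ring
  rw [expand, map_add, PowerSeries.coeff_X_pow_mul', if_neg (by omega), add_zero]

def sbv (n : ℕ) : Finset (Multiset ℕ) :=
  ((n • (oddsF n).val).powerset.toFinset).filter (fun ν => ∀ x ∈ ν, x ∈ oddsF n)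

lemma mem_sbv (n : ℕ) (ν : Multiset ℕ) (hsum : ν.sum ≤ n) (hmem : ∀ x ∈ ν, x ∈ oddsF n) :
    ν ∈ sbv n := by
  rw [sbv, Finset.mem_filter, Multiset.mem_toFinset, Multiset.mem_powerset]
  refine ⟨?_, hmem⟩
  rw [Multiset.le_iff_count]
  intro x
  rw [Multiset.count_nsmul]
  by_cases hx : x ∈ ν
  · have h1 : 1 ≤ Multiset.count x (oddsF n).val := by
      rw [Multiset.one_le_count_iff_mem]
      exact hmem x hx
    have h2 : Multiset.count x ν ≤ Multiset.card ν := Multiset.count_le_card x ν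
    have h3 : Multiset.card ν ≤ ν.sum :=
      multiset_card_le_sum ν (fun y hy => oddsF_pos n y (hmem y hy))
    have h4 : n * 1 ≤ n * Multiset.count x (oddsF n).val := Nat.mul_le_mul_left n h1
    omega
  · rw [Multiset.count_eq_zero_of_notMem hx]
    exact Nat.zero_le _

lemma sbv_filter (n b : ℕ) (hb : b ≤ n) :
    (sbv n).filter (fun ν => ν.sum = b) = MS (oddsF n) b := by
  ext ν
  rw [Finset.mem_filter, mem_MS (oddsF n) (oddsF_pos n) b ν, sbv, Finset.mem_filter]
  constructor
  · rintro ⟨⟨_, hmem⟩, hsum⟩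
    exact ⟨hsum, hmem⟩
  · rintro ⟨hsum, hmem⟩
    have := mem_sbv n ν (by omega) hmem
    rw [sbv, Finset.mem_filter] at this
    exact ⟨this, hsum⟩

def QnF (n : ℕ) : Finset (Finset ℕ × Multiset ℕ) :=
  (((oddsF n).powerset ×ˢ sbv n)).filter (fun q => (∑ x ∈ q.1, x) + q.2.sum = n)

lemma Qn_coeff (n : ℕ) : ((QnF n).card : ℤ)
    = PowerSeries.coeff n ((Fc 1 (oddsF n) : PowerSeries ℤ) * ∏ j ∈ oddsF n, geo j) := by
  classical
  rw [PowerSeries.coeff_mul]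
  have h : ∀ ab ∈ Finset.HasAntidiagonal.antidiagonal n,
      PowerSeries.coeff ab.1 (Fc 1 (oddsF n) : PowerSeries ℤ)
        * PowerSeries.coeff ab.2 (∏ j ∈ oddsF n, geo j)
      = (∑ A ∈ (oddsF n).powerset.filter (fun A => ∑ x ∈ A, x = ab.1), (1:ℤ)^A.card)
        * (∑ ν ∈ (sbv n).filter (fun ν => ν.sum = ab.2), (1:ℤ)) := by
    intro ab hab
    rw [Finset.HasAntidiagonal.mem_antidiagonal] at hab
    rw [Polynomial.coeff_coe, Fc, coeff_cnt _ 1 _ (oddsF_not_zero n),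
      coeff_geoprod _ _ (oddsF_pos n), sbv_filter n ab.2 (by omega), cnt]
    congr 1
    rw [Finset.sum_const, nsmul_eq_mul, mul_one]
  rw [Finset.sum_congr rfl h,
    grade_conv ((oddsF n).powerset) (sbv n) (fun A => ∑ x ∈ A, x) (fun ν => ν.sum)
      (fun A => (1:ℤ)^A.card) (fun ν => (1:ℤ)) n]
  rw [QnF, Finset.card_eq_sum_ones]
  push_cast
  apply Finset.sum_congr rfl
  intro p _
  rw [one_pow, mul_one]

end

end TwoColorAux

open TwoColorAux Polynomial Finset

/-- For `n ≥ 1`, `E₃(n) = p̄ₒ(n)/2 − (−1)ⁿ` if `n` is a perfect square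
and `E₃(n) = p̄ₒ(n)/2` otherwise; equivalently, as integers,
`2·E₃(n) = p̄ₒ(n) − 2·(−1)ⁿ` if `n` is a square and `2·E₃(n) = p̄ₒ(n)` otherwise.
Here `E₃(n)` counts two-color partitions `(g, b)` of `n` (with `g` a finite set of
distinct odd positive integers and `b` a finite set of distinct positive integers)
whose total number of parts `|g| + |b|` is odd, and `p̄ₒ(n)` counts
overpartitions of `n` into odd parts. -/
theorem two_color_odd_total_number_of_parts (n : ℕ) (hn : 0 < n) :
    2 * (Nat.card {p : Finset ℕ × Finset ℕ //
      ((∀ x ∈ p.1, Odd x ∧ 0 < x) ∧ (∀ x ∈ p.2, 0 < x) ∧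
        (∑ x ∈ p.1, x) + (∑ x ∈ p.2, x) = n) ∧
      Odd (p.1.card + p.2.card)} : ℤ) =
    (if IsSquare n then
      (Nat.card {q : Finset ℕ × Multiset ℕ //
        (∀ x ∈ q.1, Odd x ∧ 0 < x) ∧ (∀ x ∈ q.2, Odd x ∧ 0 < x) ∧
        (∑ x ∈ q.1, x) + q.2.sum = n} : ℤ) - 2 * (-1) ^ n
    else
      (Nat.card {q : Finset ℕ × Multiset ℕ //
        (∀ x ∈ q.1, Odd x ∧ 0 < x) ∧ (∀ x ∈ q.2, Odd x ∧ 0 < x) ∧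
        (∑ x ∈ q.1, x) + q.2.sum = n} : ℤ)) := by
  classical
  have hn1 : 1 ≤ n := hn
  -- bridge for the two-colour side
  have hmem1 : ∀ p : Finset ℕ × Finset ℕ,
      (((∀ x ∈ p.1, Odd x ∧ 0 < x) ∧ (∀ x ∈ p.2, 0 < x) ∧
        (∑ x ∈ p.1, x) + (∑ x ∈ p.2, x) = n) ∧ Odd (p.1.card + p.2.card)) →
      p ∈ (oddsF n).powerset ×ˢ (allsF n).powerset := by
    rintro p ⟨⟨hodd, hpos, hsum⟩, -⟩
    rw [Finset.mem_product, Finset.mem_powerset, Finset.mem_powerset]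
    constructor
    · intro x hx
      rw [mem_oddsF]
      obtain ⟨h1, h2⟩ := hodd x hx
      have hle : x ≤ ∑ y ∈ p.1, y :=
        Finset.single_le_sum (f := fun y => y) (fun i _ => Nat.zero_le i) hx
      rw [Nat.odd_iff] at h1
      omega
    · intro x hx
      rw [mem_allsF]
      have h2 := hpos x hx
      have hle : x ≤ ∑ y ∈ p.2, y :=
        Finset.single_le_sum (f := fun y => y) (fun i _ => Nat.zero_le i) hx
      omega
  have hA1 : Nat.card {p : Finset ℕ × Finset ℕ //
      ((∀ x ∈ p.1, Odd x ∧ 0 < x) ∧ (∀ x ∈ p.2, 0 < x) ∧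
        (∑ x ∈ p.1, x) + (∑ x ∈ p.2, x) = n) ∧
      Odd (p.1.card + p.2.card)}
      = ((PnF n).filter (fun p => Odd (p.1.card + p.2.card))).card := by
    rw [natCard_subtype_eq ((oddsF n).powerset ×ˢ (allsF n).powerset) _ hmem1]
    congr 1
    rw [PnF, Finset.filter_filter]
    apply Finset.filter_congr
    intro p hp
    rw [Finset.mem_product, Finset.mem_powerset, Finset.mem_powerset] at hp
    constructor
    · rintro ⟨⟨-, -, hs⟩, ho⟩
      exact ⟨hs, ho⟩
    · rintro ⟨hs, ho⟩
      refine ⟨⟨?_, ?_, hs⟩, ho⟩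
      · intro x hx
        have hx2 := hp.1 hx
        rw [mem_oddsF] at hx2
        exact ⟨Nat.odd_iff.mpr hx2.1, by omega⟩
      · intro x hx
        have hx2 := hp.2 hx
        rw [mem_allsF] at hx2
        omega
  -- bridge for the overpartition side
  have hmem2 : ∀ q : Finset ℕ × Multiset ℕ,
      ((∀ x ∈ q.1, Odd x ∧ 0 < x) ∧ (∀ x ∈ q.2, Odd x ∧ 0 < x) ∧
        (∑ x ∈ q.1, x) + q.2.sum = n) →
      q ∈ (oddsF n).powerset ×ˢ sbv n := by
    rintro q ⟨hodd, hodd2, hsum⟩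
    rw [Finset.mem_product, Finset.mem_powerset]
    constructor
    · intro x hx
      rw [mem_oddsF]
      obtain ⟨h1, h2⟩ := hodd x hx
      have hle : x ≤ ∑ y ∈ q.1, y :=
        Finset.single_le_sum (f := fun y => y) (fun i _ => Nat.zero_le i) hx
      rw [Nat.odd_iff] at h1
      omega
    · apply mem_sbv n q.2 (by omega)
      intro x hx
      rw [mem_oddsF]
      obtain ⟨h1, h2⟩ := hodd2 x hx
      have hle : x ≤ q.2.sum :=
        Multiset.single_le_sum (fun y _ => Nat.zero_le y) x hx
      rw [Nat.odd_iff] at h1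
      omega
  have hB1 : Nat.card {q : Finset ℕ × Multiset ℕ //
      (∀ x ∈ q.1, Odd x ∧ 0 < x) ∧ (∀ x ∈ q.2, Odd x ∧ 0 < x) ∧
        (∑ x ∈ q.1, x) + q.2.sum = n}
      = (QnF n).card := by
    rw [natCard_subtype_eq ((oddsF n).powerset ×ˢ sbv n) _ hmem2]
    congr 1
    rw [QnF]
    apply Finset.filter_congr
    intro q hq
    rw [Finset.mem_product, Finset.mem_powerset] at hq
    constructor
    · rintro ⟨-, -, hs⟩
      exact hs
    · intro hs
      refine ⟨?_, ?_, hs⟩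
      · intro x hx
        have hx2 := hq.1 hx
        rw [mem_oddsF] at hx2
        exact ⟨Nat.odd_iff.mpr hx2.1, by omega⟩
      · intro x hx
        have hx2 := hq.2
        rw [sbv, Finset.mem_filter] at hx2
        have hx3 := hx2.2 x hx
        rw [mem_oddsF] at hx3
        exact ⟨Nat.odd_iff.mpr hx3.1, by omega⟩
  -- the signed sum is θ(n)
  have hT : (∑ p ∈ PnF n, (-1:ℤ)^(p.1.card + p.2.card))
      = if IsSquare n then 2 * (-1:ℤ)^n else 0 := by
    rw [← T_theta n hn1, coeff_FF n (-1)]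
    apply Finset.sum_congr rfl
    intro p _
    rw [pow_add]
  -- E = overpartition count
  have hE : ((PnF n).card : ℤ) = ((QnF n).card : ℤ) := by
    have e1 : ((PnF n).card : ℤ) = (Fc 1 (oddsF n) * Fc 1 (allsF n)).coeff n := by
      rw [coeff_FF n 1]
      simp only [one_pow, mul_one]
      rw [Finset.card_eq_sum_ones]
      push_cast
      rfl
    rw [e1, Qn_coeff n, ← PO_shift n hn1, ← Polynomial.coe_mul, Polynomial.coeff_coe]
  -- assemble
  rw [hA1, hB1]
  have key := E_sub_T n
  by_cases hsq : IsSquare n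
  · rw [if_pos hsq]
    rw [if_pos hsq] at hT
    linarith [key, hT, hE]
  · rw [if_neg hsq]
    rw [if_neg hsq] at hT
    linarith [key, hT, hE]
end

section
/- For every positive integer n, as integers, E₀(n) − E₁(n) equals 2 if n is a perfect square and equals 0 otherwise, where E₀(n) (respectively E₁(n)) is the number of two-color partitions of n counted by E(n) whose number of even parts is even (respectively odd). -/
open Polynomial Finset

noncomputable def M (a : ℤ) : Polynomial ℤ := X ^ a.toNat

lemma M_mul {a b : ℤ} (ha : 0 ≤ a) (hb : 0 ≤ b) : M a * M b = M (a + b) := by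
  rw [M, M, M, ← pow_add]
  congr 1
  omega

lemma M_zero : M 0 = 1 := by simp [M]

noncomputable def gb : ℕ → ℤ → Polynomial ℤ
  | 0, k => if k = 0 then 1 else 0
  | (n+1), k => gb n k + M (2*((n:ℤ)+1-k)) * gb n (k-1)

lemma gb_succ (n : ℕ) (k : ℤ) :
    gb (n+1) k = gb n k + M (2*((n:ℤ)+1-k)) * gb n (k-1) := rfl

lemma gb_neg : ∀ (n : ℕ) (k : ℤ), k < 0 → gb n k = 0 := by
  intro n
  induction n with
  | zero => intro k hk; exact if_neg (by omega)
  | succ n ih => intro k hk; simp [gb_succ, ih k hk, ih (k-1) (by omega)]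

lemma gb_gt : ∀ (n : ℕ) (k : ℤ), (n:ℤ) < k → gb n k = 0 := by
  intro n
  induction n with
  | zero => intro k hk; exact if_neg (by exact_mod_cast (by omega : ¬ k = 0))
  | succ n ih =>
    intro k hk
    push_cast at hk
    simp [gb_succ, ih k (by omega), ih (k-1) (by omega)]

lemma gb_zero : ∀ (n : ℕ), gb n 0 = 1 := by
  intro n
  induction n with
  | zero => rfl
  | succ n ih => simp [gb_succ, ih, gb_neg n (-1) (by omega)]

lemma gb_self : ∀ (n : ℕ), gb n n = 1 := by
  intro n
  induction n with
  | zero => rfl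
  | succ n ih =>
    rw [gb_succ]
    push_cast
    rw [gb_gt n ((n:ℤ)+1) (by omega)]
    rw [show (n:ℤ) + 1 - 1 = n by ring, ih,
      show 2*((n:ℤ)+1-(n+1)) = 0 by ring, M_zero]
    ring

lemma gb_pascalB : ∀ (n : ℕ) (k : ℤ), gb (n+1) k = M (2*k) * gb n k + gb n (k-1) := by
  intro n
  induction n with
  | zero =>
    intro k
    by_cases h0 : k = 0
    · subst h0; simp [gb_succ, gb_zero, gb_neg 0 (-1) (by omega), M_zero]
    · by_cases h1 : k = 1
      · subst h1
        rw [gb_succ]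
        show (if (1:ℤ) = 0 then 1 else 0) + M (2*(0+1-1)) * (if (1:ℤ)-1 = 0 then 1 else 0)
          = M 2 * (if (1:ℤ) = 0 then 1 else 0) + (if (1:ℤ)-1 = 0 then 1 else 0)
        norm_num [M_zero]
      · rw [gb_succ]
        show (if k = 0 then 1 else 0) + M (2*(0+1-k)) * (if k-1 = 0 then 1 else 0)
          = M (2*k) * (if k = 0 then 1 else 0) + (if k-1 = 0 then 1 else 0)
        rw [if_neg h0, if_neg (by omega : ¬ k - 1 = 0)]
        ring
  | succ n ih =>
    intro k
    conv_lhs => rw [gb_succ (n+1) k, ih k, ih (k-1)]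
    conv_rhs => rw [gb_succ n k, gb_succ n (k-1)]
    -- goal: M(2k) gb n k + gb n (k-1) + M(2(n+2-k)) (M(2(k-1)) gb n (k-1) + gb n (k-2))
    --     = M(2k) (gb n k + M(2(n+1-k)) gb n (k-1)) + (gb n (k-1) + M(2(n+2-k)) gb n (k-2))
    by_cases hg : gb n (k-1) = 0
    · rw [hg]
      push_cast
      ring_nf
    · have hk1 : 0 ≤ k - 1 := by
        by_contra h; exact hg (gb_neg n (k-1) (by omega))
      have hk2 : k - 1 ≤ (n:ℤ) := by
        by_contra h; exact hg (gb_gt n (k-1) (by omega))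
      push_cast
      have e1 : M (2*((n:ℤ)+1+1-k)) * M (2*(k-1)) = M (2*(n:ℤ)+2) := by
        rw [M_mul (by omega) (by omega)]; congr 1; ring
      have e2 : M (2*k) * M (2*((n:ℤ)+1-k)) = M (2*(n:ℤ)+2) := by
        rw [M_mul (by omega) (by omega)]; congr 1; ring
      calc M (2*k) * gb n k + gb n (k-1) +
            M (2*((n:ℤ)+1+1-k)) * (M (2*(k-1)) * gb n (k-1) + gb n (k-1-1))
          = M (2*k) * gb n k + gb n (k-1) +
            (M (2*((n:ℤ)+1+1-k)) * M (2*(k-1))) * gb n (k-1) +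
            M (2*((n:ℤ)+1+1-k)) * gb n (k-1-1) := by ring
        _ = M (2*k) * gb n k + gb n (k-1) +
            (M (2*k) * M (2*((n:ℤ)+1-k))) * gb n (k-1) +
            M (2*((n:ℤ)+1+1-k)) * gb n (k-1-1) := by rw [e1, e2]
        _ = _ := by ring_nf

noncomputable def Gp (m : ℕ) : Polynomial ℤ := ∏ k ∈ range m, (1 + X^(2*k+1))

noncomputable def Sp (m : ℕ) : Polynomial ℤ :=
  ∑ j ∈ Icc (-(m:ℤ)) (m:ℤ), gb (2*m) ((m:ℤ)+j) * M (j^2)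

lemma sum_Icc_shift (a b c : ℤ) (f : ℤ → Polynomial ℤ) :
    ∑ j ∈ Icc a b, f j = ∑ i ∈ Icc (a-c) (b-c), f (i+c) := by
  have h : Icc a b = (Icc (a-c) (b-c)).map (addRightEmbedding c) := by
    rw [Finset.map_add_right_Icc]; congr 1 <;> ring
  rw [h, Finset.sum_map]
  simp [addRightEmbedding]

lemma key (m : ℕ) (j : ℤ) (h1 : -(m:ℤ)-1 ≤ j) (h2 : j ≤ (m:ℤ)+1) :
    gb (2*m+2) ((m:ℤ)+1+j) * M (j^2) =
      gb (2*m) ((m:ℤ)+j) * M (j^2) + gb (2*m) ((m:ℤ)+j) * M (j^2+4*(m:ℤ)+2)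
      + gb (2*m) ((m:ℤ)+j-1) * M (j^2+2*((m:ℤ)+1-j))
      + gb (2*m) ((m:ℤ)+j+1) * M (j^2+2*((m:ℤ)+1+j)) := by
  have e0 : gb (2*m+2) ((m:ℤ)+1+j)
      = gb (2*m+1) ((m:ℤ)+1+j) + M (2*((m:ℤ)+1-j)) * gb (2*m+1) ((m:ℤ)+j) := by
    rw [show 2*m+2 = (2*m+1)+1 from rfl, gb_succ]
    push_cast
    rw [show 2*((2*(m:ℤ))+1+1-((m:ℤ)+1+j)) = 2*((m:ℤ)+1-j) by ring,
      show (m:ℤ)+1+j-1 = (m:ℤ)+j by ring]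
  have e1 : gb (2*m+1) ((m:ℤ)+1+j)
      = M (2*((m:ℤ)+1+j)) * gb (2*m) ((m:ℤ)+j+1) + gb (2*m) ((m:ℤ)+j) := by
    rw [gb_pascalB]
    rw [show (m:ℤ)+1+j-1 = (m:ℤ)+j by ring, show (m:ℤ)+1+j = (m:ℤ)+j+1 by ring]
  have e2 : gb (2*m+1) ((m:ℤ)+j)
      = M (2*((m:ℤ)+j)) * gb (2*m) ((m:ℤ)+j) + gb (2*m) ((m:ℤ)+j-1) := by
    rw [gb_pascalB]
  rw [e0, e1, e2]
  by_cases hg : gb (2*m) ((m:ℤ)+j) = 0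
  · rw [hg]
    have c1 : M (2*((m:ℤ)+1+j)) * M (j^2) = M (j^2+2*((m:ℤ)+1+j)) := by
      rw [M_mul (by omega) (by positivity)]; congr 1; ring
    have c2 : M (2*((m:ℤ)+1-j)) * M (j^2) = M (j^2+2*((m:ℤ)+1-j)) := by
      rw [M_mul (by omega) (by positivity)]; congr 1; ring
    calc (M (2*((m:ℤ)+1+j)) * gb (2*m) ((m:ℤ)+j+1) + 0
          + M (2*((m:ℤ)+1-j)) * (M (2*((m:ℤ)+j)) * 0 + gb (2*m) ((m:ℤ)+j-1))) * M (j^2)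
        = gb (2*m) ((m:ℤ)+j-1) * (M (2*((m:ℤ)+1-j)) * M (j^2))
          + gb (2*m) ((m:ℤ)+j+1) * (M (2*((m:ℤ)+1+j)) * M (j^2)) := by ring
      _ = _ := by rw [c1, c2]; ring
  · have hj0 : 0 ≤ (m:ℤ)+j := by
      by_contra h; exact hg (gb_neg _ _ (by omega))
    have c0 : M (2*((m:ℤ)+1-j)) * M (2*((m:ℤ)+j)) = M (4*(m:ℤ)+2) := by
      rw [M_mul (by omega) (by omega)]; congr 1; ring
    have c1 : M (2*((m:ℤ)+1+j)) * M (j^2) = M (j^2+2*((m:ℤ)+1+j)) := by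
      rw [M_mul (by omega) (by positivity)]; congr 1; ring
    have c2 : M (2*((m:ℤ)+1-j)) * M (j^2) = M (j^2+2*((m:ℤ)+1-j)) := by
      rw [M_mul (by omega) (by positivity)]; congr 1; ring
    have c3 : M (4*(m:ℤ)+2) * M (j^2) = M (j^2+4*(m:ℤ)+2) := by
      rw [M_mul (by omega) (by positivity)]; congr 1; ring
    calc (M (2*((m:ℤ)+1+j)) * gb (2*m) ((m:ℤ)+j+1) + gb (2*m) ((m:ℤ)+j)
          + M (2*((m:ℤ)+1-j)) * (M (2*((m:ℤ)+j)) * gb (2*m) ((m:ℤ)+j)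
            + gb (2*m) ((m:ℤ)+j-1))) * M (j^2)
        = gb (2*m) ((m:ℤ)+j) * M (j^2)
          + gb (2*m) ((m:ℤ)+j) * ((M (2*((m:ℤ)+1-j)) * M (2*((m:ℤ)+j))) * M (j^2))
          + gb (2*m) ((m:ℤ)+j-1) * (M (2*((m:ℤ)+1-j)) * M (j^2))
          + gb (2*m) ((m:ℤ)+j+1) * (M (2*((m:ℤ)+1+j)) * M (j^2)) := by ring
      _ = _ := by rw [c0, c1, c2, c3]

lemma M_natc (a : ℕ) : (X:Polynomial ℤ) ^ a = M (a:ℤ) := by simp [M]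

lemma Sp_succ (m : ℕ) : Sp (m+1) = Sp m * (1 + X^(2*m+1))^2 := by
  have hI : Icc (-((m:ℕ)+1:ℤ)) (((m:ℕ)+1:ℤ)) = Icc (-(m:ℤ)-1) ((m:ℤ)+1) := by
    congr 1; ring
  have step1 : Sp (m+1) = ∑ j ∈ Icc (-(m:ℤ)-1) ((m:ℤ)+1),
      (gb (2*m) ((m:ℤ)+j) * M (j^2) + gb (2*m) ((m:ℤ)+j) * M (j^2+4*(m:ℤ)+2)
      + gb (2*m) ((m:ℤ)+j-1) * M (j^2+2*((m:ℤ)+1-j))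
      + gb (2*m) ((m:ℤ)+j+1) * M (j^2+2*((m:ℤ)+1+j))) := by
    rw [Sp, show 2*(m+1) = 2*m+2 by ring]
    rw [show ((m+1:ℕ):ℤ) = (m:ℤ)+1 by push_cast; ring, show (-((m:ℤ)+1)) = -(m:ℤ)-1 by ring]
    refine Finset.sum_congr rfl fun j hj => ?_
    rw [mem_Icc] at hj
    exact key m j hj.1 hj.2
  have hsub : Icc (-(m:ℤ)) (m:ℤ) ⊆ Icc (-(m:ℤ)-1) ((m:ℤ)+1) :=
    Finset.Icc_subset_Icc (by omega) (by omega)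
  have hA : ∑ j ∈ Icc (-(m:ℤ)-1) ((m:ℤ)+1), gb (2*m) ((m:ℤ)+j) * M (j^2) = Sp m := by
    rw [Sp]
    refine (Finset.sum_subset hsub fun j hj hnj => ?_).symm
    rw [mem_Icc] at hj
    rw [mem_Icc, not_and_or] at hnj
    rcases hnj with h | h
    · rw [gb_neg _ _ (by omega), zero_mul]
    · rw [gb_gt _ _ (by push_cast; omega), zero_mul]
  have hB : ∑ j ∈ Icc (-(m:ℤ)-1) ((m:ℤ)+1), gb (2*m) ((m:ℤ)+j) * M (j^2+4*(m:ℤ)+2)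
      = Sp m * X^(4*m+2) := by
    rw [Sp, Finset.sum_mul]
    refine (Finset.sum_subset hsub fun j hj hnj => ?_).symm.trans
      (Finset.sum_congr rfl fun j hj => ?_)
    · rw [mem_Icc] at hj
      rw [mem_Icc, not_and_or] at hnj
      rcases hnj with h | h
      · rw [gb_neg _ _ (by omega), zero_mul]
      · rw [gb_gt _ _ (by push_cast; omega), zero_mul]
    · rw [mul_assoc, M_natc, M_mul (by positivity) (by push_cast; omega)]
      congr 2
      push_cast; ring
  have hC : ∑ j ∈ Icc (-(m:ℤ)-1) ((m:ℤ)+1), gb (2*m) ((m:ℤ)+j-1) * M (j^2+2*((m:ℤ)+1-j))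
      = Sp m * X^(2*m+1) := by
    rw [sum_Icc_shift _ _ 1, Sp, Finset.sum_mul]
    rw [show -(m:ℤ)-1-1 = -(m:ℤ)-2 by ring, show (m:ℤ)+1-1 = (m:ℤ) by ring]
    refine ((Finset.sum_subset (Finset.Icc_subset_Icc (by omega) (by omega))
      fun i hi hni => ?_).symm).trans (Finset.sum_congr rfl fun i hi => ?_)
    · rw [mem_Icc] at hi
      rw [mem_Icc, not_and_or] at hni
      rcases hni with h | h
      · rw [gb_neg _ _ (by omega), zero_mul]
      · rw [gb_gt _ _ (by push_cast; omega), zero_mul]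
    · rw [show (m:ℤ)+(i+1)-1 = (m:ℤ)+i by ring, mul_assoc, M_natc,
        M_mul (by positivity) (by push_cast; omega)]
      congr 2
      push_cast; ring
  have hD : ∑ j ∈ Icc (-(m:ℤ)-1) ((m:ℤ)+1), gb (2*m) ((m:ℤ)+j+1) * M (j^2+2*((m:ℤ)+1+j))
      = Sp m * X^(2*m+1) := by
    rw [sum_Icc_shift _ _ (-1), Sp, Finset.sum_mul]
    rw [show -(m:ℤ)-1-(-1) = -(m:ℤ) by ring, show (m:ℤ)+1-(-1) = (m:ℤ)+2 by ring]
    refine ((Finset.sum_subset (Finset.Icc_subset_Icc (by omega) (by omega))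
      fun i hi hni => ?_).symm).trans (Finset.sum_congr rfl fun i hi => ?_)
    · rw [mem_Icc] at hi
      rw [mem_Icc, not_and_or] at hni
      rcases hni with h | h
      · rw [gb_neg _ _ (by omega), zero_mul]
      · rw [gb_gt _ _ (by push_cast; omega), zero_mul]
    · rw [show (m:ℤ)+(i+(-1))+1 = (m:ℤ)+i by ring, mul_assoc, M_natc,
        M_mul (by positivity) (by push_cast; omega)]
      congr 2
      push_cast; ring
  rw [step1]
  simp only [Finset.sum_add_distrib]
  rw [hA, hB, hC, hD]
  ring

lemma T1 : ∀ m : ℕ, Gp m ^ 2 = Sp m := by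
  intro m
  induction m with
  | zero =>
    rw [Gp, Sp]
    norm_num
    rw [gb_zero 0, M_zero, one_mul]
  | succ m ih =>
    rw [Sp_succ, ← ih, Gp, Finset.prod_range_succ, ← Gp]
    ring

noncomputable def Qp (a : ℕ) : Polynomial ℤ := ∏ k ∈ range a, (1 - X^(2*k+2))

lemma Qp_zero : Qp 0 = 1 := by simp [Qp]

lemma Qp_succ (a : ℕ) : Qp (a+1) = Qp a * (1 - X^(2*a+2)) := Finset.prod_range_succ _ _

lemma PF : ∀ (n a : ℕ), a ≤ n → gb n (a:ℤ) * Qp a * Qp (n-a) = Qp n := by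
  intro n
  induction n with
  | zero =>
    intro a ha
    interval_cases a
    simp [gb_zero 0, Qp_zero]
  | succ n ih =>
    intro a ha
    rcases Nat.eq_zero_or_pos a with rfl | hpos
    · simp [gb_zero, Qp_zero]
    rcases eq_or_lt_of_le ha with rfl | hlt
    · rw [gb_self (n+1)]
      simp [Qp_zero]
    have han : a ≤ n := by omega
    obtain ⟨c, rfl⟩ : ∃ c, a = c+1 := ⟨a-1, by omega⟩
    obtain ⟨d, rfl⟩ : ∃ d, n = c+1+d := ⟨n-(c+1), by omega⟩
    have ih1 := ih (c+1) (by omega)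
    have ih2 := ih c (by omega)
    rw [show c+1+d-(c+1) = d by omega] at ih1
    rw [show c+1+d-c = d+1 by omega] at ih2
    rw [gb_succ]
    rw [show c+1+d+1-(c+1) = d+1 by omega]
    rw [show ((c+1:ℕ):ℤ)-1 = (c:ℤ) by push_cast; ring]
    rw [show M (2*(((c+1+d:ℕ):ℤ)+1-((c+1:ℕ):ℤ))) = X^(2*d+2) from ?_]
    · rw [Qp_succ d, Qp_succ (c+1+d), Qp_succ c]
      rw [Qp_succ c] at ih1
      rw [Qp_succ d] at ih2
      linear_combination (1 - (X:Polynomial ℤ)^(2*d+2)) * ih1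
        + (X:Polynomial ℤ)^(2*d+2) * (1 - X^(2*c+2)) * ih2
    · rw [M_natc]
      congr 1
      push_cast; ring

open PowerSeries in
lemma Qp_coe_unit (t : ℕ) : IsUnit ((Qp t : Polynomial ℤ) : PowerSeries ℤ) := by
  rw [PowerSeries.isUnit_iff_constantCoeff]
  have : PowerSeries.constantCoeff ((Qp t : Polynomial ℤ) : PowerSeries ℤ)
      = (Qp t).coeff 0 := by
    rw [← PowerSeries.coeff_zero_eq_constantCoeff_apply, Polynomial.coeff_coe]
  rw [this]
  have : (Qp t).coeff 0 = 1 := by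
    rw [Polynomial.coeff_zero_eq_eval_zero, Qp, Polynomial.eval_prod]
    simp
  rw [this]
  exact isUnit_one

lemma Qp_dvd_sub (s e : ℕ) :
    (PowerSeries.X:PowerSeries ℤ)^(2*s+2) ∣ ((Qp (s+e) : Polynomial ℤ) : PowerSeries ℤ) - (Qp s : PowerSeries ℤ) := by
  induction e with
  | zero => simp
  | succ e ih =>
    have : ((Qp (s+e+1) : Polynomial ℤ) : PowerSeries ℤ) - (Qp s : PowerSeries ℤ)
        = (((Qp (s+e) : Polynomial ℤ) : PowerSeries ℤ) - (Qp s : PowerSeries ℤ))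
          - ((Qp (s+e) : Polynomial ℤ) : PowerSeries ℤ) * (PowerSeries.X:PowerSeries ℤ)^(2*(s+e)+2) := by
      rw [show s+e+1 = (s+e)+1 from rfl, Qp_succ]
      push_cast
      ring
    rw [show s+(e+1) = s+e+1 from rfl, this]
    refine dvd_sub ih (Dvd.dvd.mul_left ?_ _)
    exact pow_dvd_pow _ (by omega)

lemma Qp_dvd_sub' (s t N : ℕ) (hs : N < 2*s+2) (ht : N < 2*t+2) :
    (PowerSeries.X:PowerSeries ℤ)^(N+1) ∣ ((Qp t : Polynomial ℤ) : PowerSeries ℤ) - (Qp s : PowerSeries ℤ) := by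
  rcases le_total s t with h | h
  · obtain ⟨e, rfl⟩ : ∃ e, t = s + e := ⟨t - s, by omega⟩
    exact dvd_trans (pow_dvd_pow _ (by omega)) (Qp_dvd_sub s e)
  · obtain ⟨e, rfl⟩ : ∃ e, s = t + e := ⟨s - t, by omega⟩
    exact (dvd_sub_comm).mp (dvd_trans (pow_dvd_pow _ (by omega)) (Qp_dvd_sub t e))

lemma cong (N a b mm : ℕ) (ha : N < 2*a+2) (hb : N < 2*b+2) (hm : N < 2*mm+2) :
    ∀ d ≤ N, (gb (a+b) (a:ℤ) * Qp mm).coeff d = (1 : Polynomial ℤ).coeff d := by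
  intro d hd
  have pf := PF (a+b) a (by omega)
  rw [show a+b-a = b by omega] at pf
  -- move to power series
  set g : PowerSeries ℤ := ((gb (a+b) (a:ℤ) : Polynomial ℤ) : PowerSeries ℤ) with hg
  set A : PowerSeries ℤ := ((Qp a : Polynomial ℤ) : PowerSeries ℤ)
  set B : PowerSeries ℤ := ((Qp b : Polynomial ℤ) : PowerSeries ℤ)
  set Mm : PowerSeries ℤ := ((Qp mm : Polynomial ℤ) : PowerSeries ℤ)
  set Ab : PowerSeries ℤ := ((Qp (a+b) : Polynomial ℤ) : PowerSeries ℤ)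
  have pf' : g * A * B = Ab := by
    rw [hg]
    have := congrArg (fun p : Polynomial ℤ => (p : PowerSeries ℤ)) pf
    push_cast at this
    exact this
  have hdvd : (PowerSeries.X:PowerSeries ℤ)^(N+1) ∣ g * Mm - 1 := by
    have key : (A * B) * (g * Mm - 1) = Mm * (Ab - A) + A * (Mm - B) := by
      rw [← pf']; ring
    have hD : (PowerSeries.X:PowerSeries ℤ)^(N+1) ∣ (A * B) * (g * Mm - 1) := by
      rw [key]
      exact dvd_add (Dvd.dvd.mul_left (Qp_dvd_sub' a (a+b) N ha (by omega)) _)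
        (Dvd.dvd.mul_left (Qp_dvd_sub' b mm N hb hm) _)
    have hu : IsUnit (A * B) := (Qp_coe_unit a).mul (Qp_coe_unit b)
    obtain ⟨u, hu⟩ := hu
    have : g * Mm - 1 = ↑u⁻¹ * ((A*B) * (g * Mm - 1)) := by
      rw [← mul_assoc, ← hu, Units.inv_mul, one_mul]
    rw [this]
    exact Dvd.dvd.mul_left hD _
  have hcz := (PowerSeries.X_pow_dvd_iff.mp hdvd) d (by omega)
  have : (PowerSeries.coeff d) (g * Mm) = (PowerSeries.coeff d) 1 := by
    have h2 : (PowerSeries.coeff d) (g * Mm) - (PowerSeries.coeff d) 1 = 0 := by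
      rw [← map_sub]
      exact hcz
    exact sub_eq_zero.mp h2
  rw [hg] at this
  have hgm : ((gb (a+b) (a:ℤ) * Qp mm : Polynomial ℤ) : PowerSeries ℤ)
      = ((gb (a+b) (a:ℤ) : Polynomial ℤ) : PowerSeries ℤ) * ((Qp mm : Polynomial ℤ) : PowerSeries ℤ) := by
    push_cast; ring
  rw [← Polynomial.coeff_coe, hgm, this]
  simp [Polynomial.coeff_one]

lemma T2 (n : ℕ) (hn : 0 < n) :
    (Gp (2*n) ^ 2 * Qp (2*n)).coeff n = (if IsSquare n then 2 else 0 : ℤ) := by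
  rw [T1 (2*n), Sp, Finset.sum_mul, Polynomial.finset_sum_coeff]
  have hterm : ∀ j ∈ Icc (-((2*n:ℕ):ℤ)) ((2*n:ℕ):ℤ),
      (gb (2*(2*n)) (((2*n:ℕ):ℤ)+j) * M (j^2) * Qp (2*n)).coeff n
        = (if j^2 = (n:ℤ) then 1 else 0) := by
    intro j hj
    rw [mem_Icc] at hj
    have hj1 : -(2*(n:ℤ)) ≤ j := by exact_mod_cast hj.1
    have hj2 : j ≤ 2*(n:ℤ) := by exact_mod_cast hj.2
    have harr : gb (2*(2*n)) (((2*n:ℕ):ℤ)+j) * M (j^2) * Qp (2*n)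
        = (gb (2*(2*n)) (((2*n:ℕ):ℤ)+j) * Qp (2*n)) * X^((j^2).toNat) := by
      rw [M]; ring
    rw [harr, Polynomial.coeff_mul_X_pow']
    by_cases ht : (j^2).toNat ≤ n
    · rw [if_pos ht]
      have hjn : j^2 ≤ (n:ℤ) := by omega
      have hup : j ≤ (n:ℤ) := by nlinarith
      have hlo : -(n:ℤ) ≤ j := by nlinarith
      obtain ⟨a, ha⟩ : ∃ a : ℕ, (a:ℤ) = 2*(n:ℤ)+j := ⟨(2*(n:ℤ)+j).toNat, Int.toNat_of_nonneg (by omega)⟩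
      obtain ⟨b, hb⟩ : ∃ b : ℕ, (b:ℤ) = 2*(n:ℤ)-j := ⟨(2*(n:ℤ)-j).toNat, Int.toNat_of_nonneg (by omega)⟩
      have hab : 2*(2*n) = a + b := by omega
      rw [show ((2*n:ℕ):ℤ)+j = (a:ℤ) by push_cast; omega, hab]
      rw [cong n a b (2*n) (by omega) (by omega) (by omega) (n - (j^2).toNat) (by omega)]
      rw [Polynomial.coeff_one]
      by_cases he : j^2 = (n:ℤ)
      · rw [if_pos (by omega), if_pos he]
      · rw [if_neg (by omega), if_neg he]
    · rw [if_neg ht, if_neg (by omega : ¬ j^2 = (n:ℤ))]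
  rw [Finset.sum_congr rfl hterm]
  by_cases hs : IsSquare n
  · obtain ⟨r, hr⟩ := hs
    rw [if_pos ⟨r, hr⟩]
    have hr1 : 1 ≤ r := by rcases Nat.eq_zero_or_pos r with rfl | h; · omega
                           · exact h
    have hrn : r ≤ n := by nlinarith
    have hrz : (n:ℤ) = (r:ℤ)*(r:ℤ) := by exact_mod_cast hr
    rw [← Finset.sum_filter]
    have hfil : (Icc (-((2*n:ℕ):ℤ)) ((2*n:ℕ):ℤ)).filter (fun j => j^2 = (n:ℤ))
        = {(r:ℤ), -(r:ℤ)} := by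
      ext j
      simp only [Finset.mem_filter, mem_Icc, Finset.mem_insert, Finset.mem_singleton]
      constructor
      · rintro ⟨⟨h1, h2⟩, h3⟩
        have hz : (j - r) * (j + r) = 0 := by linear_combination h3 + hrz
        rcases mul_eq_zero.mp hz with h | h
        · left; omega
        · right; omega
      · rintro (rfl | rfl)
        · refine ⟨⟨by push_cast; omega, by push_cast; omega⟩, by linear_combination -hrz⟩
        · refine ⟨⟨by push_cast; omega, by push_cast; omega⟩, by linear_combination -hrz⟩
    rw [hfil]
    rw [Finset.sum_pair (by omega : (r:ℤ) ≠ -(r:ℤ))]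
    norm_num
  · rw [if_neg hs]
    refine Finset.sum_eq_zero fun j hj => if_neg fun h => hs ⟨j.natAbs, ?_⟩
    have : ((j.natAbs * j.natAbs : ℕ) : ℤ) = (n:ℤ) := by
      rw [Int.natAbs_mul_self]
      linear_combination h
    exact_mod_cast this.symm

lemma expandProd (s : Finset ℕ) (c : ℕ → ℤ) (e : ℕ → ℕ) :
    ∏ k ∈ s, (Polynomial.C (c k) * X^(e k) + 1)
      = ∑ t ∈ s.powerset, Polynomial.C (∏ k ∈ t, c k) * X^(∑ k ∈ t, e k) := by
  rw [Finset.prod_add]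
  refine Finset.sum_congr rfl fun t ht => ?_
  rw [Finset.prod_const_one, mul_one, Finset.prod_mul_distrib, ← map_prod,
    Finset.prod_pow_eq_pow_sum]

lemma Gp_expand (m : ℕ) : Gp m = ∑ t ∈ (range m).powerset, (X:Polynomial ℤ)^(∑ k ∈ t, (2*k+1)) := by
  rw [Gp]
  rw [show (∏ k ∈ range m, (1 + (X:Polynomial ℤ)^(2*k+1)))
      = ∏ k ∈ range m, (Polynomial.C (1:ℤ) * X^(2*k+1) + 1) by
    refine Finset.prod_congr rfl fun k _ => by rw [map_one, one_mul, add_comm]]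
  rw [expandProd]
  refine Finset.sum_congr rfl fun t ht => ?_
  rw [Finset.prod_const_one, map_one, one_mul]

lemma Qp_expand (m : ℕ) : Qp m = ∑ t ∈ (range m).powerset,
    Polynomial.C ((-1:ℤ)^t.card) * (X:Polynomial ℤ)^(∑ k ∈ t, (2*k+2)) := by
  rw [Qp]
  rw [show (∏ k ∈ range m, (1 - (X:Polynomial ℤ)^(2*k+2)))
      = ∏ k ∈ range m, (Polynomial.C (-1:ℤ) * X^(2*k+2) + 1) by
    refine Finset.prod_congr rfl fun k _ => by
      rw [map_neg, map_one]; ring]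
  rw [expandProd]
  refine Finset.sum_congr rfl fun t ht => ?_
  rw [Finset.prod_const]

lemma coeff_CXpow (c : ℤ) (w n : ℕ) : (Polynomial.C c * X^w).coeff n = if w = n then c else 0 := by
  rw [Polynomial.coeff_C_mul, Polynomial.coeff_X_pow]
  by_cases h : n = w
  · rw [if_pos h, if_pos h.symm, mul_one]
  · rw [if_neg h, if_neg (fun hh => h hh.symm), mul_zero]

lemma coeff_triple_sum (m n : ℕ) :
    (Gp m ^ 2 * Qp m).coeff n
      = ∑ T ∈ ((range m).powerset ×ˢ ((range m).powerset ×ˢ (range m).powerset)),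
          (if (∑ k ∈ T.1, (2*k+1)) + (∑ k ∈ T.2.1, (2*k+1)) + (∑ k ∈ T.2.2, (2*k+2)) = n
           then (-1:ℤ)^(T.2.2.card) else 0) := by
  rw [sq, Gp_expand, Qp_expand, Finset.sum_mul_sum, Finset.sum_mul, Polynomial.finset_sum_coeff]
  simp only [Finset.sum_product]
  refine Finset.sum_congr rfl fun t1 _ => ?_
  rw [Finset.sum_mul, Polynomial.finset_sum_coeff]
  refine Finset.sum_congr rfl fun t2 _ => ?_
  rw [Finset.mul_sum, Polynomial.finset_sum_coeff]
  refine Finset.sum_congr rfl fun t3 _ => ?_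
  have h1 : (X:Polynomial ℤ)^(∑ k ∈ t1, (2*k+1)) * (X:Polynomial ℤ)^(∑ k ∈ t2, (2*k+1))
      * (Polynomial.C ((-1:ℤ)^t3.card) * (X:Polynomial ℤ)^(∑ k ∈ t3, (2*k+2)))
      = Polynomial.C ((-1:ℤ)^t3.card)
        * (X:Polynomial ℤ)^((∑ k ∈ t1, (2*k+1)) + (∑ k ∈ t2, (2*k+1)) + (∑ k ∈ t3, (2*k+2))) := by
    rw [pow_add, pow_add]; ring
  calc _ = (Polynomial.C ((-1:ℤ)^t3.card)
        * (X:Polynomial ℤ)^((∑ k ∈ t1, (2*k+1)) + (∑ k ∈ t2, (2*k+1)) + (∑ k ∈ t3, (2*k+2)))).coeff n := by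
        rw [← h1]
    _ = _ := by rw [coeff_CXpow]

def V (n : ℕ) : Finset (Finset ℕ × Finset ℕ) :=
  ((range (n+1)).powerset ×ˢ (range (n+1)).powerset).filter
    (fun p => (∀ x ∈ p.1, Odd x ∧ 0 < x) ∧ (∀ x ∈ p.2, 0 < x) ∧
      (∑ x ∈ p.1, x) + (∑ x ∈ p.2, x) = n)

lemma filt_even (t u : Finset ℕ) :
    ((t.image (fun k => 2*k+1)) ∪ (u.image (fun k => 2*k+2))).filter (fun x => Even x)
      = u.image (fun k => 2*k+2) := by
  rw [Finset.filter_union]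
  rw [Finset.filter_false_of_mem (fun x hx => by
    rw [Finset.mem_image] at hx
    obtain ⟨k, _, rfl⟩ := hx
    rw [Nat.even_iff]
    omega)]
  rw [Finset.filter_true_of_mem (fun x hx => by
    rw [Finset.mem_image] at hx
    obtain ⟨k, _, rfl⟩ := hx
    rw [Nat.even_iff]
    omega)]
  rw [Finset.empty_union]

lemma filt_odd (t u : Finset ℕ) :
    ((t.image (fun k => 2*k+1)) ∪ (u.image (fun k => 2*k+2))).filter (fun x => ¬ Even x)
      = t.image (fun k => 2*k+1) := by
  rw [Finset.filter_union]
  rw [Finset.filter_true_of_mem (fun x hx => by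
    rw [Finset.mem_image] at hx
    obtain ⟨k, _, rfl⟩ := hx
    rw [Nat.even_iff]
    omega)]
  rw [Finset.filter_false_of_mem (fun x hx => by
    rw [Finset.mem_image] at hx
    obtain ⟨k, _, rfl⟩ := hx
    rw [Nat.even_iff]
    omega)]
  rw [Finset.union_empty]

lemma main_sum (n : ℕ) (hn : 0 < n) :
    (∑ T ∈ ((range (2*n)).powerset ×ˢ ((range (2*n)).powerset ×ˢ (range (2*n)).powerset)),
      (if (∑ k ∈ T.1, (2*k+1)) + (∑ k ∈ T.2.1, (2*k+1)) + (∑ k ∈ T.2.2, (2*k+2)) = n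
       then (-1:ℤ)^(T.2.2.card) else 0))
    = ∑ p ∈ V n, (-1:ℤ)^((p.2.filter (fun x => Even x)).card) := by
  rw [← Finset.sum_filter]
  refine Finset.sum_nbij'
    (i := fun T => (T.1.image (fun k => 2*k+1),
      (T.2.1.image (fun k => 2*k+1)) ∪ (T.2.2.image (fun k => 2*k+2))))
    (j := fun p => (p.1.image (fun x => x/2),
      ((p.2.filter (fun x => ¬ Even x)).image (fun x => x/2),
       (p.2.filter (fun x => Even x)).image (fun x => x/2 - 1))))
    ?_ ?_ ?_ ?_ ?_
  · -- hi : maps into V n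
    intro T hT
    rw [Finset.mem_filter] at hT
    obtain ⟨hTmem, hW⟩ := hT
    rw [Finset.mem_product] at hTmem
    obtain ⟨h1, h23⟩ := hTmem
    rw [Finset.mem_product] at h23
    obtain ⟨h2, h3⟩ := h23
    have hs1 : ∑ x ∈ T.1.image (fun k => 2*k+1), x = ∑ k ∈ T.1, (2*k+1) :=
      Finset.sum_image (fun x _ y _ h => by omega)
    have hdisj : Disjoint (T.2.1.image (fun k => 2*k+1)) (T.2.2.image (fun k => 2*k+2)) := by
      rw [Finset.disjoint_left]
      intro a ha hb
      rw [Finset.mem_image] at ha hb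
      obtain ⟨x, _, hx⟩ := ha
      obtain ⟨y, _, hy⟩ := hb
      omega
    have hs2 : ∑ x ∈ (T.2.1.image (fun k => 2*k+1)) ∪ (T.2.2.image (fun k => 2*k+2)), x
        = (∑ k ∈ T.2.1, (2*k+1)) + (∑ k ∈ T.2.2, (2*k+2)) := by
      rw [Finset.sum_union hdisj,
        Finset.sum_image (fun x _ y _ h => by omega),
        Finset.sum_image (fun x _ y _ h => by omega)]
    rw [V, Finset.mem_filter, Finset.mem_product]
    refine ⟨⟨?_, ?_⟩, ?_, ?_, ?_⟩
    · rw [Finset.mem_powerset]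
      intro x hx
      rw [Finset.mem_image] at hx
      obtain ⟨k, hk, rfl⟩ := hx
      have h5 : 2*k+1 ≤ ∑ i ∈ T.1, (2*i+1) :=
        Finset.single_le_sum (f := fun k => 2*k+1) (fun i _ => Nat.zero_le _) hk
      rw [Finset.mem_range]
      omega
    · rw [Finset.mem_powerset]
      intro x hx
      rw [Finset.mem_union, Finset.mem_image, Finset.mem_image] at hx
      rw [Finset.mem_range]
      rcases hx with ⟨k, hk, rfl⟩ | ⟨k, hk, rfl⟩
      · have h5 : 2*k+1 ≤ ∑ i ∈ T.2.1, (2*i+1) :=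
          Finset.single_le_sum (f := fun k => 2*k+1) (fun i _ => Nat.zero_le _) hk
        omega
      · have h5 : 2*k+2 ≤ ∑ i ∈ T.2.2, (2*i+2) :=
          Finset.single_le_sum (f := fun k => 2*k+2) (fun i _ => Nat.zero_le _) hk
        omega
    · intro x hx
      rw [Finset.mem_image] at hx
      obtain ⟨k, _, rfl⟩ := hx
      exact ⟨⟨k, by omega⟩, by omega⟩
    · intro x hx
      rw [Finset.mem_union, Finset.mem_image, Finset.mem_image] at hx
      rcases hx with ⟨k, _, rfl⟩ | ⟨k, _, rfl⟩ <;> omega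
    · rw [hs1, hs2]; omega
  · -- hj : maps into filtered triples
    intro p hp
    rw [V, Finset.mem_filter, Finset.mem_product, Finset.mem_powerset, Finset.mem_powerset] at hp
    obtain ⟨⟨hp1, hp2⟩, hodd, hpos, hsum⟩ := hp
    rw [Finset.mem_filter, Finset.mem_product, Finset.mem_product]
    have hb1 : ∀ x ∈ p.1, x ≤ n := fun x hx => by
      have := hp1 hx; rw [Finset.mem_range] at this; omega
    have hb2 : ∀ x ∈ p.2, x ≤ n := fun x hx => by
      have := hp2 hx; rw [Finset.mem_range] at this; omega
    have hodd' : ∀ x ∈ p.1, x % 2 = 1 := fun x hx => by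
      have := (hodd x hx).1; rw [Nat.odd_iff] at this; omega
    refine ⟨⟨?_, ?_, ?_⟩, ?_⟩
    · rw [Finset.mem_powerset]
      intro x hx
      rw [Finset.mem_image] at hx
      obtain ⟨y, hy, rfl⟩ := hx
      rw [Finset.mem_range]
      have := hb1 y hy
      omega
    · rw [Finset.mem_powerset]
      intro x hx
      rw [Finset.mem_image] at hx
      obtain ⟨y, hy, rfl⟩ := hx
      rw [Finset.mem_filter] at hy
      rw [Finset.mem_range]
      have := hb2 y hy.1
      omega
    · rw [Finset.mem_powerset]
      intro x hx
      rw [Finset.mem_image] at hx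
      obtain ⟨y, hy, rfl⟩ := hx
      rw [Finset.mem_filter] at hy
      rw [Finset.mem_range]
      have := hb2 y hy.1
      omega
    · -- weight equals n
      have e1 : ∑ k ∈ p.1.image (fun x => x/2), (2*k+1) = ∑ x ∈ p.1, x := by
        rw [Finset.sum_image (fun x hx y hy h => by
          have := hodd' x hx; have := hodd' y hy; omega)]
        exact Finset.sum_congr rfl fun x hx => by have := hodd' x hx; omega
      have e2 : ∑ k ∈ (p.2.filter (fun x => ¬ Even x)).image (fun x => x/2), (2*k+1)
          = ∑ x ∈ p.2.filter (fun x => ¬ Even x), x := by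
        rw [Finset.sum_image (fun x hx y hy h => by
          rw [Finset.mem_coe, Finset.mem_filter, Nat.even_iff] at hx hy; omega)]
        refine Finset.sum_congr rfl fun x hx => by
          rw [Finset.mem_filter, Nat.even_iff] at hx; omega
      have e3 : ∑ k ∈ (p.2.filter (fun x => Even x)).image (fun x => x/2 - 1), (2*k+2)
          = ∑ x ∈ p.2.filter (fun x => Even x), x := by
        rw [Finset.sum_image (fun x hx y hy h => by
          rw [Finset.mem_coe, Finset.mem_filter, Nat.even_iff] at hx hy
          have := hpos x hx.1; have := hpos y hy.1; omega)]
        refine Finset.sum_congr rfl fun x hx => by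
          rw [Finset.mem_filter, Nat.even_iff] at hx
          have := hpos x hx.1
          omega
      have e4 : (∑ x ∈ p.2.filter (fun x => Even x), x)
          + (∑ x ∈ p.2.filter (fun x => ¬ Even x), x) = ∑ x ∈ p.2, x :=
        Finset.sum_filter_add_sum_filter_not _ _ _
      dsimp only
      rw [e1, e2, e3]
      omega
  · -- left inverse
    intro T hT
    refine Prod.ext ?_ (Prod.ext ?_ ?_)
    · dsimp only
      rw [Finset.image_image]
      rw [Finset.image_congr (g := id) (fun x hx => by
        simp only [Function.comp_apply, id_eq]; omega)]
      exact Finset.image_id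
    · dsimp only
      rw [filt_odd, Finset.image_image]
      rw [Finset.image_congr (g := id) (fun x hx => by
        simp only [Function.comp_apply, id_eq]; omega)]
      exact Finset.image_id
    · dsimp only
      rw [filt_even, Finset.image_image]
      rw [Finset.image_congr (g := id) (fun x hx => by
        simp only [Function.comp_apply, id_eq]; omega)]
      exact Finset.image_id
  · -- right inverse
    intro p hp
    rw [V, Finset.mem_filter, Finset.mem_product] at hp
    obtain ⟨⟨hp1, hp2⟩, hodd, hpos, hsum⟩ := hp
    have hodd' : ∀ x ∈ p.1, x % 2 = 1 := fun x hx => by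
      have := (hodd x hx).1; rw [Nat.odd_iff] at this; omega
    refine Prod.ext ?_ ?_
    · dsimp only
      rw [Finset.image_image]
      rw [Finset.image_congr (g := id) (fun x hx => by
        rw [Finset.mem_coe] at hx
        have := hodd' x hx
        simp only [Function.comp_apply, id_eq]
        omega)]
      exact Finset.image_id
    · dsimp only
      have c1 : ((p.2.filter (fun x => ¬ Even x)).image (fun x => x/2)).image (fun k => 2*k+1)
          = p.2.filter (fun x => ¬ Even x) := by
        rw [Finset.image_image]
        rw [Finset.image_congr (g := id) (fun x hx => by
          rw [Finset.mem_coe, Finset.mem_filter, Nat.even_iff] at hx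
          simp only [Function.comp_apply, id_eq]
          omega)]
        exact Finset.image_id
      have c2 : ((p.2.filter (fun x => Even x)).image (fun x => x/2-1)).image (fun k => 2*k+2)
          = p.2.filter (fun x => Even x) := by
        rw [Finset.image_image]
        rw [Finset.image_congr (g := id) (fun x hx => by
          rw [Finset.mem_coe, Finset.mem_filter, Nat.even_iff] at hx
          have := hpos x hx.1
          simp only [Function.comp_apply, id_eq]
          omega)]
        exact Finset.image_id
      rw [c1, c2, Finset.union_comm, Finset.filter_union_filter_not_eq]
  · -- values agree
    intro T hT
    dsimp only
    rw [filt_even, Finset.card_image_of_injective _ (fun a b h => by omega)]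

lemma mem_V_iff (n : ℕ) (p : Finset ℕ × Finset ℕ) :
    p ∈ V n ↔ (∀ x ∈ p.1, Odd x ∧ 0 < x) ∧ (∀ x ∈ p.2, 0 < x) ∧
      (∑ x ∈ p.1, x) + (∑ x ∈ p.2, x) = n := by
  rw [V, Finset.mem_filter, Finset.mem_product]
  constructor
  · rintro ⟨_, h⟩; exact h
  · intro h
    refine ⟨⟨?_, ?_⟩, h⟩
    · rw [Finset.mem_powerset]
      intro x hx
      have hle : x ≤ ∑ x ∈ p.1, x :=
        Finset.single_le_sum (f := fun x => x) (fun i _ => Nat.zero_le _) hx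
      rw [Finset.mem_range]
      have := h.2.2
      omega
    · rw [Finset.mem_powerset]
      intro x hx
      have hle : x ≤ ∑ x ∈ p.2, x :=
        Finset.single_le_sum (f := fun x => x) (fun i _ => Nat.zero_le _) hx
      rw [Finset.mem_range]
      have := h.2.2
      omega

/-- For `n ≥ 1`, as integers, `E₀(n) − E₁(n)` equals `2` if `n` is a
perfect square and `0` otherwise. Here `E₀(n)` (resp. `E₁(n)`) counts two-color
partitions `(g, b)` of `n` (with `g` a finite set of distinct odd positive integers
and `b` a finite set of distinct positive integers) whose number of even parts
(even elements of `b`) is even (resp. odd). -/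
theorem two_color_even_parts_parity_difference (n : ℕ) (hn : 0 < n) :
    (Nat.card {p : Finset ℕ × Finset ℕ //
      ((∀ x ∈ p.1, Odd x ∧ 0 < x) ∧ (∀ x ∈ p.2, 0 < x) ∧
        (∑ x ∈ p.1, x) + (∑ x ∈ p.2, x) = n) ∧
      Even (p.2.filter (fun x => Even x)).card} : ℤ) -
    (Nat.card {p : Finset ℕ × Finset ℕ //
      ((∀ x ∈ p.1, Odd x ∧ 0 < x) ∧ (∀ x ∈ p.2, 0 < x) ∧
        (∑ x ∈ p.1, x) + (∑ x ∈ p.2, x) = n) ∧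
      Odd (p.2.filter (fun x => Even x)).card} : ℤ) =
    (if IsSquare n then 2 else 0) := by
  classical
  have hc1 : Nat.card {p : Finset ℕ × Finset ℕ //
      ((∀ x ∈ p.1, Odd x ∧ 0 < x) ∧ (∀ x ∈ p.2, 0 < x) ∧
        (∑ x ∈ p.1, x) + (∑ x ∈ p.2, x) = n) ∧
      Even (p.2.filter (fun x => Even x)).card}
      = ((V n).filter (fun p => Even ((p.2.filter (fun x => Even x)).card))).card := by
    rw [Nat.card_congr (Equiv.subtypeEquivRight
      (q := fun p => p ∈ (V n).filter (fun p => Even ((p.2.filter (fun x => Even x)).card)))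
      (fun p => by simp only [Finset.mem_filter, mem_V_iff]))]
    exact Nat.card_eq_finsetCard _
  have hc2 : Nat.card {p : Finset ℕ × Finset ℕ //
      ((∀ x ∈ p.1, Odd x ∧ 0 < x) ∧ (∀ x ∈ p.2, 0 < x) ∧
        (∑ x ∈ p.1, x) + (∑ x ∈ p.2, x) = n) ∧
      Odd (p.2.filter (fun x => Even x)).card}
      = ((V n).filter (fun p => ¬ Even ((p.2.filter (fun x => Even x)).card))).card := by
    rw [Nat.card_congr (Equiv.subtypeEquivRight
      (q := fun p => p ∈ (V n).filter (fun p => ¬ Even ((p.2.filter (fun x => Even x)).card)))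
      (fun p => by simp only [Finset.mem_filter, mem_V_iff, Nat.not_even_iff_odd]))]
    exact Nat.card_eq_finsetCard _
  rw [hc1, hc2]
  have e1 : ∑ p ∈ (V n).filter (fun p => Even ((p.2.filter (fun x => Even x)).card)),
      (-1:ℤ)^((p.2.filter (fun x => Even x)).card)
      = (((V n).filter (fun p => Even ((p.2.filter (fun x => Even x)).card))).card : ℤ) := by
    rw [Finset.sum_congr rfl (fun p hp => Even.neg_one_pow (Finset.mem_filter.mp hp).2)]
    simp
  have e2 : ∑ p ∈ (V n).filter (fun p => ¬ Even ((p.2.filter (fun x => Even x)).card)),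
      (-1:ℤ)^((p.2.filter (fun x => Even x)).card)
      = -((((V n).filter (fun p => ¬ Even ((p.2.filter (fun x => Even x)).card))).card : ℤ) ) := by
    rw [Finset.sum_congr rfl (fun p hp =>
      Odd.neg_one_pow (Nat.not_even_iff_odd.mp (Finset.mem_filter.mp hp).2))]
    simp
  have hsplit : ∑ p ∈ V n, (-1:ℤ)^((p.2.filter (fun x => Even x)).card)
      = (((V n).filter (fun p => Even ((p.2.filter (fun x => Even x)).card))).card : ℤ)
        - (((V n).filter (fun p => ¬ Even ((p.2.filter (fun x => Even x)).card))).card : ℤ) := by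
    rw [← Finset.sum_filter_add_sum_filter_not (V n)
      (fun p => Even ((p.2.filter (fun x => Even x)).card)), e1, e2]
    ring
  rw [← hsplit, ← main_sum n hn, ← coeff_triple_sum (2*n) n, T2 n hn]
end
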